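/- arXiv:1710.01424 — 10 statements merged into one kernel-verified Lean document; each statement's English description precedes it below -/
import Mathlib

section
/- Let q be a prime power, 𝔽_q the field with q elements, and 𝒜 = (H_i)_{i∈I} a hyperplane arrangement in 𝔽_q^d. For p ∈ 𝔽_q^d let h(p) = #{i ∈ I : p ∈ H_i}. Then the following identity holds in the polynomial ring ℤ[t]: Σ_{p ∈ 𝔽_q^d} t^{h(p)} = Σ_{ℬ ⊆ I central} (t−1)^{|ℬ|} q^{d−r(ℬ)}. (The right-hand side equals q^{d−r(𝒜)} · χ̄(𝒜; q, t), where χ̄ denotes the coboundary polynomial of 𝒜; this is the finite field method.) -/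
open Polynomial
open scoped Classical

/-- **Finite field method.** Let `F` be the finite field with `q` elements and
`𝒜 = (H i)_{i : I}` a hyperplane arrangement in `F^d`, where `H i = {x | l i x = b i}` for a
nonzero linear functional `l i` and scalar `b i`.  For `p ∈ F^d` let `h p` be the number of
hyperplanes containing `p`.  Then, in `ℤ[t]`,
`Σ_p t^(h p) = Σ_{B central} (t-1)^|B| * q^(d - r B)`,
where `B` ranges over central subfamilies and `r B = d - dim ⋂ B`. -/
theorem finite_field_method
    {F : Type} [Field F] [Fintype F] (q : ℕ) (hq : Fintype.card F = q)
    {d : ℕ} {I : Type} [Fintype I]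
    (l : I → ((Fin d → F) →ₗ[F] F)) (hl : ∀ i, l i ≠ 0) (b : I → F)
    (H : I → Set (Fin d → F)) (hH : ∀ i, H i = {x | l i x = b i}) :
    ∑ p : Fin d → F, (X : Polynomial ℤ) ^ (Finset.univ.filter (fun i => p ∈ H i)).card
      = ∑ B : Finset I,
          if (⋂ i ∈ B, H i).Nonempty then
            ((X : Polynomial ℤ) - 1) ^ B.card *
              (q : Polynomial ℤ) ^
                (d - (d - Module.finrank F ↥((affineSpan F (⋂ i ∈ B, H i)).direction)))
          else 0 := by
  classical
  -- Key: the count of points in a nonempty intersection.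
  have key : ∀ B : Finset I, (⋂ i ∈ B, H i).Nonempty →
      (Finset.univ.filter (fun p : Fin d → F => p ∈ ⋂ i ∈ B, H i)).card
        = q ^ Module.finrank F ↥((affineSpan F (⋂ i ∈ B, H i)).direction) ∧
      Module.finrank F ↥((affineSpan F (⋂ i ∈ B, H i)).direction) ≤ d := by
    rintro B ⟨p, hp⟩
    set K : Submodule F (Fin d → F) := ⨅ i ∈ B, LinearMap.ker (l i) with hK
    have hpb : ∀ i ∈ B, l i p = b i := by
      intro i hi
      have := Set.mem_iInter₂.1 hp i hi
      rwa [hH] at this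
    have hmem : ∀ x : Fin d → F, (x ∈ ⋂ i ∈ B, H i) ↔ x - p ∈ K := by
      intro x
      simp only [Set.mem_iInter, hH, Set.mem_setOf_eq, hK, Submodule.mem_iInf,
        LinearMap.mem_ker, map_sub]
      constructor
      · intro h i hi; rw [h i hi, hpb i hi, sub_self]
      · intro h i hi
        have := h i hi
        rw [hpb i hi] at this
        exact sub_eq_zero.1 this
    have hset : (⋂ i ∈ B, H i) = ↑(AffineSubspace.mk' p K) := by
      ext x
      rw [hmem x, SetLike.mem_coe, AffineSubspace.mem_mk', vsub_eq_sub]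
    have hdir : (affineSpan F (⋂ i ∈ B, H i)).direction = K := by
      rw [hset, AffineSubspace.affineSpan_coe, AffineSubspace.direction_mk']
    constructor
    · have hcard : (Finset.univ.filter (fun p : Fin d → F => p ∈ ⋂ i ∈ B, H i)).card
          = (Finset.univ.filter (fun v : Fin d → F => v ∈ K)).card := by
        apply Finset.card_nbij' (i := fun x => x - p) (j := fun v => v + p)
        · intro x hx
          simp only [Finset.mem_coe, Finset.mem_filter, Finset.mem_univ, true_and] at hx ⊢
          exact (hmem x).1 hx
        · intro v hv
          simp only [Finset.mem_coe, Finset.mem_filter, Finset.mem_univ, true_and] at hv ⊢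
          rw [hmem]
          simpa using hv
        · intro x _; simp
        · intro v _; simp
      rw [hcard, hdir]
      have : (Finset.univ.filter (fun v : Fin d → F => v ∈ K)).card = Fintype.card ↥K := by
        rw [Fintype.card_subtype]
      rw [this, Module.card_eq_pow_finrank (K := F) (V := ↥K), hq]
    · rw [hdir]
      calc Module.finrank F ↥K ≤ Module.finrank F (Fin d → F) := K.finrank_le
        _ = d := by simp
  -- Expand `X ^ h p` as a sum over subsets of the hyperplanes through `p`.
  have expand : ∀ p : Fin d → F,
      (X : Polynomial ℤ) ^ (Finset.univ.filter (fun i => p ∈ H i)).card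
        = ∑ B : Finset I, if B ⊆ Finset.univ.filter (fun i => p ∈ H i) then
            ((X : Polynomial ℤ) - 1) ^ B.card else 0 := by
    intro p
    set s := Finset.univ.filter (fun i => p ∈ H i) with hs
    calc (X : Polynomial ℤ) ^ s.card = ∏ _i ∈ s, (((X : Polynomial ℤ) - 1) + 1) := by
          simp [Finset.prod_const]
      _ = ∑ t ∈ s.powerset, ((X : Polynomial ℤ) - 1) ^ t.card := by
          rw [Finset.prod_add]
          exact Finset.sum_congr rfl fun t _ => by simp [Finset.prod_const]
      _ = ∑ B : Finset I, if B ⊆ s then ((X : Polynomial ℤ) - 1) ^ B.card else 0 := by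
          rw [← Finset.sum_filter]
          apply Finset.sum_congr _ fun _ _ => rfl
          ext t
          simp [Finset.mem_powerset]
  rw [Finset.sum_congr rfl fun p _ => expand p, Finset.sum_comm]
  apply Finset.sum_congr rfl
  intro B _
  have hsub : ∀ p : Fin d → F,
      (B ⊆ Finset.univ.filter (fun i => p ∈ H i)) ↔ p ∈ ⋂ i ∈ B, H i := by
    intro p
    simp [Finset.subset_iff, Set.mem_iInter]
  have : ∑ p : Fin d → F, (if B ⊆ Finset.univ.filter (fun i => p ∈ H i) then
        ((X : Polynomial ℤ) - 1) ^ B.card else 0)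
      = ((Finset.univ.filter (fun p : Fin d → F => p ∈ ⋂ i ∈ B, H i)).card : Polynomial ℤ)
        * ((X : Polynomial ℤ) - 1) ^ B.card := by
    rw [Finset.sum_congr rfl fun p _ => by rw [if_congr (hsub p) rfl rfl]]
    rw [Finset.sum_ite, Finset.sum_const, Finset.sum_const_zero, add_zero, nsmul_eq_mul]
  rw [this]
  by_cases hne : (⋂ i ∈ B, H i).Nonempty
  · rw [if_pos hne]
    obtain ⟨hcard, hle⟩ := key B hne
    rw [hcard, Nat.sub_sub_self hle, mul_comm]
    push_cast
    ring
  · rw [if_neg hne]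
    have hemp : Finset.univ.filter (fun p : Fin d → F => p ∈ ⋂ i ∈ B, H i) = ∅ := by
      rw [Finset.filter_eq_empty_iff]
      intro p _ hp
      exact hne ⟨p, hp⟩
    rw [hemp, Finset.card_empty]
    simp
end

section
/- Let 𝒜 = (H_i)_{i∈I} be a hyperplane arrangement in 𝕜^d over an arbitrary field 𝕜. A flat of 𝒜 is a nonempty intersection ⋂_{i∈ℬ} H_i over a central subfamily ℬ ⊆ I (so 𝕜^d itself is a flat, coming from ℬ = ∅). Let L(𝒜) be the finite poset of flats ordered by reverse inclusion, whose minimum element is 𝕜^d, and let μ : L(𝒜) → ℤ be its Möbius function, defined recursively by the condition that Σ_{F ≤ G} μ(F) equals 1 if G = 𝕜^d and 0 otherwise. Then, in ℤ[q], Σ_{F ∈ L(𝒜)} μ(F) q^{dim F} = Σ_{ℬ ⊆ I central} (−1)^{|ℬ|} q^{d−r(ℬ)} (Whitney's theorem: the Möbius-function definition of the characteristic polynomial agrees with the central-subset expansion). -/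
open Polynomial
open scoped Classical

/-- **Whitney's theorem.** Let `𝒜 = (H i)` be a hyperplane arrangement in `K^d`.  Let `flats`
be the finite set of flats (nonempty intersections of central subfamilies, including `K^d`
itself coming from the empty subfamily), and let `μ` be the Möbius function of the poset of
flats ordered by reverse inclusion, i.e. `Σ_{F ≤ G} μ F` is `1` if `G = K^d` and `0` otherwise.
Then `Σ_{F flat} μ(F) q^(dim F) = Σ_{B central} (-1)^|B| q^(d - r B)` in `ℤ[q]`. -/
theorem whitney_theorem
    {K : Type} [Field K] {d : ℕ} {I : Type} [Fintype I]
    (l : I → ((Fin d → K) →ₗ[K] K)) (hl : ∀ i, l i ≠ 0) (b : I → K)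
    (H : I → Set (Fin d → K)) (hH : ∀ i, H i = {x | l i x = b i})
    (flats : Finset (Set (Fin d → K)))
    (hflats : ∀ Fl : Set (Fin d → K),
      Fl ∈ flats ↔ ∃ B : Finset I, (⋂ i ∈ B, H i).Nonempty ∧ Fl = ⋂ i ∈ B, H i)
    (μ : Set (Fin d → K) → ℤ)
    (hμ : ∀ G ∈ flats,
      ∑ Fl ∈ flats.filter (fun Fl => G ⊆ Fl), μ Fl = if G = Set.univ then 1 else 0) :
    ∑ Fl ∈ flats,
        Polynomial.C (μ Fl) * (X : Polynomial ℤ) ^ Module.finrank K ↥((affineSpan K Fl).direction)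
      = ∑ B : Finset I,
          if (⋂ i ∈ B, H i).Nonempty then
            (-1 : Polynomial ℤ) ^ B.card *
              (X : Polynomial ℤ) ^
                (d - (d - Module.finrank K ↥((affineSpan K (⋂ i ∈ B, H i)).direction)))
          else 0 := by
  classical
  set dm : Set (Fin d → K) → ℕ :=
    fun F => Module.finrank K ↥((affineSpan K F).direction) with hdm
  have hdmle : ∀ F : Set (Fin d → K), dm F ≤ d := by
    intro F
    have h1 : Module.finrank K ↥((affineSpan K F).direction) ≤ Module.finrank K (Fin d → K) :=
      Submodule.finrank_le _
    simpa [Module.finrank_fin_fun] using h1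
  set T : Finset (Finset I) := Finset.univ.filter (fun B => (⋂ i ∈ B, H i).Nonempty) with hT
  set w : Set (Fin d → K) → ℤ :=
    fun F => ∑ B ∈ T.filter (fun B => (⋂ i ∈ B, H i) = F), (-1 : ℤ) ^ B.card with hw
  -- each hyperplane is proper
  have hHne : ∀ i, H i ≠ Set.univ := by
    intro i hi
    apply hl i
    have hb : b i = 0 := by
      have h0 : (0 : Fin d → K) ∈ H i := hi ▸ Set.mem_univ _
      rw [hH i] at h0
      simpa using h0.symm
    refine LinearMap.ext fun x => ?_
    have hx : x ∈ H i := hi ▸ Set.mem_univ _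
    rw [hH i] at hx
    simpa [hb] using hx
  -- key combinatorial identity: w satisfies the Möbius recursion
  have hwsum : ∀ G ∈ flats,
      ∑ F ∈ flats.filter (fun F => G ⊆ F), w F = if G = Set.univ then 1 else 0 := by
    intro G hG
    obtain ⟨B0, hB0ne, hGB0⟩ := (hflats G).1 hG
    have hGne : G.Nonempty := hGB0 ▸ hB0ne
    set IG : Finset I := Finset.univ.filter (fun i => G ⊆ H i) with hIG
    have hmap : ∀ B ∈ T.filter (fun B => G ⊆ ⋂ i ∈ B, H i),
        (⋂ i ∈ B, H i) ∈ flats.filter (fun F => G ⊆ F) := by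
      intro B hB
      simp only [hT, Finset.mem_filter, Finset.mem_univ, true_and] at hB
      exact Finset.mem_filter.2 ⟨(hflats _).2 ⟨B, hB.1, rfl⟩, hB.2⟩
    have hA := Finset.sum_fiberwise_of_maps_to hmap (fun B => (-1 : ℤ) ^ B.card)
    have hstep1 : ∑ F ∈ flats.filter (fun F => G ⊆ F), w F
        = ∑ B ∈ T.filter (fun B => G ⊆ ⋂ i ∈ B, H i), (-1 : ℤ) ^ B.card := by
      rw [← hA]
      apply Finset.sum_congr rfl
      intro F hF
      have hfe : (T.filter (fun B => G ⊆ ⋂ i ∈ B, H i)).filter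
          (fun B => (⋂ i ∈ B, H i) = F) = T.filter (fun B => (⋂ i ∈ B, H i) = F) := by
        ext B
        simp only [Finset.mem_filter]
        constructor
        · rintro ⟨⟨h1, _⟩, h3⟩; exact ⟨h1, h3⟩
        · rintro ⟨h1, h2⟩
          refine ⟨⟨h1, ?_⟩, h2⟩
          rw [h2]
          exact (Finset.mem_filter.1 hF).2
      rw [hfe]
    have hTB : T.filter (fun B => G ⊆ ⋂ i ∈ B, H i) = IG.powerset := by
      ext B
      simp only [hT, Finset.mem_filter, Finset.mem_univ, true_and, Finset.mem_powerset]
      constructor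
      · rintro ⟨_, hsub⟩
        intro i hi
        simp only [hIG, Finset.mem_filter, Finset.mem_univ, true_and]
        exact hsub.trans (Set.biInter_subset_of_mem hi)
      · intro hBsub
        have hsub : G ⊆ ⋂ i ∈ B, H i := by
          apply Set.subset_iInter₂
          intro i hi
          have := hBsub hi
          simp only [hIG, Finset.mem_filter, Finset.mem_univ, true_and] at this
          exact this
        exact ⟨hGne.mono hsub, hsub⟩
    rw [hstep1, hTB, Finset.sum_powerset_neg_one_pow_card]
    have hiff : IG = ∅ ↔ G = Set.univ := by
      constructor
      · intro hIGe
        by_contra hGuniv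
        have hB0sub : B0 ⊆ IG := by
          intro i hi
          simp only [hIG, Finset.mem_filter, Finset.mem_univ, true_and]
          rw [hGB0]
          exact Set.biInter_subset_of_mem hi
        rw [hIGe, Finset.subset_empty] at hB0sub
        apply hGuniv
        rw [hGB0, hB0sub]
        simp
      · intro hGuniv
        rw [Finset.eq_empty_iff_forall_notMem]
        intro i hi
        simp only [hIG, Finset.mem_filter, Finset.mem_univ, true_and] at hi
        apply hHne i
        apply Set.eq_univ_of_univ_subset
        rw [← hGuniv]
        exact hi
    simp only [hiff]
  -- uniqueness: w = μ on flats
  have hstep : ∀ G ∈ flats, (∀ F ∈ flats.filter (fun F => G ⊂ F), w F = μ F) → w G = μ G := by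
    intro G hG hstrict
    have h1 := hwsum G hG
    have h2 := hμ G hG
    have hsplit : flats.filter (fun F => G ⊆ F) = insert G (flats.filter (fun F => G ⊂ F)) := by
      ext F
      simp only [Finset.mem_filter, Finset.mem_insert]
      constructor
      · rintro ⟨hF, hsub⟩
        rcases eq_or_ne G F with h | h
        · exact Or.inl h.symm
        · exact Or.inr ⟨hF, lt_of_le_of_ne hsub h⟩
      · rintro (rfl | ⟨hF, hsub⟩)
        · exact ⟨hG, le_rfl⟩
        · exact ⟨hF, hsub.le⟩
    have hGnot : G ∉ flats.filter (fun F => G ⊂ F) := by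
      simp only [Finset.mem_filter]
      rintro ⟨_, hGG⟩
      exact lt_irrefl _ hGG
    rw [hsplit, Finset.sum_insert hGnot] at h1 h2
    have h3 : ∑ F ∈ flats.filter (fun F => G ⊂ F), w F
        = ∑ F ∈ flats.filter (fun F => G ⊂ F), μ F := Finset.sum_congr rfl hstrict
    have h4 := h1.trans h2.symm
    rw [h3] at h4
    linarith
  have hweq : ∀ n : ℕ, ∀ G ∈ flats, (flats.filter (fun F => G ⊂ F)).card ≤ n → w G = μ G := by
    intro n
    induction n with
    | zero =>
      intro G hG hcard
      apply hstep G hG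
      intro F hF
      rw [Nat.le_zero, Finset.card_eq_zero] at hcard
      rw [hcard] at hF
      exact absurd hF (Finset.notMem_empty _)
    | succ n ih =>
      intro G hG hcard
      apply hstep G hG
      intro F hF
      have hF' := Finset.mem_filter.1 hF
      apply ih F hF'.1
      have hss : flats.filter (fun F' => F ⊂ F') ⊂ flats.filter (fun F' => G ⊂ F') := by
        constructor
        · intro F' hF''
          have h := Finset.mem_filter.1 hF''
          exact Finset.mem_filter.2 ⟨h.1, hF'.2.trans h.2⟩
        · intro hcontra
          have := hcontra hF
          have h := (Finset.mem_filter.1 this).2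
          exact lt_irrefl _ h
      have := Finset.card_lt_card hss
      omega
  have hweq' : ∀ G ∈ flats, w G = μ G := fun G hG => hweq _ G hG le_rfl
  -- assemble
  have hR := (Finset.sum_filter (s := (Finset.univ : Finset (Finset I)))
    (fun B : Finset I => (⋂ i ∈ B, H i).Nonempty)
    (fun B : Finset I => (-1 : Polynomial ℤ) ^ B.card * (X : Polynomial ℤ) ^
      (d - (d - Module.finrank K ↥((affineSpan K (⋂ i ∈ B, H i)).direction)))))
  rw [← hR]
  have hmap2 : ∀ B ∈ T, (⋂ i ∈ B, H i) ∈ flats := by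
    intro B hB
    simp only [hT, Finset.mem_filter, Finset.mem_univ, true_and] at hB
    exact (hflats _).2 ⟨B, hB, rfl⟩
  rw [← Finset.sum_fiberwise_of_maps_to hmap2]
  apply Finset.sum_congr rfl
  intro F hF
  have hinner : ∀ B ∈ T.filter (fun B => (⋂ i ∈ B, H i) = F),
      (-1 : Polynomial ℤ) ^ B.card * (X : Polynomial ℤ) ^
        (d - (d - dm (⋂ i ∈ B, H i)))
      = (-1 : Polynomial ℤ) ^ B.card * (X : Polynomial ℤ) ^ dm F := by
    intro B hB
    have h := (Finset.mem_filter.1 hB).2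
    rw [h, Nat.sub_sub_self (hdmle F)]
  rw [Finset.sum_congr rfl hinner, ← Finset.sum_mul]
  rw [← hweq' F hF, hw]
  simp only [map_sum, map_pow, map_neg, map_one]
  rfl
end

section
/- (Zaslavsky's theorem, region count.) Let 𝒜 = (H_i)_{i∈I} be a hyperplane arrangement in ℝ^d. Then the complement ℝ^d ∖ ⋃_{i∈I} H_i has finitely many connected components, and their number equals Σ_{ℬ ⊆ I central} (−1)^{|ℬ|−r(ℬ)}, which equals (−1)^d χ(𝒜; −1). -/
open scoped Classical
set_option linter.unusedSectionVars false
set_option linter.unusedVariables false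
set_option maxHeartbeats 1000000

namespace Zaslavsky
variable {d : ℕ} {I : Type} [Fintype I]
variable (l : I → ((Fin d → ℝ) →ₗ[ℝ] ℝ)) (b : I → ℝ)

def Hset (i : I) : Set (Fin d → ℝ) := {x | l i x = b i}
@[simp] lemma mem_Hset {i : I} {x : Fin d → ℝ} : x ∈ Hset l b i ↔ l i x = b i := Iff.rfl

noncomputable def Hsub (i : I) : AffineSubspace ℝ (Fin d → ℝ) where
  carrier := Hset l b i
  smul_vsub_vadd_mem' := by
    intro c p1 p2 p3 h1 h2 h3
    simp only [Hset, Set.mem_setOf_eq] at *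
    simp [vsub_eq_sub, vadd_eq_add, map_add, map_smul, map_sub, h1, h2, h3]

@[simp] lemma mem_Hsub {i : I} {x : Fin d → ℝ} : x ∈ Hsub l b i ↔ l i x = b i := Iff.rfl
@[simp] lemma Hsub_coe (i : I) : (Hsub l b i : Set (Fin d → ℝ)) = Hset l b i := rfl

def ocell (J : Finset I) (σ : I → Bool) : Set (Fin d → ℝ) :=
  ⋂ i ∈ J, {x | if σ i then b i < l i x else l i x < b i}

def cell (J : Finset I) (σ : I → Bool) (W : AffineSubspace ℝ (Fin d → ℝ)) : Set (Fin d → ℝ) :=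
  ↑W ∩ ocell l b J σ

lemma mem_cell {J : Finset I} {σ : I → Bool} {W : AffineSubspace ℝ (Fin d → ℝ)} {x : Fin d → ℝ} :
    x ∈ cell l b J σ W ↔ x ∈ W ∧ ∀ i ∈ J, if σ i then b i < l i x else l i x < b i := by
  simp [cell, ocell]

lemma cell_congr {J : Finset I} {σ τ : I → Bool} {W : AffineSubspace ℝ (Fin d → ℝ)}
    (h : ∀ i ∈ J, σ i = τ i) : cell l b J σ W = cell l b J τ W := by
  unfold cell ocell
  congr 1
  apply Set.iInter₂_congr
  intro i hi
  rw [h i hi]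

lemma cell_insert {J : Finset I} {σ : I → Bool} {W : AffineSubspace ℝ (Fin d → ℝ)} {i0 : I}
    (h : i0 ∉ J) :
    cell l b (insert i0 J) σ W
      = cell l b J σ W ∩ {x | if σ i0 then b i0 < l i0 x else l i0 x < b i0} := by
  unfold cell ocell
  rw [Finset.set_biInter_insert]
  ext x
  simp only [Set.mem_inter_iff, Set.mem_iInter, Set.mem_setOf_eq]
  tauto

lemma cell_inf_Hsub {J : Finset I} {σ : I → Bool} {W : AffineSubspace ℝ (Fin d → ℝ)} {i0 : I} :
    cell l b J σ (W ⊓ Hsub l b i0) = cell l b J σ W ∩ Hset l b i0 := by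
  unfold cell
  have : ((W ⊓ Hsub l b i0 : AffineSubspace ℝ (Fin d → ℝ)) : Set (Fin d → ℝ))
      = ↑W ∩ Hset l b i0 := rfl
  rw [this]
  ext x; simp only [Set.mem_inter_iff]; tauto

lemma cell_mono_W {J : Finset I} {σ : I → Bool} {W W' : AffineSubspace ℝ (Fin d → ℝ)}
    (h : W' ≤ W) : cell l b J σ W' ⊆ cell l b J σ W := by
  intro x hx; exact ⟨h hx.1, hx.2⟩

noncomputable def Ncells (J : Finset I) (W : AffineSubspace ℝ (Fin d → ℝ)) : ℕ :=
  (Finset.univ.filter fun σ : I → Bool =>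
    (cell l b J σ W).Nonempty ∧ ∀ i ∉ J, σ i = false).card

noncomputable def Scount (J : Finset I) (W : AffineSubspace ℝ (Fin d → ℝ)) : ℤ :=
  ∑ B ∈ J.powerset,
    if ((W : Set (Fin d → ℝ)) ∩ ⋂ i ∈ B, Hset l b i).Nonempty then
      (-1 : ℤ) ^ (B.card - (Module.finrank ℝ W.direction -
        Module.finrank ℝ
          (affineSpan ℝ ((W : Set (Fin d → ℝ)) ∩ ⋂ i ∈ B, Hset l b i)).direction))
    else 0

lemma mem_biInf {B : Finset I} {x : Fin d → ℝ} :
    x ∈ (⨅ i ∈ B, Hsub l b i) ↔ ∀ i ∈ B, l i x = b i := by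
  induction B using Finset.induction with
  | empty => simp
  | insert _ _ hni ih =>
    rw [Finset.iInf_insert]
    simp only [Finset.mem_insert]
    constructor
    · rintro ⟨h1, h2⟩
      exact fun i hi => hi.elim (fun h => h ▸ h1) (fun h => (ih.1 h2) i h)
    · intro h
      exact ⟨h _ (Or.inl rfl), ih.2 fun i hi => h i (Or.inr hi)⟩

lemma Kinf_coe (B : Finset I) (W : AffineSubspace ℝ (Fin d → ℝ)) :
    ((W ⊓ ⨅ i ∈ B, Hsub l b i : AffineSubspace ℝ (Fin d → ℝ)) : Set (Fin d → ℝ))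
      = ↑W ∩ ⋂ i ∈ B, Hset l b i := by
  ext x
  simp only [Set.mem_inter_iff, Set.mem_iInter, AffineSubspace.mem_coe]
  constructor
  · rintro ⟨h1, h2⟩; exact ⟨h1, (mem_biInf l b).1 h2⟩
  · rintro ⟨h1, h2⟩; exact ⟨h1, (mem_biInf l b).2 h2⟩

lemma span_inter (B : Finset I) (W : AffineSubspace ℝ (Fin d → ℝ)) :
    affineSpan ℝ ((W : Set (Fin d → ℝ)) ∩ ⋂ i ∈ B, Hset l b i)
      = W ⊓ ⨅ i ∈ B, Hsub l b i := by
  rw [← Kinf_coe, AffineSubspace.affineSpan_coe]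

lemma direction_Hsub {i : I} {p : Fin d → ℝ} (hp : p ∈ Hsub l b i) :
    (Hsub l b i).direction = LinearMap.ker (l i) := by
  ext v
  rw [AffineSubspace.mem_direction_iff_eq_vsub ⟨p, hp⟩]
  constructor
  · rintro ⟨p1, hp1, p2, hp2, rfl⟩
    simp only [LinearMap.mem_ker, vsub_eq_sub, map_sub]
    rw [mem_Hsub] at hp1 hp2
    rw [hp1, hp2, sub_self]
  · intro hv
    refine ⟨v + p, ?_, p, hp, by simp [vsub_eq_sub]⟩
    rw [mem_Hsub, map_add, LinearMap.mem_ker.1 hv, zero_add]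
    exact hp

lemma finrank_inf_ker (V' : Submodule ℝ (Fin d → ℝ)) (f : (Fin d → ℝ) →ₗ[ℝ] ℝ) :
    Module.finrank ℝ V' ≤ Module.finrank ℝ ↥(V' ⊓ LinearMap.ker f) + 1 := by
  set g : V' →ₗ[ℝ] ℝ := f.comp V'.subtype with hg
  have hker : LinearMap.ker g = Submodule.comap V'.subtype (LinearMap.ker f) := by
    ext v; simp [hg]
  have h1 : Module.finrank ℝ ↥(LinearMap.range g) + Module.finrank ℝ ↥(LinearMap.ker g)
      = Module.finrank ℝ V' := LinearMap.finrank_range_add_finrank_ker g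
  have h2 : Module.finrank ℝ ↥(LinearMap.range g) ≤ 1 := by
    simpa using (LinearMap.range g).finrank_le
  have h3 : Module.finrank ℝ ↥(LinearMap.ker g) = Module.finrank ℝ ↥(V' ⊓ LinearMap.ker f) := by
    rw [hker, ← Submodule.map_comap_subtype]
    exact (Submodule.equivMapOfInjective _ V'.injective_subtype _).finrank_eq
  omega

lemma codim_cut (X : AffineSubspace ℝ (Fin d → ℝ)) (i : I)
    (h : (X ⊓ Hsub l b i) ≠ ⊥) :
    Module.finrank ℝ X.direction ≤ Module.finrank ℝ (X ⊓ Hsub l b i).direction + 1 := by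
  obtain ⟨p, hp⟩ := (AffineSubspace.nonempty_iff_ne_bot _).2 h
  rw [AffineSubspace.direction_inf_of_mem hp.1 hp.2, direction_Hsub l b hp.2]
  exact finrank_inf_ker X.direction (l i)

lemma codim_cut_eq (W : AffineSubspace ℝ (Fin d → ℝ)) (i : I)
    (h : (W ⊓ Hsub l b i) ≠ ⊥) (hne : ¬ W ≤ Hsub l b i) :
    Module.finrank ℝ (W ⊓ Hsub l b i).direction + 1 = Module.finrank ℝ W.direction := by
  obtain ⟨p, hp⟩ := (AffineSubspace.nonempty_iff_ne_bot _).2 h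
  have hlt : (W ⊓ Hsub l b i).direction < W.direction := by
    refine lt_of_le_of_ne (AffineSubspace.direction_le inf_le_left) ?_
    intro heq
    have : W ⊓ Hsub l b i = W :=
      ((AffineSubspace.eq_iff_direction_eq_of_mem hp hp.1).2 heq)
    exact hne (this ▸ inf_le_right)
  have h1 := Submodule.finrank_lt_finrank_of_lt hlt
  have h2 := codim_cut l b W i h
  omega

lemma insert_inf_rearrange (i : I) (B : Finset I) (W : AffineSubspace ℝ (Fin d → ℝ)) :
    W ⊓ ⨅ i' ∈ insert i B, Hsub l b i'
      = (W ⊓ ⨅ i' ∈ B, Hsub l b i') ⊓ Hsub l b i := by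
  rw [Finset.iInf_insert, inf_comm (Hsub l b i), ← inf_assoc]

lemma rank_le_aux (B : Finset I) (W : AffineSubspace ℝ (Fin d → ℝ))
    (h : (W ⊓ ⨅ i ∈ B, Hsub l b i) ≠ ⊥) :
    Module.finrank ℝ W.direction
      ≤ Module.finrank ℝ (W ⊓ ⨅ i ∈ B, Hsub l b i).direction + B.card := by
  induction B using Finset.induction with
  | empty =>
    have : W ⊓ ⨅ i ∈ (∅ : Finset I), Hsub l b i = W := by simp
    rw [this]; simp
  | @insert i B hni ih =>
    rw [insert_inf_rearrange] at h ⊢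
    have hKne : (W ⊓ ⨅ i' ∈ B, Hsub l b i') ≠ ⊥ := by
      intro hb; rw [hb, bot_inf_eq] at h; exact h rfl
    have h1 := codim_cut l b (W ⊓ ⨅ i' ∈ B, Hsub l b i') i h
    have h2 := ih hKne
    rw [Finset.card_insert_of_notMem hni]
    omega

/-- The rank of a central subfamily is at most its cardinality. -/
lemma rank_le (B : Finset I) (W : AffineSubspace ℝ (Fin d → ℝ))
    (h : ((W : Set (Fin d → ℝ)) ∩ ⋂ i ∈ B, Hset l b i).Nonempty) :
    Module.finrank ℝ W.direction -
      Module.finrank ℝ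
        (affineSpan ℝ ((W : Set (Fin d → ℝ)) ∩ ⋂ i ∈ B, Hset l b i)).direction
      ≤ B.card := by
  rw [span_inter]
  rw [← Kinf_coe, AffineSubspace.nonempty_iff_ne_bot] at h
  have := rank_le_aux l b B W h
  omega

lemma Scount_bot (J : Finset I) : Scount l b J ⊥ = 0 := by
  unfold Scount
  apply Finset.sum_eq_zero
  intro B _
  rw [if_neg]
  rw [AffineSubspace.bot_coe, Set.empty_inter]
  simp [Set.not_nonempty_empty]

lemma Ncells_bot (J : Finset I) : Ncells l b J ⊥ = 0 := by
  unfold Ncells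
  rw [Finset.card_eq_zero, Finset.filter_eq_empty_iff]
  rintro σ - ⟨⟨x, hx⟩, -⟩
  have := hx.1
  rw [AffineSubspace.bot_coe] at this
  exact this

lemma set_insert_subset (i0 : I) (B : Finset I) (W : AffineSubspace ℝ (Fin d → ℝ)) :
    (W : Set (Fin d → ℝ)) ∩ ⋂ i ∈ insert i0 B, Hset l b i
      = ((W ⊓ Hsub l b i0 : AffineSubspace ℝ (Fin d → ℝ)) : Set (Fin d → ℝ))
          ∩ ⋂ i ∈ B, Hset l b i := by
  rw [Finset.set_biInter_insert]
  have : ((W ⊓ Hsub l b i0 : AffineSubspace ℝ (Fin d → ℝ)) : Set (Fin d → ℝ))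
      = ↑W ∩ Hset l b i0 := rfl
  rw [this]
  ext x
  simp only [Set.mem_inter_iff]
  tauto

lemma set_insert_of_le {i0 : I} {W : AffineSubspace ℝ (Fin d → ℝ)} (hle : W ≤ Hsub l b i0)
    (B : Finset I) :
    (W : Set (Fin d → ℝ)) ∩ ⋂ i ∈ insert i0 B, Hset l b i
      = (W : Set (Fin d → ℝ)) ∩ ⋂ i ∈ B, Hset l b i := by
  rw [Finset.set_biInter_insert]
  ext x
  simp only [Set.mem_inter_iff, Set.mem_inter_iff]
  constructor
  · rintro ⟨h1, -, h2⟩; exact ⟨h1, h2⟩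
  · rintro ⟨h1, h2⟩; exact ⟨h1, hle h1, h2⟩

/-- Case A: if `W ⊆ H i0`, the sum over subsets of `insert i0 J'` vanishes. -/
lemma S_vanish {i0 : I} {J' : Finset I} (hi0 : i0 ∉ J') {W : AffineSubspace ℝ (Fin d → ℝ)}
    (hle : W ≤ Hsub l b i0) : Scount l b (insert i0 J') W = 0 := by
  unfold Scount
  rw [Finset.sum_powerset_insert hi0]
  have hterm : ∀ B ∈ J'.powerset,
      (if ((W : Set (Fin d → ℝ)) ∩ ⋂ i ∈ insert i0 B, Hset l b i).Nonempty then
        (-1 : ℤ) ^ ((insert i0 B).card - (Module.finrank ℝ W.direction -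
          Module.finrank ℝ
            (affineSpan ℝ ((W : Set (Fin d → ℝ)) ∩ ⋂ i ∈ insert i0 B, Hset l b i)).direction))
      else 0)
      = -(if ((W : Set (Fin d → ℝ)) ∩ ⋂ i ∈ B, Hset l b i).Nonempty then
        (-1 : ℤ) ^ (B.card - (Module.finrank ℝ W.direction -
          Module.finrank ℝ
            (affineSpan ℝ ((W : Set (Fin d → ℝ)) ∩ ⋂ i ∈ B, Hset l b i)).direction))
      else 0) := by
    intro B hB
    have hiB : i0 ∉ B := fun h => hi0 (Finset.mem_powerset.1 hB h)
    rw [set_insert_of_le l b hle B]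
    by_cases hne : ((W : Set (Fin d → ℝ)) ∩ ⋂ i ∈ B, Hset l b i).Nonempty
    · rw [if_pos hne, if_pos hne, Finset.card_insert_of_notMem hiB]
      have hr := rank_le l b B W hne
      set r := Module.finrank ℝ W.direction -
        Module.finrank ℝ
          (affineSpan ℝ ((W : Set (Fin d → ℝ)) ∩ ⋂ i ∈ B, Hset l b i)).direction
      have : B.card + 1 - r = (B.card - r) + 1 := by omega
      rw [this, pow_succ]
      ring
    · rw [if_neg hne, if_neg hne, neg_zero]
  rw [Finset.sum_congr rfl hterm, Finset.sum_neg_distrib]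
  ring

/-- Cases B/C: deletion–restriction for the characteristic sum. -/
lemma S_step {i0 : I} {J' : Finset I} (hi0 : i0 ∉ J') {W : AffineSubspace ℝ (Fin d → ℝ)}
    (hne : ¬ W ≤ Hsub l b i0) :
    Scount l b (insert i0 J') W = Scount l b J' W + Scount l b J' (W ⊓ Hsub l b i0) := by
  unfold Scount
  rw [Finset.sum_powerset_insert hi0]
  congr 1
  apply Finset.sum_congr rfl
  intro B hB
  have hiB : i0 ∉ B := fun h => hi0 (Finset.mem_powerset.1 hB h)
  rw [set_insert_subset l b i0 B W]
  by_cases hcen : (((W ⊓ Hsub l b i0 : AffineSubspace ℝ (Fin d → ℝ)) : Set (Fin d → ℝ))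
      ∩ ⋂ i ∈ B, Hset l b i).Nonempty
  · rw [if_pos hcen, if_pos hcen, Finset.card_insert_of_notMem hiB]
    -- the hyperplane i0 meets W properly
    have hbot : (W ⊓ Hsub l b i0) ≠ ⊥ := by
      rw [← AffineSubspace.nonempty_iff_ne_bot]
      obtain ⟨x, hx, -⟩ := hcen
      exact ⟨x, hx⟩
    have hdim := codim_cut_eq l b W i0 hbot hne
    -- the span dims agree
    set X := affineSpan ℝ
      (((W ⊓ Hsub l b i0 : AffineSubspace ℝ (Fin d → ℝ)) : Set (Fin d → ℝ))
        ∩ ⋂ i ∈ B, Hset l b i) with hX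
    have hXeq : X = (W ⊓ Hsub l b i0) ⊓ ⨅ i ∈ B, Hsub l b i := by rw [hX, span_inter]
    have hXle : X ≤ W ⊓ Hsub l b i0 := by rw [hXeq]; exact inf_le_left
    have hk : Module.finrank ℝ X.direction ≤ Module.finrank ℝ (W ⊓ Hsub l b i0).direction :=
      Submodule.finrank_mono (AffineSubspace.direction_le hXle)
    congr 1
    omega
  · rw [if_neg hcen, if_neg hcen]

lemma ocell_open (J : Finset I) (σ : I → Bool) : IsOpen (ocell l b J σ) := by
  apply isOpen_biInter_finset
  intro i _
  have hc : Continuous (l i) := (l i).continuous_of_finiteDimensional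
  by_cases h : σ i
  · simp only [h, if_true]; exact isOpen_lt continuous_const hc
  · simp only [h, if_false]; exact isOpen_lt hc continuous_const

lemma cell_convex (J : Finset I) (σ : I → Bool) (W : AffineSubspace ℝ (Fin d → ℝ)) :
    Convex ℝ (cell l b J σ W) := by
  apply Convex.inter (W.convex)
  apply convex_iInter; intro i; apply convex_iInter; intro _
  by_cases h : σ i
  · simp only [h, if_true]
    exact convex_halfSpace_gt (LinearMap.isLinear (l i)) (b i)
  · simp only [h, if_false]
    exact convex_halfSpace_lt (LinearMap.isLinear (l i)) (b i)

lemma cell_subset_W {J : Finset I} {σ : I → Bool} {W : AffineSubspace ℝ (Fin d → ℝ)} :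
    cell l b J σ W ⊆ ↑W := Set.inter_subset_left

lemma cell_ne_of_mem {J : Finset I} {σ : I → Bool} {W : AffineSubspace ℝ (Fin d → ℝ)}
    {x : Fin d → ℝ} (hx : x ∈ cell l b J σ W) {i : I} (hi : i ∈ J) : l i x ≠ b i := by
  rcases (mem_cell l b).1 hx with ⟨-, h⟩
  have := h i hi
  by_cases hσ : σ i <;> simp [hσ] at this <;> linarith

lemma both_sides {J : Finset I} {σ : I → Bool} {W : AffineSubspace ℝ (Fin d → ℝ)} {i0 : I}
    (hne : ¬ W ≤ Hsub l b i0) {x : Fin d → ℝ} (hx : x ∈ cell l b J σ W)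
    (hxb : l i0 x = b i0) :
    (∃ y ∈ cell l b J σ W, b i0 < l i0 y) ∧ (∃ z ∈ cell l b J σ W, l i0 z < b i0) := by
  obtain ⟨w, hwW, hwH⟩ : ∃ w ∈ W, ¬ (l i0 w = b i0) := by
    by_contra h; push_neg at h; exact hne fun p hp => h p hp
  clear hne
  have hxW : x ∈ W := (cell_subset_W l b hx)
  set v : Fin d → ℝ := w - x with hv
  have hvdir : v ∈ W.direction := AffineSubspace.vsub_mem_direction hwW hxW
  have hlv : l i0 v ≠ 0 := by
    simp [hv, map_sub, hxb]
    intro h; exact hwH (by linarith [sub_eq_zero.mp h] )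
  have hcont : Continuous (fun t : ℝ => x + t • v) := by continuity
  have hxo : x ∈ ocell l b J σ := hx.2
  have hopen : IsOpen ((fun t : ℝ => x + t • v) ⁻¹' ocell l b J σ) :=
    (ocell_open l b J σ).preimage hcont
  have h0 : (0 : ℝ) ∈ (fun t : ℝ => x + t • v) ⁻¹' ocell l b J σ := by
    simp [Set.mem_preimage, hxo]
  obtain ⟨ε, hε, hball⟩ := Metric.isOpen_iff.1 hopen 0 h0
  have hmem : ∀ t : ℝ, |t| < ε → x + t • v ∈ cell l b J σ W := by
    intro t ht
    constructor
    · have : (t • v) +ᵥ x ∈ W := AffineSubspace.vadd_mem_of_mem_direction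
        (Submodule.smul_mem _ t hvdir) hxW
      simpa [vadd_eq_add, add_comm] using this
    · exact hball (by simpa [Real.dist_eq] using ht)
  have hval : ∀ t : ℝ, l i0 (x + t • v) = b i0 + t * l i0 v := by
    intro t; simp [map_add, map_smul, hxb, smul_eq_mul]
  rcases lt_or_gt_of_ne hlv with hneg | hpos
  · refine ⟨⟨x + (-(ε/2)) • v, hmem _ (by rw [abs_neg, abs_of_pos (by linarith)]; linarith), ?_⟩,
      ⟨x + (ε/2) • v, hmem _ (by rw [abs_of_pos (by linarith)]; linarith), ?_⟩⟩
    · rw [hval]; nlinarith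
    · rw [hval]; nlinarith
  · refine ⟨⟨x + (ε/2) • v, hmem _ (by rw [abs_of_pos (by linarith)]; linarith), ?_⟩,
      ⟨x + (-(ε/2)) • v, hmem _ (by rw [abs_neg, abs_of_pos (by linarith)]; linarith), ?_⟩⟩
    · rw [hval]; nlinarith
    · rw [hval]; nlinarith

lemma meet_hyp {J : Finset I} {σ : I → Bool} {W : AffineSubspace ℝ (Fin d → ℝ)} {i0 : I}
    {y z : Fin d → ℝ} (hy : y ∈ cell l b J σ W) (hz : z ∈ cell l b J σ W)
    (hby : b i0 < l i0 y) (hbz : l i0 z < b i0) :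
    ∃ x ∈ cell l b J σ W, l i0 x = b i0 := by
  set t : ℝ := (l i0 y - b i0) / (l i0 y - l i0 z) with ht
  have hd : 0 < l i0 y - l i0 z := by linarith
  have ht0 : 0 < t := div_pos (by linarith) hd
  have ht1 : t < 1 := (div_lt_one hd).2 (by linarith)
  refine ⟨(1 - t) • y + t • z, ?_, ?_⟩
  · exact cell_convex l b J σ W hy hz (by linarith) (by linarith) (by ring)
  · have : l i0 ((1 - t) • y + t • z) = l i0 y - t * (l i0 y - l i0 z) := by
      simp [map_add, map_smul, smul_eq_mul]; ring
    rw [this, ht, div_mul_cancel₀]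
    · ring
    · exact ne_of_gt hd

/-- Case A for cell counts. -/
lemma N_vanish {i0 : I} {J' : Finset I} {W : AffineSubspace ℝ (Fin d → ℝ)}
    (hle : W ≤ Hsub l b i0) : Ncells l b (insert i0 J') W = 0 := by
  unfold Ncells
  rw [Finset.card_eq_zero, Finset.filter_eq_empty_iff]
  rintro σ - ⟨⟨x, hx⟩, -⟩
  have h1 : l i0 x ≠ b i0 := cell_ne_of_mem l b hx (Finset.mem_insert_self i0 J')
  exact h1 (hle (cell_subset_W l b hx))

/-- Cases B/C for cell counts: deletion–restriction. -/
lemma N_step {i0 : I} {J' : Finset I} (hi0 : i0 ∉ J') {W : AffineSubspace ℝ (Fin d → ℝ)}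
    (hne : ¬ W ≤ Hsub l b i0) :
    Ncells l b (insert i0 J') W = Ncells l b J' W + Ncells l b J' (W ⊓ Hsub l b i0) := by
  classical
  set A := Finset.univ.filter fun σ : I → Bool =>
    (cell l b (insert i0 J') σ W).Nonempty ∧ ∀ i ∉ insert i0 J', σ i = false with hA
  set T := Finset.univ.filter fun σ : I → Bool =>
    (cell l b J' σ W).Nonempty ∧ ∀ i ∉ J', σ i = false with hT
  set T' := Finset.univ.filter fun σ : I → Bool =>
    (cell l b J' σ (W ⊓ Hsub l b i0)).Nonempty ∧ ∀ i ∉ J', σ i = false with hT'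
  have hT'subT : T' ⊆ T := by
    intro τ hτ
    rw [hT', Finset.mem_filter] at hτ
    rw [hT, Finset.mem_filter]
    refine ⟨Finset.mem_univ _, hτ.2.1.mono (cell_mono_W l b inf_le_left), hτ.2.2⟩
  set g : (I → Bool) → (I → Bool) := fun σ => Function.update σ i0 false with hg
  have hmap : ∀ σ ∈ A, g σ ∈ T := by
    intro σ hσ
    rw [hA, Finset.mem_filter] at hσ
    obtain ⟨-, hcell, hnorm⟩ := hσ
    rw [hT, Finset.mem_filter]
    refine ⟨Finset.mem_univ _, ?_, ?_⟩
    · have h1 : cell l b J' (g σ) W = cell l b J' σ W := by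
        apply cell_congr
        intro i hi
        simp only [hg]
        exact Function.update_of_ne (fun h => hi0 (by rw [← h]; exact hi)) _ _
      rw [h1]
      refine hcell.mono ?_
      rw [cell_insert l b hi0]
      exact Set.inter_subset_left
    · intro i hi
      simp only [hg]
      by_cases h : i = i0
      · rw [h]; exact Function.update_self _ _ _
      · rw [Function.update_of_ne h]
        exact hnorm i (by simp [h, hi])
  have hcards : A.card = ∑ τ ∈ T, (A.filter fun σ => g σ = τ).card :=
    Finset.card_eq_sum_card_fiberwise hmap
  -- fiber cardinality
  have hfiber : ∀ τ ∈ T, (A.filter fun σ => g σ = τ).card = if τ ∈ T' then 2 else 1 := by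
    intro τ hτ
    rw [hT, Finset.mem_filter] at hτ
    obtain ⟨-, hDne, hτnorm⟩ := hτ
    have hτi0 : τ i0 = false := hτnorm i0 hi0
    have hgτ : g τ = τ := by
      funext i
      simp only [hg]
      by_cases h : i = i0
      · rw [h, Function.update_self, hτi0]
      · rw [Function.update_of_ne h]
    set σp : I → Bool := Function.update τ i0 true with hσp
    have hgσp : g σp = τ := by
      funext i
      simp only [hg, hσp]
      by_cases h : i = i0
      · subst h; rw [Function.update_self, hτi0]
      · rw [Function.update_of_ne h, Function.update_of_ne h]
    have hσpτ : σp ≠ τ := by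
      intro h
      have := congrFun h i0
      rw [hσp, Function.update_self, hτi0] at this
      exact absurd this (by simp)
    -- cells of the two extensions
    have hcellp : cell l b (insert i0 J') σp W = cell l b J' τ W ∩ {x | b i0 < l i0 x} := by
      rw [cell_insert l b hi0, cell_congr l b (σ := σp) (τ := τ)
        (fun i hi => by
          rw [hσp, Function.update_of_ne (fun h => hi0 (by rw [← h]; exact hi))])]
      congr 1
      ext x
      simp [hσp, Function.update_self]
    have hcellm : cell l b (insert i0 J') τ W = cell l b J' τ W ∩ {x | l i0 x < b i0} := by
      rw [cell_insert l b hi0]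
      congr 1
      ext x
      simp [hτi0]
    -- normalization facts
    have hnormp : ∀ i ∉ insert i0 J', σp i = false := by
      intro i hi
      rw [hσp, Function.update_of_ne
        (fun h => hi (by rw [h]; exact Finset.mem_insert_self i0 J'))]
      exact hτnorm i (fun h => hi (Finset.mem_insert_of_mem h))
    have hnormm : ∀ i ∉ insert i0 J', τ i = false := by
      intro i hi
      exact hτnorm i (fun h => hi (Finset.mem_insert_of_mem h))
    -- fiber is contained in {σp, τ}
    have hfibsub : (A.filter fun σ => g σ = τ) ⊆ {σp, τ} := by
      intro σ hσ
      rw [Finset.mem_filter] at hσ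
      obtain ⟨-, hgστ⟩ := hσ
      rw [Finset.mem_insert, Finset.mem_singleton]
      by_cases h : σ i0 = true
      · left
        funext i
        by_cases hii : i = i0
        · subst hii; rw [hσp, Function.update_self, h]
        · rw [hσp, Function.update_of_ne hii, ← hgστ]
          simp only [hg]
          rw [Function.update_of_ne hii]
      · right
        funext i
        by_cases hii : i = i0
        · rw [hii, hτi0]
          revert h; cases σ i0 <;> simp
        · rw [← hgστ]
          simp only [hg]
          rw [Function.update_of_ne hii]
    have hmemp : σp ∈ (A.filter fun σ => g σ = τ)
        ↔ (cell l b J' τ W ∩ {x | b i0 < l i0 x}).Nonempty := by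
      rw [Finset.mem_filter, hA, Finset.mem_filter]
      constructor
      · rintro ⟨⟨-, hc, -⟩, -⟩; rwa [hcellp] at hc
      · intro h
        exact ⟨⟨Finset.mem_univ _, by rwa [hcellp], hnormp⟩, hgσp⟩
    have hmemm : τ ∈ (A.filter fun σ => g σ = τ)
        ↔ (cell l b J' τ W ∩ {x | l i0 x < b i0}).Nonempty := by
      rw [Finset.mem_filter, hA, Finset.mem_filter]
      constructor
      · rintro ⟨⟨-, hc, -⟩, -⟩; rwa [hcellm] at hc
      · intro h
        exact ⟨⟨Finset.mem_univ _, by rwa [hcellm], hnormm⟩, hgτ⟩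
    -- T' membership is meeting the hyperplane
    have hT'mem : τ ∈ T' ↔ (cell l b J' τ W ∩ Hset l b i0).Nonempty := by
      rw [hT', Finset.mem_filter, cell_inf_Hsub]
      constructor
      · rintro ⟨-, h, -⟩; exact h
      · intro h; exact ⟨Finset.mem_univ _, h, hτnorm⟩
    by_cases hmeet : (cell l b J' τ W ∩ Hset l b i0).Nonempty
    · rw [if_pos (hT'mem.2 hmeet)]
      obtain ⟨x, hxc, hxH⟩ := hmeet
      obtain ⟨⟨y, hy, hby⟩, ⟨z, hz, hbz⟩⟩ := both_sides l b hne hxc hxH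
      have : (A.filter fun σ => g σ = τ) = {σp, τ} := by
        apply Finset.Subset.antisymm hfibsub
        intro σ hσ
        rw [Finset.mem_insert, Finset.mem_singleton] at hσ
        rcases hσ with rfl | rfl
        · exact hmemp.2 ⟨y, hy, hby⟩
        · exact hmemm.2 ⟨z, hz, hbz⟩
      rw [this, Finset.card_insert_of_notMem (by simpa using hσpτ), Finset.card_singleton]
    · rw [if_neg (fun h => hmeet (hT'mem.1 h))]
      -- exactly one side is nonempty
      obtain ⟨x, hx⟩ := hDne
      have hxne : l i0 x ≠ b i0 := fun h => hmeet ⟨x, hx, h⟩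
      rcases lt_or_gt_of_ne hxne with hlt | hgt
      · -- negative side nonempty, positive side empty
        have hpe : ¬ (cell l b J' τ W ∩ {x | b i0 < l i0 x}).Nonempty := by
          rintro ⟨y, hy, hby⟩
          obtain ⟨w, hw, hwH⟩ := meet_hyp l b hy hx hby hlt
          exact hmeet ⟨w, hw, hwH⟩
        have : (A.filter fun σ => g σ = τ) = {τ} := by
          apply Finset.Subset.antisymm
          · intro σ hσ
            have h2 := hfibsub hσ
            rw [Finset.mem_insert, Finset.mem_singleton] at h2
            rw [Finset.mem_singleton]
            rcases h2 with rfl | rfl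
            · exact absurd (hmemp.1 hσ) hpe
            · rfl
          · intro σ hσ
            rw [Finset.mem_singleton] at hσ
            subst hσ
            exact hmemm.2 ⟨x, hx, hlt⟩
        rw [this, Finset.card_singleton]
      · -- positive side nonempty, negative side empty
        have hpe : ¬ (cell l b J' τ W ∩ {x | l i0 x < b i0}).Nonempty := by
          rintro ⟨y, hy, hby⟩
          obtain ⟨w, hw, hwH⟩ := meet_hyp l b hx hy hgt hby
          exact hmeet ⟨w, hw, hwH⟩
        have : (A.filter fun σ => g σ = τ) = {σp} := by
          apply Finset.Subset.antisymm
          · intro σ hσ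
            have h2 := hfibsub hσ
            rw [Finset.mem_insert, Finset.mem_singleton] at h2
            rw [Finset.mem_singleton]
            rcases h2 with rfl | rfl
            · rfl
            · exact absurd (hmemm.1 hσ) hpe
          · intro σ hσ
            rw [Finset.mem_singleton] at hσ
            subst hσ
            exact hmemp.2 ⟨x, hx, hgt⟩
        rw [this, Finset.card_singleton]
  -- sum up
  have : ∑ τ ∈ T, (A.filter fun σ => g σ = τ).card
      = ∑ τ ∈ T, (if τ ∈ T' then 2 else 1) := Finset.sum_congr rfl hfiber
  rw [Ncells, Ncells, Ncells, ← hA, ← hT, ← hT', hcards, this]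
  have hsplit : ∀ τ ∈ T, (if τ ∈ T' then 2 else 1) = 1 + (if τ ∈ T' then 1 else 0) := by
    intro τ _
    by_cases h : τ ∈ T' <;> simp [h]
  rw [Finset.sum_congr rfl hsplit, Finset.sum_add_distrib, Finset.sum_const, Finset.sum_ite_mem]
  rw [Finset.sum_const]
  have hTT' : T ∩ T' = T' := Finset.inter_eq_right.2 hT'subT
  rw [hTT']
  simp [mul_comm]

lemma Ncells_empty (W : AffineSubspace ℝ (Fin d → ℝ)) (hW : W ≠ ⊥) :
    Ncells l b ∅ W = 1 := by
  unfold Ncells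
  have : (Finset.univ.filter fun σ : I → Bool =>
      (cell l b ∅ σ W).Nonempty ∧ ∀ i ∉ (∅ : Finset I), σ i = false)
      = {fun _ => false} := by
    ext σ
    rw [Finset.mem_filter, Finset.mem_singleton]
    constructor
    · rintro ⟨-, -, hnorm⟩
      funext i
      exact hnorm i (Finset.notMem_empty i)
    · rintro rfl
      refine ⟨Finset.mem_univ _, ?_, fun i _ => rfl⟩
      obtain ⟨x, hx⟩ := (AffineSubspace.nonempty_iff_ne_bot W).2 hW
      exact ⟨x, hx, by simp [ocell]⟩
  rw [this, Finset.card_singleton]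

lemma Scount_empty (W : AffineSubspace ℝ (Fin d → ℝ)) (hW : W ≠ ⊥) :
    Scount l b ∅ W = 1 := by
  unfold Scount
  rw [Finset.powerset_empty, Finset.sum_singleton]
  have hset : (W : Set (Fin d → ℝ)) ∩ ⋂ i ∈ (∅ : Finset I), Hset l b i
      = (W : Set (Fin d → ℝ)) := by simp
  rw [hset, if_pos ((AffineSubspace.nonempty_iff_ne_bot W).2 hW),
    AffineSubspace.affineSpan_coe]
  simp

lemma claimB (J : Finset I) : ∀ W : AffineSubspace ℝ (Fin d → ℝ), W ≠ ⊥ →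
    (Ncells l b J W : ℤ) = Scount l b J W := by
  induction J using Finset.induction with
  | empty =>
    intro W hW
    rw [Ncells_empty l b W hW, Scount_empty l b W hW, Nat.cast_one]
  | @insert i0 J' hi0 ih =>
    intro W hW
    by_cases hle : W ≤ Hsub l b i0
    · rw [N_vanish l b hle, S_vanish l b hi0 hle, Nat.cast_zero]
    · rw [N_step l b hi0 hle, S_step l b hi0 hle, Nat.cast_add, ih W hW]
      by_cases hbot : W ⊓ Hsub l b i0 = ⊥
      · rw [hbot, Ncells_bot, Scount_bot, Nat.cast_zero]
      · rw [ih _ hbot]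

lemma cell_subset_compl (J : Finset I) (σ : I → Bool) (W : AffineSubspace ℝ (Fin d → ℝ)) :
    cell l b J σ W ⊆ ↑W ∩ (⋃ i ∈ J, Hset l b i)ᶜ := by
  intro x hx
  refine ⟨hx.1, ?_⟩
  intro hmem
  rcases Set.mem_iUnion₂.1 hmem with ⟨i, hi, hxi⟩
  exact cell_ne_of_mem l b hx hi hxi

theorem claimA (J : Finset I) (W : AffineSubspace ℝ (Fin d → ℝ)) :
    Finite (ConnectedComponents ↥((W : Set (Fin d → ℝ)) ∩ (⋃ i ∈ J, Hset l b i)ᶜ)) ∧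
    Nat.card (ConnectedComponents ↥((W : Set (Fin d → ℝ)) ∩ (⋃ i ∈ J, Hset l b i)ᶜ))
      = Ncells l b J W := by
  set Y : Set (Fin d → ℝ) := (W : Set (Fin d → ℝ)) ∩ (⋃ i ∈ J, Hset l b i)ᶜ with hY
  set F : Y → (I → Bool) := fun y i => if (i ∈ J ∧ b i < l i (y : Fin d → ℝ)) then true else false
    with hF
  -- basic facts about points of Y
  have hYW : ∀ y : Y, (y : Fin d → ℝ) ∈ W := fun y => y.2.1
  have hYne : ∀ (y : Y), ∀ i ∈ J, l i (y : Fin d → ℝ) ≠ b i := by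
    intro y i hi hcon
    exact y.2.2 (Set.mem_iUnion₂.2 ⟨i, hi, hcon⟩)
  -- characterization of F y = σ
  have hFeq : ∀ (y : Y) (σ : I → Bool),
      F y = σ ↔ ((y : Fin d → ℝ) ∈ cell l b J σ W ∧ ∀ i ∉ J, σ i = false) := by
    intro y σ
    constructor
    · intro h
      have hnorm : ∀ i ∉ J, σ i = false := by
        intro i hi
        rw [← congrFun h i, hF]
        simp only [if_neg (fun hc : _ ∧ _ => hi hc.1)]
      refine ⟨(mem_cell l b).2 ⟨hYW y, ?_⟩, hnorm⟩
      intro i hi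
      by_cases hσ : σ i
      · have := congrFun h i
        rw [hσ, hF] at this
        simp only at this
        by_cases hc : (i ∈ J ∧ b i < l i (y : Fin d → ℝ))
        · simpa [hσ] using hc.2
        · rw [if_neg hc] at this; exact absurd this (by simp)
      · simp only [hσ, if_false]
        have hne := hYne y i hi
        have := congrFun h i
        rw [hF] at this
        simp only [Bool.if_true_right] at this
        by_cases hc : (i ∈ J ∧ b i < l i (y : Fin d → ℝ))
        · rw [if_pos hc] at this; rw [← this] at hσ; exact absurd rfl hσ
        · push_neg at hc
          rcases lt_or_eq_of_le (hc hi) with h' | h'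
          · exact h'
          · exact absurd h' hne
    · rintro ⟨hc, hnorm⟩
      funext i
      by_cases hi : i ∈ J
      · have := ((mem_cell l b).1 hc).2 i hi
        by_cases hσ : σ i
        · rw [hσ] at this ⊢
          simp only [if_true] at this
          rw [hF]; simp only [if_pos (⟨hi, this⟩ : _ ∧ _)]
        · have hσ' : σ i = false := by
            revert hσ; cases σ i <;> simp
          rw [hσ', if_neg (by simp : ¬(false = true))] at this
          have hcond : ¬(i ∈ J ∧ b i < l i (y : Fin d → ℝ)) := by
            rintro ⟨-, hlt⟩; linarith
          rw [hF]
          simp only [if_neg hcond]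
          simp [hσ']
      · rw [hF]
        simp only [if_neg (fun hc' : _ ∧ _ => hi hc'.1)]
        exact (hnorm i hi).symm
  -- F is locally constant
  have hlc : IsLocallyConstant F := by
    intro s
    have : F ⁻¹' s = ⋃ σ ∈ s, F ⁻¹' {σ} := by
      ext y; simp [Set.mem_iUnion]
    rw [this]
    refine isOpen_iUnion fun σ => isOpen_iUnion fun _ => ?_
    by_cases hnorm : ∀ i ∉ J, σ i = false
    · have : F ⁻¹' {σ} = Subtype.val ⁻¹' (ocell l b J σ) := by
        ext y
        simp only [Set.mem_preimage, Set.mem_singleton_iff]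
        rw [hFeq y σ]
        constructor
        · rintro ⟨hc, -⟩; exact hc.2
        · intro ho; exact ⟨⟨hYW y, ho⟩, hnorm⟩
      rw [this]
      exact (ocell_open l b J σ).preimage continuous_subtype_val
    · have : F ⁻¹' {σ} = ∅ := by
        ext y
        simp only [Set.mem_preimage, Set.mem_singleton_iff, Set.mem_empty_iff_false, iff_false]
        intro h
        exact hnorm ((hFeq y σ).1 h).2
      rw [this]; exact isOpen_empty
  have hFc : Continuous F := hlc.continuous
  set Fbar := hFc.connectedComponentsLift with hFbar
  have hinj : Function.Injective Fbar := by
    intro a a' hab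
    obtain ⟨x, rfl⟩ := ConnectedComponents.surjective_coe a
    obtain ⟨y, rfl⟩ := ConnectedComponents.surjective_coe a'
    rw [hFbar, hFc.connectedComponentsLift_apply_coe, hFc.connectedComponentsLift_apply_coe] at hab
    set σ := F y with hσ
    have hx : (x : Fin d → ℝ) ∈ cell l b J σ W := ((hFeq x σ).1 hab).1
    have hy : (y : Fin d → ℝ) ∈ cell l b J σ W := ((hFeq y σ).1 rfl).1
    have hsub : cell l b J σ W ⊆ Y := cell_subset_compl l b J σ W
    have hpre : IsPreconnected (Subtype.val ⁻¹' (cell l b J σ W) : Set Y) := by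
      rw [← Topology.IsInducing.subtypeVal.isPreconnected_image]
      have himg : (Subtype.val '' (Subtype.val ⁻¹' (cell l b J σ W) : Set Y))
          = cell l b J σ W := by
        rw [Set.image_preimage_eq_inter_range, Subtype.range_coe]
        exact Set.inter_eq_self_of_subset_left hsub
      rw [himg]
      exact (cell_convex l b J σ W).isPreconnected
    have hxm : x ∈ (Subtype.val ⁻¹' (cell l b J σ W) : Set Y) := hx
    have hym : y ∈ (Subtype.val ⁻¹' (cell l b J σ W) : Set Y) := hy
    have h1 : (Subtype.val ⁻¹' (cell l b J σ W) : Set Y) ⊆ connectedComponent x :=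
      hpre.subset_connectedComponent hxm
    exact ConnectedComponents.coe_eq_coe.2 (connectedComponent_eq (h1 hym))
  have hfin : Finite (ConnectedComponents Y) := Finite.of_injective Fbar hinj
  refine ⟨hfin, ?_⟩
  have hrange : Set.range Fbar = Set.range F := by
    ext σ
    constructor
    · rintro ⟨a, rfl⟩
      obtain ⟨x, rfl⟩ := ConnectedComponents.surjective_coe a
      exact ⟨x, (hFc.connectedComponentsLift_apply_coe x).symm⟩
    · rintro ⟨y, rfl⟩
      exact ⟨ConnectedComponents.mk y, hFc.connectedComponentsLift_apply_coe y⟩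
  have hrangeF : Set.range F
      = ↑(Finset.univ.filter fun σ : I → Bool =>
          (cell l b J σ W).Nonempty ∧ ∀ i ∉ J, σ i = false) := by
    ext σ
    simp only [Set.mem_range, Finset.coe_filter, Set.mem_setOf_eq, Finset.mem_univ, true_and]
    constructor
    · rintro ⟨y, rfl⟩
      rcases (hFeq y _).1 rfl with ⟨hc, hnorm⟩
      exact ⟨⟨_, hc⟩, hnorm⟩
    · rintro ⟨⟨x, hx⟩, hnorm⟩
      have hxY : x ∈ Y := cell_subset_compl l b J σ W hx
      exact ⟨⟨x, hxY⟩, (hFeq ⟨x, hxY⟩ σ).2 ⟨hx, hnorm⟩⟩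
  calc Nat.card (ConnectedComponents Y) = Nat.card (Set.range Fbar) :=
        (Nat.card_range_of_injective hinj).symm
    _ = Ncells l b J W := by
        rw [hrange, hrangeF, Nat.card_coe_set_eq, Set.ncard_coe_finset, Ncells]


lemma pow_helper {c k dd : ℕ} (h1 : dd - k ≤ c) (h2 : k ≤ dd) :
    (-1 : ℤ) ^ (c - (dd - k)) = (-1) ^ dd * ((-1) ^ c * (-1) ^ (dd - (dd - k))) := by
  have h3 : dd - (dd - k) = k := by omega
  rw [h3]
  set r := dd - k with hrdef
  have e1 : (-1 : ℤ) ^ (c - r) * (-1) ^ r = (-1) ^ c := by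
    rw [← pow_add, Nat.sub_add_cancel h1]
  have e2 : (-1 : ℤ) ^ k * (-1) ^ r = (-1) ^ dd := by
    rw [← pow_add]; congr 1; omega
  have hr : (-1 : ℤ) ^ r * (-1) ^ r = 1 := by
    rw [← pow_add]; exact Even.neg_one_pow ⟨r, rfl⟩
  have hk : (-1 : ℤ) ^ k * (-1) ^ k = 1 := by
    rw [← pow_add]; exact Even.neg_one_pow ⟨k, rfl⟩
  calc (-1 : ℤ) ^ (c - r) = ((-1 : ℤ) ^ (c - r) * (-1) ^ r) * (-1) ^ r := by
        rw [mul_assoc, hr, mul_one]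
    _ = (-1) ^ c * (-1) ^ r := by rw [e1]
    _ = (-1) ^ c * (((-1) ^ k * (-1) ^ k) * (-1) ^ r) := by rw [hk, one_mul]
    _ = ((-1) ^ k * (-1) ^ r) * ((-1) ^ c * (-1) ^ k) := by ring
    _ = (-1) ^ dd * ((-1) ^ c * (-1) ^ k) := by rw [e2]

lemma top_ne_bot' : (⊤ : AffineSubspace ℝ (Fin d → ℝ)) ≠ ⊥ := by
  rw [← AffineSubspace.nonempty_iff_ne_bot]
  exact ⟨0, by simp⟩

lemma finrank_top_dir : Module.finrank ℝ (⊤ : AffineSubspace ℝ (Fin d → ℝ)).direction = d := by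
  rw [AffineSubspace.direction_top]
  rw [finrank_top]
  exact Module.finrank_fin_fun ℝ

end Zaslavsky

/-- **Zaslavsky's theorem (region count).** Let `𝒜 = (H i)` be a hyperplane arrangement in
`ℝ^d`.  The complement of `⋃ i, H i` has finitely many connected components, and their number
equals `Σ_{B central} (-1)^(|B| - r B)`, which in turn equals `(-1)^d χ(𝒜; -1)`. -/
theorem zaslavsky_regions
    {d : ℕ} {I : Type} [Fintype I]
    (l : I → ((Fin d → ℝ) →ₗ[ℝ] ℝ)) (hl : ∀ i, l i ≠ 0) (b : I → ℝ)
    (H : I → Set (Fin d → ℝ)) (hH : ∀ i, H i = {x | l i x = b i}) :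
    Finite (ConnectedComponents ↥((⋃ i, H i)ᶜ)) ∧
    (Nat.card (ConnectedComponents ↥((⋃ i, H i)ᶜ)) : ℤ)
      = (∑ B : Finset I,
          if (⋂ i ∈ B, H i).Nonempty then
            (-1 : ℤ) ^
              (B.card - (d - Module.finrank ℝ ↥((affineSpan ℝ (⋂ i ∈ B, H i)).direction)))
          else 0) ∧
    (Nat.card (ConnectedComponents ↥((⋃ i, H i)ᶜ)) : ℤ)
      = (-1) ^ d *
          ∑ B : Finset I,
            if (⋂ i ∈ B, H i).Nonempty then
              (-1 : ℤ) ^ B.card *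
                (-1 : ℤ) ^
                  (d - (d - Module.finrank ℝ ↥((affineSpan ℝ (⋂ i ∈ B, H i)).direction)))
            else 0 := by
  classical
  have hHeq : H = fun i => Zaslavsky.Hset l b i := by
    funext i; rw [hH]; rfl
  subst hHeq
  have hE : (⋃ i, Zaslavsky.Hset l b i)ᶜ
      = ((⊤ : AffineSubspace ℝ (Fin d → ℝ)) : Set (Fin d → ℝ))
        ∩ (⋃ i ∈ (Finset.univ : Finset I), Zaslavsky.Hset l b i)ᶜ := by
    rw [AffineSubspace.top_coe, Set.univ_inter]
    congr 1
    simp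
  rw [hE]
  obtain ⟨hfin, hcard⟩ := Zaslavsky.claimA l b Finset.univ ⊤
  have hB := Zaslavsky.claimB l b Finset.univ ⊤ Zaslavsky.top_ne_bot'
  -- rewrite Scount into the required shape
  have hSc : Zaslavsky.Scount l b Finset.univ ⊤
      = ∑ B : Finset I,
          if (⋂ i ∈ B, Zaslavsky.Hset l b i).Nonempty then
            (-1 : ℤ) ^ (B.card - (d - Module.finrank ℝ
              ↥((affineSpan ℝ (⋂ i ∈ B, Zaslavsky.Hset l b i)).direction)))
          else 0 := by
    unfold Zaslavsky.Scount
    rw [Finset.powerset_univ]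
    apply Finset.sum_congr rfl
    intro B _
    have h1 : ((⊤ : AffineSubspace ℝ (Fin d → ℝ)) : Set (Fin d → ℝ))
        ∩ ⋂ i ∈ B, Zaslavsky.Hset l b i = ⋂ i ∈ B, Zaslavsky.Hset l b i := by
      rw [AffineSubspace.top_coe, Set.univ_inter]
    rw [h1, Zaslavsky.finrank_top_dir]
  refine ⟨hfin, ?_, ?_⟩
  · rw [hcard, hB, hSc]
  · rw [hcard, hB, hSc, Finset.mul_sum]
    apply Finset.sum_congr rfl
    intro B _
    by_cases hcen : (⋂ i ∈ B, Zaslavsky.Hset l b i).Nonempty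
    · rw [if_pos hcen, if_pos hcen]
      set k := Module.finrank ℝ
        ↥((affineSpan ℝ (⋂ i ∈ B, Zaslavsky.Hset l b i)).direction) with hkdef
      have hkd : k ≤ d := by
        rw [hkdef]
        have := Submodule.finrank_le
          ((affineSpan ℝ (⋂ i ∈ B, Zaslavsky.Hset l b i)).direction)
        rwa [Module.finrank_fin_fun ℝ] at this
      have hrc : d - k ≤ B.card := by
        have h1 : ((⊤ : AffineSubspace ℝ (Fin d → ℝ)) : Set (Fin d → ℝ))
            ∩ ⋂ i ∈ B, Zaslavsky.Hset l b i = ⋂ i ∈ B, Zaslavsky.Hset l b i := by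
          rw [AffineSubspace.top_coe, Set.univ_inter]
        have := Zaslavsky.rank_le l b B ⊤ (by rw [h1]; exact hcen)
        rwa [h1, Zaslavsky.finrank_top_dir] at this
      exact Zaslavsky.pow_helper hrc hkd
    · rw [if_neg hcen, if_neg hcen, mul_zero]
end

section
/- (Deletion–contraction recursion for the Tutte polynomial.) Let M be a matroid with finite ground set E and rank function r, and let e ∈ E. Then, in ℤ[x,y]: (1) if e is neither a loop nor a coloop of M, then T(M;x,y) = T(M∖e;x,y) + T(M/e;x,y); (2) if e is a loop, then T(M;x,y) = y · T(M∖e;x,y); (3) if e is a coloop, then T(M;x,y) = x · T(M/e;x,y). -/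
open scoped BigOperators

/-- `r` is the rank function of a matroid: normalized (`r B ≤ |B|`), monotone, submodular. -/
def IsRankFn {α : Type} [DecidableEq α] (r : Finset α → ℕ) : Prop :=
  (∀ B, r B ≤ B.card) ∧ (∀ B C, B ⊆ C → r B ≤ r C) ∧
    (∀ B C, r (B ∪ C) + r (B ∩ C) ≤ r B + r C)

/-- The Tutte polynomial `T(M;x,y) = Σ_{B ⊆ E} (x-1)^(r E - r B) (y-1)^(|B| - r B)` of the
matroid with ground set `E` and rank function `r`, as an element of `ℤ[x,y]`
(`x = X 0`, `y = X 1`). -/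
noncomputable def tuttePoly {α : Type} [DecidableEq α] (E : Finset α) (r : Finset α → ℕ) :
    MvPolynomial (Fin 2) ℤ :=
  ∑ B ∈ E.powerset,
    (MvPolynomial.X 0 - 1) ^ (r E - r B) * (MvPolynomial.X 1 - 1) ^ (B.card - r B)

/-- **Deletion–contraction recursion for the Tutte polynomial.** Let `M = (E, r)` be a matroid
and `e ∈ E`.  If `e` is neither a loop (`r {e} = 0`) nor a coloop (`r (E \ e) + 1 = r E`), then
`T(M) = T(M\e) + T(M/e)`; if `e` is a loop then `T(M) = y·T(M\e)`; if `e` is a coloop then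
`T(M) = x·T(M/e)`.  Here `M\e` has ground set `E \ {e}` and rank `r`, and `M/e` has ground set
`E \ {e}` and rank `B ↦ r (B ∪ {e}) - r {e}`. -/
theorem tutte_deletion_contraction {α : Type} [DecidableEq α]
    (E : Finset α) (r : Finset α → ℕ) (hr : IsRankFn r) (e : α) (he : e ∈ E) :
    ((r {e} ≠ 0 ∧ r (E.erase e) + 1 ≠ r E) →
      tuttePoly E r =
        tuttePoly (E.erase e) r +
          tuttePoly (E.erase e) (fun B => r (insert e B) - r {e})) ∧
    (r {e} = 0 →
      tuttePoly E r = MvPolynomial.X 1 * tuttePoly (E.erase e) r) ∧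
    (r (E.erase e) + 1 = r E →
      tuttePoly E r =
        MvPolynomial.X 0 * tuttePoly (E.erase e) (fun B => r (insert e B) - r {e})) := by
  obtain ⟨h1, h2, h3⟩ := hr
  have hne : e ∉ E.erase e := Finset.notMem_erase e E
  have hEins : insert e (E.erase e) = E := Finset.insert_erase he
  have hr0 : r ∅ = 0 := Nat.le_zero.mp (h1 ∅)
  have hre1 : r {e} ≤ 1 := by simpa using h1 {e}
  have hsub : ∀ B : Finset α, e ∉ B → r (insert e B) ≤ r B + r {e} := by
    intro B hB
    have h := h3 B {e}
    rwa [Finset.union_comm, ← Finset.insert_eq,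
      Finset.inter_singleton_of_notMem hB, hr0, add_zero] at h
  have hmon : ∀ B : Finset α, r B ≤ r (insert e B) :=
    fun B => h2 _ _ (Finset.subset_insert e B)
  have hmone : ∀ B : Finset α, r {e} ≤ r (insert e B) :=
    fun B => h2 _ _ (by simp)
  have hEE' : r (E.erase e) ≤ r E := h2 _ _ (Finset.erase_subset e E)
  have hEup : r E ≤ r (E.erase e) + r {e} := by
    have h := hsub (E.erase e) hne
    rwa [hEins] at h
  have hkey : ∀ B : Finset α, B ⊆ E.erase e →
      r E + r B ≤ r (insert e B) + r (E.erase e) := by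
    intro B hB
    have h := h3 (insert e B) (E.erase e)
    have hu : insert e B ∪ E.erase e = E := by
      rw [Finset.insert_union, Finset.union_eq_right.mpr hB, hEins]
    have hi : insert e B ∩ E.erase e = B := by
      rw [Finset.insert_inter_of_notMem hne, Finset.inter_eq_left.mpr hB]
    rwa [hu, hi] at h
  have hsplit : tuttePoly E r =
      (∑ B ∈ (E.erase e).powerset,
        (MvPolynomial.X 0 - 1 : MvPolynomial (Fin 2) ℤ) ^ (r E - r B) *
          (MvPolynomial.X 1 - 1) ^ (B.card - r B)) +
      ∑ B ∈ (E.erase e).powerset,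
        (MvPolynomial.X 0 - 1 : MvPolynomial (Fin 2) ℤ) ^ (r E - r (insert e B)) *
          (MvPolynomial.X 1 - 1) ^ ((insert e B).card - r (insert e B)) := by
    conv_lhs => rw [tuttePoly, ← hEins, Finset.sum_powerset_insert hne]
    rw [hEins]
  refine ⟨?_, ?_, ?_⟩
  · -- neither loop nor coloop
    rintro ⟨hx, hy⟩
    have hreq : r {e} = 1 := by omega
    have hEe : r E = r (E.erase e) := by omega
    rw [hsplit]
    simp only [tuttePoly]
    congr 1
    · exact Finset.sum_congr rfl fun B hB => by rw [hEe]
    · refine Finset.sum_congr rfl fun B hB => ?_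
      have hB' : B ⊆ E.erase e := Finset.mem_powerset.mp hB
      have heB : e ∉ B := fun h => hne (hB' h)
      have h1' : r (insert e B) ≤ (insert e B).card := h1 _
      have hc : (insert e B).card = B.card + 1 := Finset.card_insert_of_notMem heB
      have hs1 : 1 ≤ r (insert e B) := hreq ▸ hmone B
      have hsE : r (insert e B) ≤ r E := h2 _ _ (by
        rw [← hEins]; exact Finset.insert_subset_insert e hB')
      rw [hreq, hEins, hc,
        show r E - 1 - (r (insert e B) - 1) = r E - r (insert e B) from by omega,
        show B.card - (r (insert e B) - 1) = B.card + 1 - r (insert e B) from by omega]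
  · -- loop
    intro hloop
    have hEe : r E = r (E.erase e) := by omega
    rw [hsplit, tuttePoly]
    have h2nd : (∑ B ∈ (E.erase e).powerset,
        (MvPolynomial.X 0 - 1 : MvPolynomial (Fin 2) ℤ) ^ (r E - r (insert e B)) *
          (MvPolynomial.X 1 - 1) ^ ((insert e B).card - r (insert e B))) =
        (MvPolynomial.X 1 - 1) * ∑ B ∈ (E.erase e).powerset,
        (MvPolynomial.X 0 - 1 : MvPolynomial (Fin 2) ℤ) ^ (r E - r B) *
          (MvPolynomial.X 1 - 1) ^ (B.card - r B) := by
      rw [Finset.mul_sum]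
      refine Finset.sum_congr rfl fun B hB => ?_
      have hB' : B ⊆ E.erase e := Finset.mem_powerset.mp hB
      have heB : e ∉ B := fun h => hne (hB' h)
      have h4 : r (insert e B) = r B :=
        le_antisymm (by have := hsub B heB; omega) (hmon B)
      have hcard : (insert e B).card = B.card + 1 := Finset.card_insert_of_notMem heB
      have hrB : r B ≤ B.card := h1 B
      rw [hcard, h4, show B.card + 1 - r B = (B.card - r B) + 1 by omega, pow_succ]
      ring
    rw [h2nd]
    simp only [hEe]
    ring
  · -- coloop
    intro hcolo
    have hreq : r {e} = 1 := by omega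
    rw [hsplit]
    simp only [tuttePoly]
    have key : ∀ B ∈ (E.erase e).powerset, r (insert e B) = r B + 1 := by
      intro B hB
      have hB' : B ⊆ E.erase e := Finset.mem_powerset.mp hB
      have heB : e ∉ B := fun h => hne (hB' h)
      have hk := hkey B hB'
      have hs := hsub B heB
      omega
    have h1st : (∑ B ∈ (E.erase e).powerset,
        (MvPolynomial.X 0 - 1 : MvPolynomial (Fin 2) ℤ) ^ (r E - r B) *
          (MvPolynomial.X 1 - 1) ^ (B.card - r B)) =
        (MvPolynomial.X 0 - 1) * ∑ B ∈ (E.erase e).powerset,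
        (MvPolynomial.X 0 - 1 : MvPolynomial (Fin 2) ℤ) ^
            (r (insert e (E.erase e)) - r {e} - (r (insert e B) - r {e})) *
          (MvPolynomial.X 1 - 1) ^ (B.card - (r (insert e B) - r {e})) := by
      rw [Finset.mul_sum]
      refine Finset.sum_congr rfl fun B hB => ?_
      have hB' : B ⊆ E.erase e := Finset.mem_powerset.mp hB
      have hrBE : r B ≤ r (E.erase e) := h2 _ _ hB'
      rw [key B hB, hEins, hreq]
      rw [show r E - r B = (r E - 1 - (r B + 1 - 1)) + 1 by omega, pow_succ,
        show B.card - (r B + 1 - 1) = B.card - r B by omega]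
      ring
    have h2nd : (∑ B ∈ (E.erase e).powerset,
        (MvPolynomial.X 0 - 1 : MvPolynomial (Fin 2) ℤ) ^ (r E - r (insert e B)) *
          (MvPolynomial.X 1 - 1) ^ ((insert e B).card - r (insert e B))) =
        ∑ B ∈ (E.erase e).powerset,
        (MvPolynomial.X 0 - 1 : MvPolynomial (Fin 2) ℤ) ^
            (r (insert e (E.erase e)) - r {e} - (r (insert e B) - r {e})) *
          (MvPolynomial.X 1 - 1) ^ (B.card - (r (insert e B) - r {e})) := by
      refine Finset.sum_congr rfl fun B hB => ?_
      have hB' : B ⊆ E.erase e := Finset.mem_powerset.mp hB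
      have heB : e ∉ B := fun h => hne (hB' h)
      have hcard : (insert e B).card = B.card + 1 := Finset.card_insert_of_notMem heB
      rw [key B hB, hEins, hreq, hcard,
        show r E - (r B + 1) = r E - 1 - (r B + 1 - 1) by omega,
        show B.card + 1 - (r B + 1) = B.card - (r B + 1 - 1) by omega]
    rw [h1st, h2nd]
    ring
end

section
/- (Basis-activity expansion of the Tutte polynomial.) Let M be a matroid with finite ground set E, rank function r, and rank ρ = r(E), and fix a linear order < on E. For a basis B of M (a subset with |B| = r(B) = ρ), call an element e ∉ B externally active with respect to B if r({f ∈ B : f > e} ∪ {e}) = r({f ∈ B : f > e}), and call an element e ∈ B internally active with respect to B if r((B∖{e}) ∪ {f ∈ E : f < e}) = r(B∖{e}). Let i(B) and e(B) denote the numbers of internally and externally active elements with respect to B. Then T(M;x,y) = Σ_{B basis of M} x^{i(B)} y^{e(B)} in ℤ[x,y]. -/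
open scoped BigOperators

namespace TutteAux

variable {α : Type} [LinearOrder α] {r : Finset α → ℕ}

theorem r_empty (hr : IsRankFn r) : r ∅ = 0 :=
  Nat.le_zero.mp (by simpa using hr.1 ∅)

theorem r_insert_le (hr : IsRankFn r) (Z : Finset α) (a : α) :
    r (insert a Z) ≤ r Z + 1 := by
  have h := hr.2.2 Z {a}
  have h1 : r {a} ≤ 1 := by simpa using hr.1 {a}
  have h2 : Z ∪ {a} = insert a Z := by
    ext x; simp [or_comm]
  have h3 : r (insert a Z) ≤ r (Z ∪ {a}) + r (Z ∩ {a}) := by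
    rw [h2]; omega
  omega

theorem r_insert_ge (hr : IsRankFn r) (Z : Finset α) (a : α) :
    r Z ≤ r (insert a Z) := hr.2.1 _ _ (Finset.subset_insert _ _)

theorem r_union_card_le (hr : IsRankFn r) (X Y : Finset α) :
    r (X ∪ Y) ≤ r X + Y.card := by
  classical
  induction Y using Finset.induction with
  | empty => simp
  | @insert a Y ha ih =>
    have h1 : X ∪ insert a Y = insert a (X ∪ Y) := by
      ext x; simp [or_assoc, or_left_comm]
    rw [h1, Finset.card_insert_of_notMem ha]
    have := r_insert_le hr (X ∪ Y) a
    omega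

theorem sp_mono (hr : IsRankFn r) {X Y : Finset α} {e : α}
    (h : r (insert e X) = r X) (hXY : X ⊆ Y) : r (insert e Y) = r Y := by
  have hsub := hr.2.2 (insert e X) Y
  have h1 : insert e X ∪ Y = insert e Y := by
    rw [Finset.insert_union, Finset.union_eq_right.mpr hXY]
  have h2 : r X ≤ r (insert e X ∩ Y) :=
    hr.2.1 _ _ (Finset.subset_inter (Finset.subset_insert _ _) hXY)
  have h3 : r Y ≤ r (insert e Y) := r_insert_ge hr Y e
  rw [h1] at hsub
  omega

theorem sp_union (hr : IsRankFn r) {X T : Finset α}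
    (h : ∀ t ∈ T, r (insert t X) = r X) : r (X ∪ T) = r X := by
  classical
  induction T using Finset.induction with
  | empty => simp
  | @insert a T ha ih =>
    have haX := h a (Finset.mem_insert_self _ _)
    have ih' := ih (fun t ht => h t (Finset.mem_insert_of_mem ht))
    have h1 : X ∪ insert a T = insert a (X ∪ T) := by
      ext x; simp [or_assoc, or_left_comm]
    rw [h1, sp_mono hr haX Finset.subset_union_left]
    exact ih'


def prio (A : Finset α) (f e : α) : Prop :=
  (f ∈ A ∧ e ∉ A) ∨ (f ∈ A ∧ e ∈ A ∧ e < f) ∨ (f ∉ A ∧ e ∉ A ∧ f < e)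

instance (A : Finset α) (f e : α) : Decidable (prio A f e) := by
  unfold prio; infer_instance

theorem prio_irrefl (A : Finset α) (e : α) : ¬ prio A e e := by
  simp [prio]

theorem prio_trans {A : Finset α} {a b c : α}
    (h1 : prio A a b) (h2 : prio A b c) : prio A a c := by
  unfold prio at *
  by_cases ha : a ∈ A <;> by_cases hb : b ∈ A <;> by_cases hc : c ∈ A <;>
    simp_all <;> exact lt_trans ‹_› ‹_›

theorem prio_asymm {A : Finset α} {a b : α}
    (h1 : prio A a b) : ¬ prio A b a := fun h2 =>
  prio_irrefl A a (prio_trans h1 h2)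

theorem prio_total {A : Finset α} {a b : α} (h : a ≠ b) :
    prio A a b ∨ prio A b a := by
  unfold prio
  by_cases ha : a ∈ A <;> by_cases hb : b ∈ A <;>
    rcases lt_or_gt_of_ne h with h' | h' <;> tauto

def Ge (E A : Finset α) (e : α) : Finset α := E.filter (fun f => prio A f e)

def greedy (E : Finset α) (r : Finset α → ℕ) (A : Finset α) : Finset α :=
  E.filter (fun e => r (insert e (Ge E A e)) ≠ r (Ge E A e))

theorem exists_prio_min {A Q : Finset α} (hne : Q.Nonempty) :
    ∃ e ∈ Q, ∀ f ∈ Q, f ≠ e → prio A f e := by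
  classical
  by_cases h : (Q \ A).Nonempty
  · refine ⟨(Q \ A).max' h, Finset.sdiff_subset ((Q \ A).max'_mem h), ?_⟩
    intro f hf hfe
    set e := (Q \ A).max' h with he
    have heA : e ∉ A := (Finset.mem_sdiff.mp ((Q \ A).max'_mem h)).2
    by_cases hfA : f ∈ A
    · exact Or.inl ⟨hfA, heA⟩
    · have : f ∈ Q \ A := Finset.mem_sdiff.mpr ⟨hf, hfA⟩
      have := (Q \ A).le_max' f this
      exact Or.inr (Or.inr ⟨hfA, heA, lt_of_le_of_ne this hfe⟩)
  · have hQA : ∀ x ∈ Q, x ∈ A := by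
      intro x hx
      by_contra hxA
      exact h ⟨x, Finset.mem_sdiff.mpr ⟨hx, hxA⟩⟩
    refine ⟨Q.min' hne, Q.min'_mem hne, ?_⟩
    intro f hf hfe
    exact Or.inr (Or.inl ⟨hQA f hf, hQA _ (Q.min'_mem hne),
      lt_of_le_of_ne (Q.min'_le f hf) (fun hh => hfe hh.symm)⟩)

theorem greedy_invariant (hr : IsRankFn r) (E A : Finset α) :
    ∀ Q : Finset α, Q ⊆ E → (∀ x ∈ Q, ∀ y ∈ E, prio A y x → y ∈ Q) →
      (greedy E r A ∩ Q).card = r Q ∧ r (greedy E r A ∩ Q) = r Q := by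
  classical
  intro Q
  induction Q using Finset.strongInduction with
  | _ Q ih =>
    intro hQE hup
    rcases Q.eq_empty_or_nonempty with rfl | hne
    · simp [r_empty hr]
    obtain ⟨e, heQ, hmin⟩ := exists_prio_min (A := A) hne
    set D := greedy E r A with hD
    set P := Q.erase e with hP
    have hPQ : P ⊂ Q := Finset.erase_ssubset heQ
    have hPE : P ⊆ E := fun x hx => hQE (Finset.mem_of_mem_erase hx)
    have hupP : ∀ x ∈ P, ∀ y ∈ E, prio A y x → y ∈ P := by
      intro x hx y hy hyx
      have hxQ : x ∈ Q := Finset.mem_of_mem_erase hx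
      have hyQ : y ∈ Q := hup x hxQ y hy hyx
      have hxe : x ≠ e := Finset.ne_of_mem_erase hx
      refine Finset.mem_erase.mpr ⟨?_, hyQ⟩
      intro hye; subst hye
      exact prio_asymm hyx (hmin x hxQ hxe)
    obtain ⟨ihc, ihr⟩ := ih P hPQ hPE hupP
    have hGe : Ge E A e = P := by
      ext f
      simp only [Ge, Finset.mem_filter, hP, Finset.mem_erase]
      constructor
      · intro ⟨hfE, hf⟩
        exact ⟨fun hh => prio_irrefl A e (hh ▸ hf), hup e heQ f hfE hf⟩
      · intro ⟨hfe, hfQ⟩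
        exact ⟨hQE hfQ, hmin f hfQ hfe⟩
    have hQins : Q = insert e P := (Finset.insert_erase heQ).symm
    have heP : e ∉ P := Finset.notMem_erase e Q
    by_cases heD : e ∈ D
    · have hgt : r (insert e (Ge E A e)) ≠ r (Ge E A e) :=
        (Finset.mem_filter.mp heD).2
      rw [hGe] at hgt
      have hle := r_insert_le hr P e
      have hge := r_insert_ge hr P e
      have hrins : r (insert e P) = r P + 1 := by omega
      have hDQ : D ∩ Q = insert e (D ∩ P) := by
        rw [hQins]
        ext x
        simp only [Finset.mem_inter, Finset.mem_insert]
        constructor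
        · rintro ⟨hxD, hx | hx⟩
          · exact Or.inl hx
          · exact Or.inr ⟨hxD, hx⟩
        · rintro (rfl | ⟨hxD, hx⟩)
          · exact ⟨heD, Or.inl rfl⟩
          · exact ⟨hxD, Or.inr hx⟩
      have heDP : e ∉ D ∩ P := fun hh => heP (Finset.mem_inter.mp hh).2
      have hcard : (insert e (D ∩ P)).card = r P + 1 := by
        rw [Finset.card_insert_of_notMem heDP, ihc]
      -- rank lower bound via submodularity
      have hsub := hr.2.2 (insert e (D ∩ P)) P
      have hu : insert e (D ∩ P) ∪ P = insert e P := by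
        rw [Finset.insert_union, Finset.union_eq_right.mpr Finset.inter_subset_right]
      have hi : r (D ∩ P) ≤ r (insert e (D ∩ P) ∩ P) :=
        hr.2.1 _ _ (Finset.subset_inter (Finset.subset_insert _ _)
          Finset.inter_subset_right)
      rw [hu] at hsub
      have hub : r (insert e (D ∩ P)) ≤ r P + 1 :=
        le_trans (hr.1 _) (le_of_eq hcard)
      have hrDP : r (insert e (D ∩ P)) = r P + 1 := by omega
      have hrQ : r Q = r P + 1 := by rw [hQins, hrins]
      rw [hDQ, hrQ]
      exact ⟨hcard, hrDP⟩
    · have heq : r (insert e (Ge E A e)) = r (Ge E A e) := by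
        by_contra hh
        exact heD (Finset.mem_filter.mpr ⟨hQE heQ, hh⟩)
      rw [hGe] at heq
      have hDQ : D ∩ Q = D ∩ P := by
        rw [hQins]
        ext x
        simp only [Finset.mem_inter, Finset.mem_insert]
        constructor
        · rintro ⟨hxD, rfl | hx⟩
          · exact absurd hxD heD
          · exact ⟨hxD, hx⟩
        · rintro ⟨hxD, hx⟩
          exact ⟨hxD, Or.inr hx⟩
      have hrQ : r Q = r P := by rw [hQins, heq]
      rw [hDQ, hrQ]
      exact ⟨ihc, ihr⟩

def IAf (E : Finset α) (r : Finset α → ℕ) (B : Finset α) : Finset α :=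
  B.filter (fun e => r (B.erase e ∪ E.filter (fun f => f < e)) = r (B.erase e))

def EAf (E : Finset α) (r : Finset α → ℕ) (B : Finset α) : Finset α :=
  (E \ B).filter (fun e =>
    r (insert e (B.filter (fun f => e < f))) = r (B.filter (fun f => e < f)))

def IsBasis (E : Finset α) (r : Finset α → ℕ) (B : Finset α) : Prop :=
  B ⊆ E ∧ B.card = r E ∧ r B = r E

def Fib (E : Finset α) (r : Finset α → ℕ) (A B : Finset α) : Prop :=
  B \ A ⊆ IAf E r B ∧ A \ B ⊆ EAf E r B

theorem greedy_subset (E : Finset α) (r : Finset α → ℕ) (A : Finset α) :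
    greedy E r A ⊆ E := Finset.filter_subset _ _

theorem greedy_isBasis (hr : IsRankFn r) (E A : Finset α) :
    IsBasis E r (greedy E r A) := by
  have h := greedy_invariant hr E A E (Finset.Subset.refl E)
    (fun x _ y hy _ => hy)
  have hDE : greedy E r A ∩ E = greedy E r A :=
    Finset.inter_eq_left.mpr (greedy_subset E r A)
  rw [hDE] at h
  exact ⟨greedy_subset E r A, h.1, h.2⟩

theorem greedy_spans (hr : IsRankFn r) (E A : Finset α) {e : α}
    (heE : e ∈ E) (heD : e ∉ greedy E r A) :
    r (insert e (greedy E r A ∩ Ge E A e)) = r (greedy E r A ∩ Ge E A e) := by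
  have hGE : Ge E A e ⊆ E := Finset.filter_subset _ _
  have hup : ∀ x ∈ Ge E A e, ∀ y ∈ E, prio A y x → y ∈ Ge E A e := by
    intro x hx y hy hyx
    exact Finset.mem_filter.mpr ⟨hy, prio_trans hyx (Finset.mem_filter.mp hx).2⟩
  obtain ⟨hc, hrk⟩ := greedy_invariant hr E A (Ge E A e) hGE hup
  have heq : r (insert e (Ge E A e)) = r (Ge E A e) := by
    by_contra hh
    exact heD (Finset.mem_filter.mpr ⟨heE, hh⟩)
  have h1 : r (insert e (greedy E r A ∩ Ge E A e)) ≤ r (insert e (Ge E A e)) :=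
    hr.2.1 _ _ (Finset.insert_subset_insert _ Finset.inter_subset_right)
  have h2 := r_insert_ge hr (greedy E r A ∩ Ge E A e) e
  omega

theorem exists_basis_fib (hr : IsRankFn r) (E A : Finset α) (hA : A ⊆ E) :
    ∃ B, IsBasis E r B ∧ Fib E r A B := by
  classical
  refine ⟨greedy E r A, greedy_isBasis hr E A, ?_, ?_⟩
  · -- internal: B \ A ⊆ IAf
    intro e he
    set B := greedy E r A with hB
    obtain ⟨heB, heA⟩ := Finset.mem_sdiff.mp he
    have heE : e ∈ B → e ∈ E := fun h => greedy_subset E r A h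
    refine Finset.mem_filter.mpr ⟨heB, ?_⟩
    apply sp_union hr
    intro g hg
    obtain ⟨hgE, hge⟩ := Finset.mem_filter.mp hg
    by_cases hgB : g ∈ B
    · have : g ∈ B.erase e := Finset.mem_erase.mpr ⟨ne_of_lt hge, hgB⟩
      rw [Finset.insert_eq_self.mpr this]
    · have hsp := greedy_spans hr E A hgE hgB
      apply sp_mono hr hsp
      intro f hf
      obtain ⟨hfB, hfGe⟩ := Finset.mem_inter.mp hf
      have hfprio := (Finset.mem_filter.mp hfGe).2
      refine Finset.mem_erase.mpr ⟨?_, hfB⟩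
      rintro rfl
      -- prio A e g with e ∉ A and g < e : impossible
      rcases hfprio with ⟨h1, _⟩ | ⟨h1, _⟩ | ⟨_, _, h3⟩
      · exact heA h1
      · exact heA h1
      · exact absurd hge (not_lt.mpr (le_of_lt h3))
  · -- external: A \ B ⊆ EAf
    intro e he
    set B := greedy E r A with hB
    obtain ⟨heA, heB⟩ := Finset.mem_sdiff.mp he
    have heE : e ∈ E := hA heA
    refine Finset.mem_filter.mpr ⟨Finset.mem_sdiff.mpr ⟨heE, heB⟩, ?_⟩
    have hsp := greedy_spans hr E A heE heB
    apply sp_mono hr hsp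
    intro f hf
    obtain ⟨hfB, hfGe⟩ := Finset.mem_inter.mp hf
    have hfprio := (Finset.mem_filter.mp hfGe).2
    refine Finset.mem_filter.mpr ⟨hfB, ?_⟩
    rcases hfprio with ⟨_, h2⟩ | ⟨_, _, h3⟩ | ⟨_, h2, _⟩
    · exact absurd heA h2
    · exact h3
    · exact absurd heA h2

theorem fib_key (hr : IsRankFn r) (E A B B' : Finset α) (e : α)
    (hB : IsBasis E r B) (hB' : IsBasis E r B')
    (hFB : Fib E r A B) (hFB' : Fib E r A B')
    (heB : e ∈ B) (heB' : e ∉ B')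
    (hmax : ∀ f, e < f → (f ∈ B ↔ f ∈ B')) : False := by
  classical
  have hcard : (B.erase e).card + 1 = B.card := by
    rw [Finset.card_erase_of_mem heB]
    have : 0 < B.card := Finset.card_pos.mpr ⟨e, heB⟩
    omega
  have hre : r (B.erase e) + 1 ≤ r E := by
    have h1 := hr.1 (B.erase e)
    have h2 := hB.2.1
    omega
  by_cases heA : e ∈ A
  · have heEA : e ∈ EAf E r B' := hFB'.2 (Finset.mem_sdiff.mpr ⟨heA, heB'⟩)
    have hsp := (Finset.mem_filter.mp heEA).2
    have hmono : B'.filter (fun f => e < f) ⊆ B.erase e := by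
      intro f hf
      obtain ⟨hfB', hef⟩ := Finset.mem_filter.mp hf
      exact Finset.mem_erase.mpr ⟨(ne_of_lt hef).symm, (hmax f hef).mpr hfB'⟩
    have := sp_mono hr hsp hmono
    rw [Finset.insert_erase heB] at this
    rw [hB.2.2] at this
    omega
  · have heIA : e ∈ IAf E r B := hFB.1 (Finset.mem_sdiff.mpr ⟨heB, heA⟩)
    have hIA := (Finset.mem_filter.mp heIA).2
    have hsp : ∀ g ∈ B', r (insert g (B.erase e)) = r (B.erase e) := by
      intro g hgB'
      have hge : g ≠ e := fun hh => heB' (hh ▸ hgB')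
      rcases lt_or_gt_of_ne hge with hlt | hgt
      · have hsub : insert g (B.erase e) ⊆ B.erase e ∪ E.filter (fun f => f < e) := by
          intro x hx
          rcases Finset.mem_insert.mp hx with rfl | hx
          · exact Finset.mem_union_right _
              (Finset.mem_filter.mpr ⟨hB'.1 hgB', hlt⟩)
          · exact Finset.mem_union_left _ hx
        have h1 := hr.2.1 _ _ hsub
        have h2 := r_insert_ge hr (B.erase e) g
        omega
      · have hgB : g ∈ B := (hmax g hgt).mpr hgB'
        rw [Finset.insert_eq_self.mpr (Finset.mem_erase.mpr ⟨hge, hgB⟩)]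
    have h1 := sp_union hr hsp
    have h2 : r B' ≤ r (B.erase e ∪ B') := hr.2.1 _ _ Finset.subset_union_right
    rw [hB'.2.2] at h2
    omega

theorem fib_unique (hr : IsRankFn r) (E A B B' : Finset α)
    (hB : IsBasis E r B) (hB' : IsBasis E r B')
    (hFB : Fib E r A B) (hFB' : Fib E r A B') : B = B' := by
  classical
  by_contra hne
  have hΔ : ((B \ B') ∪ (B' \ B)).Nonempty := by
    by_contra hh
    rw [Finset.not_nonempty_iff_eq_empty] at hh
    apply hne
    apply Finset.Subset.antisymm <;> intro x hx <;> by_contra hx'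
    · have hm : x ∈ B \ B' ∪ B' \ B := by
        rw [Finset.mem_union, Finset.mem_sdiff]; tauto
      rw [hh] at hm; exact absurd hm (Finset.notMem_empty x)
    · have hm : x ∈ B \ B' ∪ B' \ B := by
        rw [Finset.mem_union, Finset.mem_sdiff, Finset.mem_sdiff]; tauto
      rw [hh] at hm; exact absurd hm (Finset.notMem_empty x)
  set e := ((B \ B') ∪ (B' \ B)).max' hΔ with he
  have heΔ := ((B \ B') ∪ (B' \ B)).max'_mem hΔ
  have hmax : ∀ f, e < f → (f ∈ B ↔ f ∈ B') := by
    intro f hf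
    by_contra hh
    have hfΔ : f ∈ (B \ B') ∪ (B' \ B) := by
      rw [Finset.mem_union, Finset.mem_sdiff, Finset.mem_sdiff]
      tauto
    have := ((B \ B') ∪ (B' \ B)).le_max' f hfΔ
    exact absurd this (not_le.mpr hf)
  rcases Finset.mem_union.mp heΔ with h | h
  · obtain ⟨h1, h2⟩ := Finset.mem_sdiff.mp h
    exact fib_key hr E A B B' e hB hB' hFB hFB' h1 h2 hmax
  · obtain ⟨h1, h2⟩ := Finset.mem_sdiff.mp h
    exact fib_key hr E A B' B e hB' hB hFB' hFB h1 h2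
      (fun f hf => (hmax f hf).symm)

theorem basis_sdiff (hr : IsRankFn r) {E B S : Finset α}
    (hB : IsBasis E r B) (hS : S ⊆ B) : r (B \ S) + S.card = r E := by
  have h1 : r (B \ S) ≤ B.card - S.card := by
    have := hr.1 (B \ S)
    rw [Finset.card_sdiff_of_subset hS] at this
    exact this
  have hc := Finset.card_le_card hS
  have h2 : r E ≤ r (B \ S) + S.card := by
    have hu : (B \ S) ∪ S = B := Finset.sdiff_union_of_subset hS
    have := r_union_card_le hr (B \ S) S
    rw [hu, hB.2.2] at this
    exact this
  have h3 := hB.2.1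
  omega

theorem IAf_subset (E : Finset α) (r : Finset α → ℕ) (B : Finset α) :
    IAf E r B ⊆ B := Finset.filter_subset _ _

theorem sp_base (hr : IsRankFn r) {E B : Finset α} {t : α}
    (ht : t ∈ EAf E r B) : r (insert t B) = r B :=
  sp_mono hr (Finset.mem_filter.mp ht).2 (Finset.filter_subset _ _)

theorem sp_single (hr : IsRankFn r) {E B : Finset α} {s t : α}
    (hs : s ∈ IAf E r B) (ht : t ∈ EAf E r B) :
    r (insert t (B.erase s)) = r (B.erase s) := by
  obtain ⟨hsB, hsI⟩ := Finset.mem_filter.mp hs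
  obtain ⟨htEB, htE⟩ := Finset.mem_filter.mp ht
  obtain ⟨htE', htB⟩ := Finset.mem_sdiff.mp htEB
  have hts : t ≠ s := fun hh => htB (hh ▸ hsB)
  rcases lt_or_gt_of_ne hts with hlt | hgt
  · have hsub : insert t (B.erase s) ⊆ B.erase s ∪ E.filter (fun f => f < s) := by
      intro x hx
      rcases Finset.mem_insert.mp hx with rfl | hx
      · exact Finset.mem_union_right _ (Finset.mem_filter.mpr ⟨htE', hlt⟩)
      · exact Finset.mem_union_left _ hx
    have h1 := hr.2.1 _ _ hsub
    have h2 := r_insert_ge hr (B.erase s) t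
    omega
  · apply sp_mono hr htE
    intro f hf
    obtain ⟨hfB, htf⟩ := Finset.mem_filter.mp hf
    exact Finset.mem_erase.mpr ⟨by rintro rfl; exact absurd htf (not_lt.mpr (le_of_lt hgt)), hfB⟩

theorem ea_spanned (hr : IsRankFn r) {E B : Finset α} (hB : IsBasis E r B)
    {t : α} (ht : t ∈ EAf E r B) :
    ∀ S : Finset α, S ⊆ IAf E r B → r (insert t (B \ S)) = r (B \ S) := by
  classical
  intro S
  induction S using Finset.induction with
  | empty => intro _; rw [Finset.sdiff_empty]; exact sp_base hr ht
  | @insert s S' hs ih =>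
    intro hS
    have hsIA : s ∈ IAf E r B := hS (Finset.mem_insert_self _ _)
    have hS' : S' ⊆ IAf E r B := fun x hx => hS (Finset.mem_insert_of_mem hx)
    have ih' := ih hS'
    have hsingle := sp_single hr hsIA ht
    have hsB : s ∈ B := IAf_subset E r B hsIA
    have hS'B : S' ⊆ B := hS'.trans (IAf_subset E r B)
    have hSB : insert s S' ⊆ B := by
      intro x hx
      rcases Finset.mem_insert.mp hx with rfl | hx
      · exact hsB
      · exact hS'B hx
    have hv1 := basis_sdiff hr hB hS'B
    have hv2 : r (B.erase s) + 1 = r E := by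
      have := basis_sdiff hr hB (Finset.singleton_subset_iff.mpr hsB)
      rw [Finset.sdiff_singleton_eq_erase] at this
      simpa using this
    have hv3 := basis_sdiff hr hB hSB
    rw [Finset.card_insert_of_notMem hs] at hv3
    -- submodularity
    have hsub := hr.2.2 (insert t (B \ S')) (insert t (B.erase s))
    have hu : insert t (B \ S') ∪ insert t (B.erase s) = insert t B := by
      ext x
      simp only [Finset.mem_union, Finset.mem_insert, Finset.mem_sdiff,
        Finset.mem_erase]
      constructor
      · rintro ((rfl | ⟨h1, _⟩) | (rfl | ⟨_, h1⟩)) <;> tauto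
      · rintro (rfl | hxB)
        · tauto
        · by_cases hxS : x ∈ S'
          · exact Or.inr (Or.inr ⟨by rintro rfl; exact hs hxS, hxB⟩)
          · exact Or.inl (Or.inr ⟨hxB, hxS⟩)
    have hi : insert t (B \ S') ∩ insert t (B.erase s) = insert t (B \ insert s S') := by
      ext x
      simp only [Finset.mem_inter, Finset.mem_insert, Finset.mem_sdiff,
        Finset.mem_erase]
      constructor
      · rintro ⟨rfl | ⟨h1, h2⟩, h3 | h4⟩ <;> tauto
      · rintro (rfl | ⟨h1, h2⟩)
        · tauto
        · have hxs : x ≠ s := fun hh => h2 (Or.inl hh)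
          have hxS' : x ∉ S' := fun hh => h2 (Or.inr hh)
          tauto
    rw [hu, hi, ih', hsingle] at hsub
    have htB := sp_base hr ht
    rw [hB.2.2] at htB
    rw [htB] at hsub
    have hge : r (B \ insert s S') ≤ r (insert t (B \ insert s S')) :=
      r_insert_ge hr _ t
    omega

theorem fiber_rank (hr : IsRankFn r) {E B S T : Finset α} (hB : IsBasis E r B)
    (hS : S ⊆ IAf E r B) (hT : T ⊆ EAf E r B) :
    r ((B \ S) ∪ T) + S.card = r E := by
  rw [sp_union hr (fun t ht => ea_spanned hr hB (hT ht) S hS)]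
  exact basis_sdiff hr hB (hS.trans (IAf_subset E r B))

instance (E : Finset α) (r : Finset α → ℕ) (A B : Finset α) :
    Decidable (Fib E r A B) := by
  unfold Fib; infer_instance

theorem EAf_disj (E : Finset α) (r : Finset α → ℕ) (B : Finset α) :
    Disjoint (EAf E r B) B := by
  rw [Finset.disjoint_left]
  intro a ha haB
  exact (Finset.mem_sdiff.mp (Finset.filter_subset _ _ ha)).2 haB

theorem EAf_subsetE (E : Finset α) (r : Finset α → ℕ) (B : Finset α) :
    EAf E r B ⊆ E := fun a ha =>
  (Finset.mem_sdiff.mp (Finset.filter_subset _ _ ha)).1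

theorem recover_S {B S T : Finset α} (hS : S ⊆ B) (hT : Disjoint T B) :
    B \ ((B \ S) ∪ T) = S := by
  ext a
  simp only [Finset.mem_sdiff, Finset.mem_union, not_or, not_and, not_not]
  have h1 : a ∈ S → a ∈ B := @hS a
  have h2 : a ∈ T → a ∉ B := fun h => Finset.disjoint_left.mp hT h
  tauto

theorem recover_T {B S T : Finset α} (hT : Disjoint T B) :
    ((B \ S) ∪ T) \ B = T := by
  ext a
  simp only [Finset.mem_sdiff, Finset.mem_union]
  have h2 : a ∈ T → a ∉ B := fun h => Finset.disjoint_left.mp hT h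
  tauto

theorem recover_A {A B : Finset α} : (B \ (B \ A)) ∪ (A \ B) = A := by
  ext a
  simp only [Finset.mem_union, Finset.mem_sdiff, not_and, not_not]
  tauto

theorem sum_pow_card {β : Type} [DecidableEq β] (I : Finset β)
    (z : MvPolynomial (Fin 2) ℤ) :
    ∑ S ∈ I.powerset, z ^ S.card = (z + 1) ^ I.card := by
  have h := Finset.prod_add (fun _ : β => z) (fun _ => (1 : MvPolynomial (Fin 2) ℤ)) I
  simp only [Finset.prod_const, Finset.prod_const_one, one_pow, mul_one] at h
  exact h.symm

theorem fiber_sum (hr : IsRankFn r) {E B : Finset α} (hB : IsBasis E r B) :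
    ∑ A ∈ E.powerset.filter (fun A => Fib E r A B),
      (MvPolynomial.X 0 - 1 : MvPolynomial (Fin 2) ℤ) ^ (r E - r A) *
        (MvPolynomial.X 1 - 1) ^ (A.card - r A)
    = (MvPolynomial.X 0 : MvPolynomial (Fin 2) ℤ) ^ (IAf E r B).card *
        (MvPolynomial.X 1) ^ (EAf E r B).card := by
  have hIB : IAf E r B ⊆ B := IAf_subset E r B
  have himg : E.powerset.filter (fun A => Fib E r A B)
      = ((IAf E r B).powerset ×ˢ (EAf E r B).powerset).image
          (fun p => (B \ p.1) ∪ p.2) := by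
    ext A
    rw [Finset.mem_filter]
    simp only [Finset.mem_filter, Finset.mem_powerset, Finset.mem_image,
      Finset.mem_product, Fib]
    constructor
    · rintro ⟨hAE, hI, hEa⟩
      exact ⟨(B \ A, A \ B), ⟨hI, hEa⟩, recover_A⟩
    · rintro ⟨⟨S, T⟩, ⟨hS, hT⟩, rfl⟩
      have hdisj : Disjoint T B := Finset.disjoint_of_subset_left hT (EAf_disj E r B)
      refine ⟨?_, ?_, ?_⟩
      · intro a ha
        rcases Finset.mem_union.mp ha with h | h
        · exact hB.1 (Finset.mem_sdiff.mp h).1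
        · exact EAf_subsetE E r B (hT h)
      · rw [recover_S (hS.trans hIB) hdisj]; exact hS
      · rw [recover_T hdisj]; exact hT
  have hinj : ∀ p ∈ (IAf E r B).powerset ×ˢ (EAf E r B).powerset,
      ∀ q ∈ (IAf E r B).powerset ×ˢ (EAf E r B).powerset,
      (B \ p.1) ∪ p.2 = (B \ q.1) ∪ q.2 → p = q := by
    rintro ⟨S, T⟩ hp ⟨S', T'⟩ hq h
    obtain ⟨hS, hT⟩ := Finset.mem_product.mp hp
    obtain ⟨hS', hT'⟩ := Finset.mem_product.mp hq
    dsimp only at h hS hT hS' hT'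
    rw [Finset.mem_powerset] at hS hT hS' hT'
    have hdT : Disjoint T B := Finset.disjoint_of_subset_left hT (EAf_disj E r B)
    have hdT' : Disjoint T' B := Finset.disjoint_of_subset_left hT' (EAf_disj E r B)
    have e1 : S = S' := by
      rw [← recover_S (hS.trans hIB) hdT, ← recover_S (hS'.trans hIB) hdT', h]
    have e2 : T = T' := by
      rw [← recover_T (S := S) hdT, ← recover_T (S := S') hdT', h]
    simp [e1, e2]
  rw [himg, Finset.sum_image hinj, Finset.sum_product]
  have hterm : ∀ S ∈ (IAf E r B).powerset, ∀ T ∈ (EAf E r B).powerset,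
      (MvPolynomial.X 0 - 1 : MvPolynomial (Fin 2) ℤ) ^ (r E - r ((B \ S) ∪ T)) *
        (MvPolynomial.X 1 - 1) ^ (((B \ S) ∪ T).card - r ((B \ S) ∪ T))
      = (MvPolynomial.X 0 - 1) ^ S.card * (MvPolynomial.X 1 - 1) ^ T.card := by
    intro S hS T hT
    rw [Finset.mem_powerset] at hS hT
    have hSB : S ⊆ B := hS.trans hIB
    have hdT : Disjoint T B := Finset.disjoint_of_subset_left hT (EAf_disj E r B)
    have hrank := fiber_rank hr hB hS hT
    have hdisj : Disjoint (B \ S) T :=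
      Finset.disjoint_of_subset_right hT
        (Finset.disjoint_of_subset_left Finset.sdiff_subset (EAf_disj E r B).symm)
    have hcardu : ((B \ S) ∪ T).card = (B \ S).card + T.card :=
      Finset.card_union_of_disjoint hdisj
    have hcards : (B \ S).card + S.card = B.card := by
      rw [Finset.card_sdiff_of_subset hSB]
      have := Finset.card_le_card hSB
      omega
    have hBc : B.card = r E := hB.2.1
    have e1 : r E - r ((B \ S) ∪ T) = S.card := by omega
    have e2 : ((B \ S) ∪ T).card - r ((B \ S) ∪ T) = T.card := by omega
    rw [e1, e2]
  rw [Finset.sum_congr rfl (fun S hS => Finset.sum_congr rfl (hterm S hS))]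
  rw [← Finset.sum_mul_sum, sum_pow_card, sum_pow_card]
  ring

theorem fiber_partition (hr : IsRankFn r) (E : Finset α) {A : Finset α}
    (hA : A ⊆ E) (c : MvPolynomial (Fin 2) ℤ) :
    ∑ B ∈ E.powerset.filter (fun B => B.card = r E ∧ r B = r E),
      (if Fib E r A B then c else 0) = c := by
  obtain ⟨B₀, hB₀, hFib₀⟩ := exists_basis_fib hr E A hA
  have hfil : (E.powerset.filter (fun B => B.card = r E ∧ r B = r E)).filter
      (fun B => Fib E r A B) = {B₀} := by
    ext B
    simp only [Finset.mem_filter, Finset.mem_powerset, Finset.mem_singleton]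
    constructor
    · rintro ⟨⟨hBp, hc, hrk⟩, hFb⟩
      exact fib_unique hr E A B B₀ ⟨hBp, hc, hrk⟩ hB₀ hFb hFib₀
    · rintro rfl
      exact ⟨⟨hB₀.1, hB₀.2.1, hB₀.2.2⟩, hFib₀⟩
  rw [← Finset.sum_filter, hfil, Finset.sum_singleton]

end TutteAux

/-- **Basis-activity expansion of the Tutte polynomial.** Let `M = (E, r)` be a matroid with a
linearly ordered ground set.  For a basis `B` (i.e. `|B| = r B = r E`), an element `e ∉ B` of
`E` is externally active if `r({f ∈ B : f > e} ∪ {e}) = r({f ∈ B : f > e})`, and `e ∈ B` is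
internally active if `r((B \ {e}) ∪ {f ∈ E : f < e}) = r(B \ {e})`.  Then
`T(M;x,y) = Σ_{B basis} x^(i B) y^(e B)` where `i B`, `e B` count internally resp. externally
active elements. -/
theorem tutte_basis_activity {α : Type} [LinearOrder α]
    (E : Finset α) (r : Finset α → ℕ) (hr : IsRankFn r) :
    (∑ B ∈ E.powerset,
        (MvPolynomial.X 0 - 1 : MvPolynomial (Fin 2) ℤ) ^ (r E - r B) *
          (MvPolynomial.X 1 - 1) ^ (B.card - r B))
      = ∑ B ∈ E.powerset.filter (fun B => B.card = r E ∧ r B = r E),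
          (MvPolynomial.X 0 : MvPolynomial (Fin 2) ℤ) ^
              (B.filter (fun e =>
                r (B.erase e ∪ E.filter (fun f => f < e)) = r (B.erase e))).card *
            (MvPolynomial.X 1) ^
              ((E \ B).filter (fun e =>
                r (insert e (B.filter (fun f => e < f))) = r (B.filter (fun f => e < f)))).card := by
  open TutteAux in
  calc
    (∑ A ∈ E.powerset,
        (MvPolynomial.X 0 - 1 : MvPolynomial (Fin 2) ℤ) ^ (r E - r A) *
          (MvPolynomial.X 1 - 1) ^ (A.card - r A))
      = ∑ A ∈ E.powerset,
          ∑ B ∈ E.powerset.filter (fun B => B.card = r E ∧ r B = r E),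
            (if TutteAux.Fib E r A B then
              (MvPolynomial.X 0 - 1 : MvPolynomial (Fin 2) ℤ) ^ (r E - r A) *
                (MvPolynomial.X 1 - 1) ^ (A.card - r A) else 0) := by
        refine Finset.sum_congr rfl fun A hA => ?_
        exact (TutteAux.fiber_partition hr E (Finset.mem_powerset.mp hA) _).symm
    _ = ∑ B ∈ E.powerset.filter (fun B => B.card = r E ∧ r B = r E),
          ∑ A ∈ E.powerset,
            (if TutteAux.Fib E r A B then
              (MvPolynomial.X 0 - 1 : MvPolynomial (Fin 2) ℤ) ^ (r E - r A) *
                (MvPolynomial.X 1 - 1) ^ (A.card - r A) else 0) := Finset.sum_comm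
    _ = ∑ B ∈ E.powerset.filter (fun B => B.card = r E ∧ r B = r E),
          (MvPolynomial.X 0 : MvPolynomial (Fin 2) ℤ) ^ (TutteAux.IAf E r B).card *
            (MvPolynomial.X 1) ^ (TutteAux.EAf E r B).card := by
        refine Finset.sum_congr rfl fun B hB => ?_
        rw [← Finset.sum_filter]
        obtain ⟨hBp, hc, hrk⟩ := Finset.mem_filter.mp hB
        exact TutteAux.fiber_sum hr ⟨Finset.mem_powerset.mp hBp, hc, hrk⟩
    _ = _ := by
        simp only [TutteAux.IAf, TutteAux.EAf]
end

section
/- Let G be a simple graph with finite vertex set V and edge set E, and let q be a positive integer. For a function f : V → {1,…,q}, let mono(f) be the number of edges uv ∈ E with f(u) = f(v). For a subset F ⊆ E, let c(F) be the number of connected components of the spanning subgraph (V, F). Then the following identity holds in ℤ[t]: Σ_{f : V → {1,…,q}} t^{mono(f)} = Σ_{F ⊆ E} (t−1)^{|F|} q^{c(F)}. (This is the coboundary-polynomial identity q^{n−r} χ̄(𝒜_G; q, t) = Σ_f t^{h(f)} for the graphical arrangement 𝒜_G; at t = 0 it recovers that the chromatic function of G is the polynomial Σ_{F⊆E} (−1)^{|F|}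 q^{c(F)}.) -/
open Polynomial
open scoped BigOperators

lemma count_aux {V : Type} [Fintype V] [DecidableEq V] (q : ℕ) (F : Finset (Sym2 V)) :
    (Finset.univ.filter (fun f : V → Fin q => ∀ e ∈ F, (e.map f).IsDiag)).card
      = q ^ Nat.card (SimpleGraph.fromEdgeSet (↑F : Set (Sym2 V))).ConnectedComponent := by
  classical
  set G' := SimpleGraph.fromEdgeSet (↑F : Set (Sym2 V)) with hG'
  have walk_eq : ∀ (f : V → Fin q), (∀ e ∈ F, (e.map f).IsDiag) →
      ∀ {v w : V}, G'.Walk v w → f v = f w := by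
    intro f hf v w p
    induction p with
    | nil => rfl
    | cons h p ih =>
        rename_i u x y
        have hadj := ((SimpleGraph.fromEdgeSet_adj _).mp h)
        have := hf _ hadj.1
        rw [Sym2.map_pair_eq, Sym2.mk_isDiag_iff] at this
        exact this.trans ih
  have e : {f : V → Fin q // ∀ e ∈ F, (e.map f).IsDiag}
      ≃ (G'.ConnectedComponent → Fin q) :=
    { toFun := fun f => SimpleGraph.ConnectedComponent.lift f.1
        (fun v w p _ => walk_eq f.1 f.2 p)
      invFun := fun g => ⟨g ∘ G'.connectedComponentMk, by
        intro e he
        induction e with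
        | h u v =>
          rw [Sym2.map_pair_eq, Sym2.mk_isDiag_iff]
          by_cases huv : u = v
          · rw [huv]
          · have hadj : G'.Adj u v := (SimpleGraph.fromEdgeSet_adj _).mpr ⟨he, huv⟩
            simp only [Function.comp_apply]
            rw [SimpleGraph.ConnectedComponent.sound hadj.reachable]⟩
      left_inv := fun f => by
        apply Subtype.ext
        funext v
        rfl
      right_inv := fun g => by
        funext c
        induction c using SimpleGraph.ConnectedComponent.ind with
        | _ v => rfl }
  rw [← Fintype.card_subtype, ← Nat.card_eq_fintype_card, Nat.card_congr e,
    Nat.card_fun, Nat.card_eq_fintype_card (α := Fin q), Fintype.card_fin]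

/-- **The coboundary-polynomial identity for graphs.** Let `G` be a finite simple graph and
`q` a positive integer.  For a coloring `f : V → Fin q` let `mono f` be the number of edges
whose two endpoints receive the same color, and for `F ⊆ E(G)` let `c F` be the number of
connected components of the spanning subgraph `(V, F)`.  Then, in `ℤ[t]`,
`Σ_f t^(mono f) = Σ_{F ⊆ E} (t-1)^|F| q^(c F)`. -/
theorem graph_coboundary_identity {V : Type} [Fintype V] [DecidableEq V]
    (G : SimpleGraph V) [DecidableRel G.Adj] (q : ℕ) (hq : 0 < q) :
    ∑ f : V → Fin q,
        (X : Polynomial ℤ) ^ (G.edgeFinset.filter (fun e => (e.map f).IsDiag)).card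
      = ∑ F ∈ G.edgeFinset.powerset,
          ((X : Polynomial ℤ) - 1) ^ F.card *
            (q : Polynomial ℤ) ^
              Nat.card (SimpleGraph.fromEdgeSet (↑F : Set (Sym2 V))).ConnectedComponent := by
  classical
  have step1 : ∀ f : V → Fin q,
      (X : Polynomial ℤ) ^ (G.edgeFinset.filter (fun e => (e.map f).IsDiag)).card
        = ∑ F ∈ G.edgeFinset.powerset,
            ∏ e ∈ F, (if (e.map f).IsDiag then (X : Polynomial ℤ) - 1 else 0) := by
    intro f
    have h1 : (X : Polynomial ℤ) ^ (G.edgeFinset.filter (fun e => (e.map f).IsDiag)).card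
        = ∏ e ∈ G.edgeFinset,
            ((if (e.map f).IsDiag then (X : Polynomial ℤ) - 1 else 0) + 1) := by
      rw [Finset.prod_congr rfl
        (g := fun e => if (e.map f).IsDiag then (X : Polynomial ℤ) else 1)
        (fun e _ => by by_cases hd : (e.map f).IsDiag <;> simp [hd])]
      rw [Finset.prod_ite, Finset.prod_const, Finset.prod_const, one_pow, mul_one]
    rw [h1, Finset.prod_add]
    refine Finset.sum_congr rfl fun F _ => ?_
    rw [Finset.prod_const_one, mul_one]
  simp_rw [step1]
  rw [Finset.sum_comm]
  refine Finset.sum_congr rfl fun F _ => ?_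
  have h2 : ∀ f : V → Fin q,
      (∏ e ∈ F, (if (e.map f).IsDiag then (X : Polynomial ℤ) - 1 else 0))
        = if (∀ e ∈ F, (e.map f).IsDiag) then ((X : Polynomial ℤ) - 1) ^ F.card else 0 := by
    intro f
    by_cases h : ∀ e ∈ F, (e.map f).IsDiag
    · rw [if_pos h, Finset.prod_congr rfl (fun e he => if_pos (h e he)), Finset.prod_const]
    · rw [if_neg h]
      push_neg at h
      obtain ⟨e, he, hne⟩ := h
      exact Finset.prod_eq_zero he (if_neg hne)
  simp_rw [h2]
  rw [Finset.sum_ite, Finset.sum_const, Finset.sum_const_zero, add_zero,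
    nsmul_eq_mul, count_aux, mul_comm]
  push_cast
  ring
end

section
/- (Characteristic polynomial of the braid arrangement / type A Coxeter arrangement.) Let n ≥ 1 and let 𝒜 be the arrangement in ℚ^n consisting of the hyperplanes {x : x_i = x_j} for 1 ≤ i < j ≤ n. Then, in ℤ[q], Σ_{ℬ ⊆ 𝒜} (−1)^{|ℬ|} q^{n−r(ℬ)} = q(q−1)(q−2)⋯(q−n+1), where r(ℬ) = n − dim ⋂ℬ (every subfamily is central since all hyperplanes are linear). -/
open Polynomial
open scoped BigOperators

/-- The rank `r(B) = d - dim ⋂_{i ∈ B} H i` of a subfamily `B` of an arrangement `H` in `ℚ^d`,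
where the dimension of the (affine-subspace) intersection is the rank of the direction of its
affine span. -/
noncomputable def arrRank {d : ℕ} {I : Type} (H : I → Set (Fin d → ℚ)) (B : Finset I) : ℕ :=
  d - Module.finrank ℚ ↥((affineSpan ℚ (⋂ i ∈ B, H i)).direction)

namespace BraidAux

abbrev BPair (n : ℕ) := {p : Fin n × Fin n // p.1 < p.2}

def brel {n : ℕ} (B : Finset (BPair n)) (i j : Fin n) : Prop :=
  ∃ p ∈ B, p.1.1 = i ∧ p.1.2 = j

noncomputable instance {n : ℕ} (B : Finset (BPair n)) : Fintype (Quot (brel B)) := by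
  classical
  exact Fintype.ofSurjective (Quot.mk _) (fun q => Quot.exists_rep q)

lemma card_quot_le {n : ℕ} (B : Finset (BPair n)) :
    Fintype.card (Quot (brel B)) ≤ n := by
  have := Fintype.card_le_of_surjective (Quot.mk (brel B)) (fun q => Quot.exists_rep q)
  simpa using this

/-- Functions constant on `B`-related coordinates correspond to functions on the quotient. -/
def bEquiv {n : ℕ} (B : Finset (BPair n)) (α : Type*) :
    {f : Fin n → α // ∀ p ∈ B, f p.1.1 = f p.1.2} ≃ (Quot (brel B) → α) where
  toFun f := Quot.lift f.1 (by rintro i j ⟨p, hp, rfl, rfl⟩; exact f.2 p hp)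
  invFun g := ⟨fun i => g (Quot.mk _ i),
    fun p hp => congrArg g (Quot.sound ⟨p, hp, rfl, rfl⟩)⟩
  left_inv f := rfl
  right_inv g := by funext q; induction q using Quot.ind; rfl

/-- The intersection subspace. -/
def VB {n : ℕ} (B : Finset (BPair n)) : Submodule ℚ (Fin n → ℚ) where
  carrier := {x | ∀ p ∈ B, x p.1.1 = x p.1.2}
  add_mem' hx hy p hp := by simp only [Pi.add_apply, hx p hp, hy p hp]
  zero_mem' p hp := rfl
  smul_mem' c x hx p hp := by simp only [Pi.smul_apply, hx p hp]

noncomputable def vEquiv {n : ℕ} (B : Finset (BPair n)) :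
    (Quot (brel B) → ℚ) ≃ₗ[ℚ] VB B where
  toFun g := ⟨fun i => g (Quot.mk _ i),
    fun p hp => congrArg g (Quot.sound ⟨p, hp, rfl, rfl⟩)⟩
  map_add' g h := rfl
  map_smul' c g := rfl
  invFun x := Quot.lift x.1 (by rintro i j ⟨p, hp, rfl, rfl⟩; exact x.2 p hp)
  left_inv g := by funext q; induction q using Quot.ind; rfl
  right_inv x := rfl

lemma rank_eq {n : ℕ} (B : Finset (BPair n)) :
    n - arrRank (fun p : BPair n => {x : Fin n → ℚ | x p.1.1 = x p.1.2}) B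
      = Fintype.card (Quot (brel B)) := by
  have hset : (⋂ p ∈ B, {x : Fin n → ℚ | x p.1.1 = x p.1.2}) = (VB B : Set (Fin n → ℚ)) := by
    ext x
    simp only [Set.mem_iInter, Set.mem_setOf_eq, SetLike.mem_coe]
    rfl
  have hsets : ((VB B).toAffineSubspace : Set (Fin n → ℚ)) = (VB B : Set (Fin n → ℚ)) := by
    ext x; simp [Submodule.mem_toAffineSubspace]
  have hspan : affineSpan ℚ ((VB B : Set (Fin n → ℚ))) = (VB B).toAffineSubspace := by
    rw [← hsets, AffineSubspace.affineSpan_coe]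
  have hfr : Module.finrank ℚ ↥(VB B) = Fintype.card (Quot (brel B)) := by
    rw [← (vEquiv B).finrank_eq, Module.finrank_pi]
  have hle : Module.finrank ℚ ↥(VB B) ≤ n := by
    have := Submodule.finrank_le (VB B)
    simpa [Module.finrank_fin_fun] using this
  unfold arrRank
  rw [hset, hspan, Submodule.toAffineSubspace_direction, hfr.symm,
    Nat.sub_sub_self hle, hfr]

lemma count_eq {n m : ℕ} (B : Finset (BPair n)) :
    Fintype.card {f : Fin n → Fin m // ∀ p ∈ B, f p.1.1 = f p.1.2}
      = m ^ Fintype.card (Quot (brel B)) := by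
  classical
  rw [Fintype.card_congr (bEquiv B (Fin m)), Fintype.card_fun, Fintype.card_fin]

lemma cast_descFactorial (m n : ℕ) :
    ((m.descFactorial n : ℤ)) = ∏ k ∈ Finset.range n, ((m : ℤ) - k) := by
  rcases le_or_gt n m with h | h
  · rw [Nat.descFactorial_eq_prod_range, Nat.cast_prod]
    refine Finset.prod_congr rfl fun k hk => ?_
    have : k ≤ m := le_trans (le_of_lt (Finset.mem_range.mp hk)) h
    rw [Nat.cast_sub this]
  · rw [Nat.descFactorial_eq_zero_iff_lt.mpr h, Nat.cast_zero]
    symm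
    exact Finset.prod_eq_zero (Finset.mem_range.mpr h) (by simp)

lemma eval_eq (n m : ℕ) :
    ∑ B : Finset (BPair n), (-1 : ℤ) ^ B.card * (m : ℤ) ^ (Fintype.card (Quot (brel B)))
      = ∏ k ∈ Finset.range n, ((m : ℤ) - k) := by
  classical
  -- E f : the set of pairs on which f agrees
  set E : (Fin n → Fin m) → Finset (BPair n) :=
    fun f => Finset.univ.filter (fun p => f p.1.1 = f p.1.2) with hE
  have hpow : ∀ B : Finset (BPair n),
      (m : ℤ) ^ (Fintype.card (Quot (brel B)))
        = ∑ f : Fin n → Fin m, (if B ⊆ E f then (1 : ℤ) else 0) := by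
    intro B
    have h1 : ((m ^ Fintype.card (Quot (brel B)) : ℕ) : ℤ)
        = (Fintype.card {f : Fin n → Fin m // ∀ p ∈ B, f p.1.1 = f p.1.2} : ℤ) := by
      rw [count_eq]
    rw [Finset.sum_boole]
    push_cast at h1 ⊢
    rw [h1, Fintype.card_subtype]
    norm_num
    congr 1
    apply Finset.filter_congr
    intro f _
    simp only [hE, Finset.subset_iff, Finset.mem_filter, Finset.mem_univ, true_and]
    constructor
    · rintro h ⟨⟨a,b⟩,hab⟩ hmem
      exact h a b hab hmem
    · rintro h a b hab hmem
      exact h hmem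
  calc ∑ B : Finset (BPair n), (-1 : ℤ) ^ B.card * (m : ℤ) ^ (Fintype.card (Quot (brel B)))
      = ∑ B : Finset (BPair n), ∑ f : Fin n → Fin m,
          (-1 : ℤ) ^ B.card * (if B ⊆ E f then (1 : ℤ) else 0) := by
        refine Finset.sum_congr rfl fun B _ => ?_
        rw [hpow B, Finset.mul_sum]
    _ = ∑ f : Fin n → Fin m, ∑ B : Finset (BPair n),
          (-1 : ℤ) ^ B.card * (if B ⊆ E f then (1 : ℤ) else 0) := Finset.sum_comm
    _ = ∑ f : Fin n → Fin m, (if E f = ∅ then (1 : ℤ) else 0) := by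
        refine Finset.sum_congr rfl fun f _ => ?_
        have : ∑ B : Finset (BPair n), (-1 : ℤ) ^ B.card * (if B ⊆ E f then (1 : ℤ) else 0)
            = ∑ B ∈ (E f).powerset, (-1 : ℤ) ^ B.card := by
          have hps : (E f).powerset = Finset.univ.filter (fun B => B ⊆ E f) := by
            ext B; simp [Finset.mem_powerset]
          rw [hps, Finset.sum_filter]
          refine Finset.sum_congr rfl fun B _ => ?_
          split <;> simp
        rw [this, Finset.sum_powerset_neg_one_pow_card]
    _ = ((Finset.univ.filter (fun f : Fin n → Fin m => Function.Injective f)).card : ℤ) := by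
        rw [Finset.sum_boole]
        norm_num
        congr 1
        apply Finset.filter_congr
        intro f _
        constructor
        · intro h i j hij
          by_contra hne
          rcases lt_or_gt_of_ne hne with hlt | hlt
          · have : (⟨(i, j), hlt⟩ : BPair n) ∈ E f := by
              simp [hE, hij]
            rw [h] at this; exact absurd this (Finset.notMem_empty _)
          · have : (⟨(j, i), hlt⟩ : BPair n) ∈ E f := by
              simp [hE, hij]
            rw [h] at this; exact absurd this (Finset.notMem_empty _)
        · intro hinj
          apply Finset.eq_empty_of_forall_notMem
          intro p hp
          simp only [hE, Finset.mem_filter, Finset.mem_univ, true_and] at hp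
          exact absurd (hinj hp) (ne_of_lt p.2)
    _ = ∏ k ∈ Finset.range n, ((m : ℤ) - k) := by
        rw [← cast_descFactorial]
        congr 1
        rw [← Fintype.card_subtype, Fintype.card_congr (Equiv.subtypeInjectiveEquivEmbedding _ _),
          Fintype.card_embedding_eq, Fintype.card_fin, Fintype.card_fin]

end BraidAux

/-- **Characteristic polynomial of the braid arrangement.** For `n ≥ 1`, the arrangement of
the hyperplanes `x i = x j` (`i < j`) in `ℚ^n` (all subfamilies are central, being linear)
satisfies `Σ_{B} (-1)^|B| q^(n - r B) = q(q-1)⋯(q-n+1)` in `ℤ[q]`. -/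
theorem braid_characteristic (n : ℕ) (hn : 1 ≤ n) :
    ∑ B : Finset {p : Fin n × Fin n // p.1 < p.2},
        (-1 : Polynomial ℤ) ^ B.card *
          (X : Polynomial ℤ) ^
            (n - arrRank (fun p : {p : Fin n × Fin n // p.1 < p.2} =>
              {x : Fin n → ℚ | x p.1.1 = x p.1.2}) B)
      = ∏ k ∈ Finset.range n, ((X : Polynomial ℤ) - (k : Polynomial ℤ)) := by
  apply Polynomial.eq_of_infinite_eval_eq
  refine Set.Infinite.mono ?_
    (Set.infinite_range_of_injective (f := (Nat.cast : ℕ → ℤ)) Nat.cast_injective)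
  rintro _ ⟨m, rfl⟩
  simp only [Set.mem_setOf_eq, eval_finset_sum, eval_prod, eval_mul, eval_pow, eval_neg,
    eval_one, eval_X, eval_sub, eval_natCast]
  have := BraidAux.eval_eq n m
  calc ∑ B : Finset (BraidAux.BPair n), (-1 : ℤ) ^ B.card *
          (m : ℤ) ^ (n - arrRank (fun p : BraidAux.BPair n =>
            {x : Fin n → ℚ | x p.1.1 = x p.1.2}) B)
      = ∑ B : Finset (BraidAux.BPair n),
          (-1 : ℤ) ^ B.card * (m : ℤ) ^ (Fintype.card (Quot (BraidAux.brel B))) := by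
        refine Finset.sum_congr rfl fun B _ => ?_
        rw [BraidAux.rank_eq]
    _ = ∏ k ∈ Finset.range n, ((m : ℤ) - k) := this
end

section
/- (Characteristic polynomial of the type BC Coxeter arrangement.) Let n ≥ 1 and let 𝒜 be the arrangement in ℚ^n consisting of the hyperplanes {x : x_i = x_j} and {x : x_i = −x_j} for 1 ≤ i < j ≤ n, together with the hyperplanes {x : x_i = 0} for 1 ≤ i ≤ n. Then, in ℤ[q], Σ_{ℬ ⊆ 𝒜} (−1)^{|ℬ|} q^{n−r(ℬ)} = (q−1)(q−3)⋯(q−2n+1) = ∏_{i=1}^{n} (q−(2i−1)), where r(ℬ) = n − dim ⋂ℬ (every subfamily is central since all hyperplanes are linear). -/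
open Polynomial
open scoped BigOperators

namespace TypeBC

open Relation
open scoped Classical

abbrev Idx (n : ℕ) : Type :=
  ({p : Fin n × Fin n // p.1 < p.2} ⊕ {p : Fin n × Fin n // p.1 < p.2}) ⊕ Fin n

abbrev Sgn (n : ℕ) : Type := Option (Fin n) × Bool

variable {n : ℕ}

def Sat {R : Type*} [Neg R] [Zero R] (x : Fin n → R) : Idx n → Prop
  | .inl (.inl p) => x p.1.1 = x p.1.2
  | .inl (.inr p) => x p.1.1 = - x p.1.2
  | .inr i => x i = 0

def sval {R : Type*} [Neg R] [Zero R] (x : Fin n → R) : Sgn n → R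
  | (a, true) => a.elim 0 x
  | (a, false) => - a.elim 0 x

@[simp] lemma sval_some_true {R : Type*} [Neg R] [Zero R] (x : Fin n → R) (i : Fin n) :
    sval x (some i, true) = x i := rfl

@[simp] lemma sval_some_false {R : Type*} [Neg R] [Zero R] (x : Fin n → R) (i : Fin n) :
    sval x (some i, false) = - x i := rfl

@[simp] lemma sval_none {R : Type*} [SubtractionMonoid R] (x : Fin n → R) (b : Bool) :
    sval x ((none : Option (Fin n)), b) = 0 := by cases b <;> simp [sval]

inductive Gen (B : Finset (Idx n)) : Sgn n → Sgn n → Prop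
  | eq (p) (h : Sum.inl (Sum.inl p) ∈ B) (b) : Gen B (some p.1.1, b) (some p.1.2, b)
  | opp (p) (h : Sum.inl (Sum.inr p) ∈ B) (b) : Gen B (some p.1.1, b) (some p.1.2, !b)
  | zero (i) (h : Sum.inr i ∈ B) (b) : Gen B (some i, b) (none, b)
  | base (b b') : Gen B ((none : Option (Fin n)), b) (none, b')

def st (B : Finset (Idx n)) : Setoid (Sgn n) := EqvGen.setoid (Gen B)

def Q (B : Finset (Idx n)) := Quotient (st B)

instance (B : Finset (Idx n)) : Finite (Q B) := Quotient.finite _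

abbrev mkQ (B : Finset (Idx n)) (p : Sgn n) : Q B := Quotient.mk (st B) p

lemma mkQ_eq {B : Finset (Idx n)} {p q : Sgn n} (h : EqvGen (Gen B) p q) :
    mkQ B p = mkQ B q := Quotient.sound h

def bflip : Sgn n → Sgn n := fun p => (p.1, !p.2)

lemma gen_bflip {B : Finset (Idx n)} {p q : Sgn n} (h : Gen B p q) :
    Gen B (bflip p) (bflip q) := by
  cases h with
  | eq p h b => exact Gen.eq p h (!b)
  | opp p h b => exact Gen.opp p h (!b)
  | zero i h b => exact Gen.zero i h (!b)
  | base b b' => exact Gen.base (!b) (!b')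

lemma eqvGen_bflip {B : Finset (Idx n)} {p q : Sgn n} (h : EqvGen (Gen B) p q) :
    EqvGen (Gen B) (bflip p) (bflip q) := by
  induction h with
  | rel a b h => exact EqvGen.rel _ _ (gen_bflip h)
  | refl a => exact EqvGen.refl _
  | symm a b _ ih => exact EqvGen.symm _ _ ih
  | trans a b c _ _ ih1 ih2 => exact EqvGen.trans _ _ _ ih1 ih2

def negQ (B : Finset (Idx n)) : Q B → Q B :=
  Quotient.map bflip (fun _ _ h => eqvGen_bflip h)

@[simp] lemma negQ_mk (B : Finset (Idx n)) (p : Sgn n) :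
    negQ B (mkQ B p) = mkQ B (bflip p) := rfl

@[simp] lemma negQ_negQ {B : Finset (Idx n)} (c : Q B) : negQ B (negQ B c) = c := by
  induction c using Quotient.inductionOn with
  | h p => show mkQ B (bflip (bflip p)) = mkQ B p; simp [bflip]

section Group

variable {R : Type*} [AddCommGroup R]

lemma sval_bflip (x : Fin n → R) (p : Sgn n) : sval x (bflip p) = - sval x p := by
  obtain ⟨a, b⟩ := p; cases b <;> simp [sval, bflip]

lemma sat_iff {B : Finset (Idx n)} (x : Fin n → R) :
    (∀ i ∈ B, Sat x i) ↔ ∀ p q : Sgn n, EqvGen (Gen B) p q → sval x p = sval x q := by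
  constructor
  · intro hx p q h
    induction h with
    | rel a b h =>
      cases h with
      | eq p hp b =>
        have hxe : x p.1.1 = x p.1.2 := hx _ hp
        cases b <;> simp [hxe]
      | opp p hp b =>
        have hxe : x p.1.1 = - x p.1.2 := hx _ hp
        cases b <;> simp [hxe]
      | zero i hi b =>
        have hxe : x i = 0 := hx _ hi
        cases b <;> simp [hxe]
      | base b b' => simp
    | refl a => rfl
    | symm a b _ ih => exact ih.symm
    | trans a b c _ _ ih1 ih2 => exact ih1.trans ih2
  · intro h i hi
    match i with
    | .inl (.inl p) =>
      have := h _ _ (EqvGen.rel _ _ (Gen.eq p hi true))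
      simpa [Sat] using this
    | .inl (.inr p) =>
      have := h _ _ (EqvGen.rel _ _ (Gen.opp p hi true))
      simpa [Sat] using this
    | .inr i =>
      have := h _ _ (EqvGen.rel _ _ (Gen.zero i hi true))
      simpa [Sat] using this

end Group

noncomputable def enc : Sgn n → ℕ := fun p => (Fintype.equivFin (Sgn n) p : ℕ)

lemma enc_inj : Function.Injective (enc (n := n)) := fun p q h =>
  (Fintype.equivFin (Sgn n)).injective (Fin.val_injective h)

lemma out_inj {B : Finset (Idx n)} :
    Function.Injective (Quotient.out : Q B → Sgn n) := fun c d h => by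
  rw [← Quotient.out_eq c, ← Quotient.out_eq d, h]

/-- A transversal of the free orbits of the negation involution on classes. -/
noncomputable def TT (B : Finset (Idx n)) : Set (Q B) :=
  {c | negQ B c ≠ c ∧ enc c.out < enc (negQ B c).out}

lemma not_mem_TT {B : Finset (Idx n)} {c : Q B} (h : c ∈ TT B) : negQ B c ∉ TT B := by
  intro h2
  rw [TT, Set.mem_setOf_eq, negQ_negQ] at h2
  exact absurd h.2 (not_lt.mpr (le_of_lt h2.2))

lemma mem_TT_or {B : Finset (Idx n)} {c : Q B} (h : negQ B c ≠ c) :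
    c ∈ TT B ∨ negQ B c ∈ TT B := by
  rcases lt_trichotomy (enc c.out) (enc (negQ B c).out) with hlt | heq | hgt
  · exact Or.inl ⟨h, hlt⟩
  · exact absurd (out_inj (enc_inj heq)).symm h
  · refine Or.inr ⟨?_, ?_⟩
    · intro h2
      rw [negQ_negQ] at h2
      exact h h2.symm
    · rw [negQ_negQ]; exact hgt

section Sol

variable {R : Type*} [AddCommGroup R] {B : Finset (Idx n)}
variable (A : Set R)

lemma sval_mem (h0 : (0:R) ∈ A) (hA : ∀ a ∈ A, -a ∈ A) {x : Fin n → R}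
    (hx : ∀ i, x i ∈ A) (p : Sgn n) : sval x p ∈ A := by
  obtain ⟨a, b⟩ := p
  cases a with
  | none => cases b <;> simpa [sval] using h0
  | some i => cases b with
    | true => exact hx i
    | false => exact hA _ (hx i)

noncomputable def gfun (h : TT B → A) : Q B → R := fun c =>
  if hc : c ∈ TT B then (h ⟨c, hc⟩ : R)
  else if hc' : negQ B c ∈ TT B then -(h ⟨negQ B c, hc'⟩ : R) else 0

lemma gfun_mem (h0 : (0:R) ∈ A) (hA : ∀ a ∈ A, -a ∈ A) (h : TT B → A) (c : Q B) :
    gfun A h c ∈ A := by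
  unfold gfun
  split
  · exact (h _).2
  · split
    · exact hA _ (h _).2
    · exact h0

lemma gfun_fixed (h : TT B → A) {c : Q B} (hfix : negQ B c = c) : gfun A h c = 0 := by
  have h1 : c ∉ TT B := fun hc => hc.1 hfix
  rw [gfun, dif_neg h1, dif_neg]
  rwa [hfix]

lemma gfun_negQ (h : TT B → A) (c : Q B) : gfun A h (negQ B c) = - gfun A h c := by
  by_cases hc : c ∈ TT B
  · have h1 : negQ B c ∉ TT B := not_mem_TT hc
    simp [gfun, negQ_negQ, dif_pos hc, dif_neg h1]
  · by_cases hnc : negQ B c ∈ TT B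
    · simp [gfun, negQ_negQ, dif_pos hnc, dif_neg hc, neg_neg]
    · simp [gfun, negQ_negQ, dif_neg hc, dif_neg hnc, neg_zero]

lemma inv_sval (h : TT B → A) (p : Sgn n) :
    sval (fun i => gfun A h (mkQ B ((some i : Option (Fin n)), true))) p
      = gfun A h (mkQ B p) := by
  obtain ⟨a, b⟩ := p
  cases a with
  | some i =>
    cases b with
    | true => rfl
    | false =>
      show -(gfun A h (mkQ B (some i, true))) = gfun A h (mkQ B (some i, false))
      have h1 : mkQ B ((some i : Option (Fin n)), false)
          = negQ B (mkQ B (some i, true)) := rfl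
      rw [h1, gfun_negQ]
  | none =>
    have hfix : negQ B (mkQ B ((none : Option (Fin n)), b)) = mkQ B (none, b) := by
      show mkQ B ((none : Option (Fin n)), !b) = mkQ B (none, b)
      exact mkQ_eq (EqvGen.rel _ _ (Gen.base (!b) b))
    rw [sval_none]
    exact (gfun_fixed A h hfix).symm

lemma qval_mk {x : Fin n → R} (hx : ∀ i ∈ B, Sat x i) (p : Sgn n) :
    sval x (mkQ B p).out = sval x p :=
  (sat_iff x).mp hx _ _ (Quotient.exact (Quotient.out_eq (mkQ B p)))

lemma qval_negQ {x : Fin n → R} (hx : ∀ i ∈ B, Sat x i) (c : Q B) :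
    sval x (negQ B c).out = - sval x c.out := by
  induction c using Quotient.inductionOn with
  | h p =>
    have h1 : negQ B (Quotient.mk (st B) p) = mkQ B (bflip p) := rfl
    rw [h1]
    show sval x (mkQ B (bflip p)).out = - sval x (mkQ B p).out
    rw [qval_mk hx, qval_mk hx, sval_bflip]

lemma gfun_eq_qval (htf : ∀ v : R, v + v = 0 → v = 0)
    {x : Fin n → R} (hx : ∀ i ∈ B, Sat x i)
    (hm : ∀ c : TT B, sval x (c : Q B).out ∈ A) (c : Q B) :
    gfun A (fun c => ⟨sval x (c : Q B).out, hm c⟩) c = sval x c.out := by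
  by_cases hc : c ∈ TT B
  · rw [gfun, dif_pos hc]
  · by_cases hnc : negQ B c ∈ TT B
    · rw [gfun, dif_neg hc, dif_pos hnc]
      show -(sval x (negQ B c).out) = sval x c.out
      rw [qval_negQ hx, neg_neg]
    · have hfix : negQ B c = c := by
        by_contra hne
        rcases mem_TT_or hne with h | h
        exacts [hc h, hnc h]
      rw [gfun, dif_neg hc, dif_neg hnc]
      have h2 := qval_negQ hx (B := B) c
      rw [hfix] at h2
      have h3 : sval x c.out + sval x c.out = 0 := by
        nth_rewrite 1 [h2]; exact neg_add_cancel _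
      exact (htf _ h3).symm

noncomputable def solEquiv (h0 : (0:R) ∈ A) (hA : ∀ a ∈ A, -a ∈ A)
    (htf : ∀ v : R, v + v = 0 → v = 0) (B : Finset (Idx n)) :
    {x : Fin n → R // (∀ i, x i ∈ A) ∧ ∀ i ∈ B, Sat x i} ≃ (TT B → A) where
  toFun x := fun c => ⟨sval x.1 (c : Q B).out, sval_mem A h0 hA x.2.1 _⟩
  invFun h := ⟨fun i => gfun A h (mkQ B ((some i : Option (Fin n)), true)),
    fun i => gfun_mem A h0 hA h _,
    by
      apply (sat_iff _).mpr
      intro p q hpq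
      rw [inv_sval, inv_sval, mkQ_eq hpq]⟩
  left_inv := by
    rintro ⟨x, hxA, hx⟩
    apply Subtype.ext
    funext i
    exact (by
      rw [gfun_eq_qval A htf hx (fun c => sval_mem A h0 hA hxA _),
        qval_mk hx, sval_some_true] :
      gfun A (fun c => ⟨sval x (c : Q B).out, sval_mem A h0 hA hxA _⟩)
        (mkQ B ((some i : Option (Fin n)), true)) = x i)
  right_inv := by
    intro h
    funext c
    apply Subtype.ext
    show sval (fun i => gfun A h (mkQ B ((some i : Option (Fin n)), true)))
        (c : Q B).out = (h c : R)
    rw [inv_sval, show mkQ B (Quotient.out (c : Q B)) = (c : Q B) from Quotient.out_eq _,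
      gfun, dif_pos c.2]

end Sol

section Rank

variable (n) in
def Hyp : Idx n → Set (Fin n → ℚ) :=
  Sum.elim
    (Sum.elim
      (fun p : {p : Fin n × Fin n // p.1 < p.2} => {x : Fin n → ℚ | x p.1.1 = x p.1.2})
      (fun p : {p : Fin n × Fin n // p.1 < p.2} => {x : Fin n → ℚ | x p.1.1 = - x p.1.2}))
    (fun i : Fin n => {x : Fin n → ℚ | x i = 0})

lemma mem_hyp (x : Fin n → ℚ) (i : Idx n) : x ∈ Hyp n i ↔ Sat x i := by
  rcases i with (p | p) | j <;> exact Iff.rfl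

def VB (B : Finset (Idx n)) : Submodule ℚ (Fin n → ℚ) where
  carrier := {x | ∀ i ∈ B, Sat x i}
  add_mem' := by
    intro a b ha hb i hi
    rcases i with (p | p) | j
    · have h1 : a p.1.1 = a p.1.2 := ha _ hi
      have h2 : b p.1.1 = b p.1.2 := hb _ hi
      show a p.1.1 + b p.1.1 = a p.1.2 + b p.1.2
      rw [h1, h2]
    · have h1 : a p.1.1 = - a p.1.2 := ha _ hi
      have h2 : b p.1.1 = - b p.1.2 := hb _ hi
      show a p.1.1 + b p.1.1 = -(a p.1.2 + b p.1.2)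
      rw [h1, h2]; ring
    · have h1 : a j = 0 := ha _ hi
      have h2 : b j = 0 := hb _ hi
      show a j + b j = 0
      rw [h1, h2]; ring
  zero_mem' := by
    intro i hi
    rcases i with (p | p) | j
    · show (0:ℚ) = 0; rfl
    · show (0:ℚ) = -0; rw [neg_zero]
    · rfl
  smul_mem' := by
    intro c a ha i hi
    rcases i with (p | p) | j
    · have h1 : a p.1.1 = a p.1.2 := ha _ hi
      show c * a p.1.1 = c * a p.1.2
      rw [h1]
    · have h1 : a p.1.1 = - a p.1.2 := ha _ hi
      show c * a p.1.1 = -(c * a p.1.2)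
      rw [h1]; ring
    · have h1 : a j = 0 := ha _ hi
      show c * a j = 0
      rw [h1]; ring

lemma mem_VB {B : Finset (Idx n)} (x : Fin n → ℚ) :
    x ∈ VB B ↔ ∀ i ∈ B, Sat x i := Iff.rfl

lemma coe_VB (B : Finset (Idx n)) : (⋂ i ∈ B, Hyp n i) = (VB B : Set (Fin n → ℚ)) := by
  ext x
  simp only [Set.mem_iInter, SetLike.mem_coe, mem_VB]
  exact forall_congr' fun i => forall_congr' fun hi => mem_hyp x i

lemma sval_add (x y : Fin n → ℚ) (p : Sgn n) :
    sval (x + y) p = sval x p + sval y p := by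
  obtain ⟨a, b⟩ := p
  cases a <;> cases b <;> simp [sval] <;> ring

lemma sval_smul (c : ℚ) (x : Fin n → ℚ) (p : Sgn n) :
    sval (c • x) p = c * sval x p := by
  obtain ⟨a, b⟩ := p
  cases a <;> cases b <;> simp [sval] <;> ring

noncomputable def solQ (B : Finset (Idx n)) : ↥(VB B) ≃ (↥(TT B) → ℚ) :=
  ((Equiv.subtypeEquivRight (fun x =>
      ⟨fun hx => ⟨fun _ => Set.mem_univ _, hx⟩, fun h => h.2⟩)).trans
    (solEquiv (Set.univ : Set ℚ) (Set.mem_univ 0) (fun a _ => Set.mem_univ _)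
      (fun v h => by linarith) B)).trans
  (Equiv.piCongrRight fun _ => Equiv.Set.univ ℚ)

lemma solQ_apply (B : Finset (Idx n)) (x : ↥(VB B)) (c : ↥(TT B)) :
    solQ B x c = sval (x : Fin n → ℚ) (c : Q B).out := rfl

lemma finrank_VB (B : Finset (Idx n)) :
    Module.finrank ℚ ↥(VB B) = Nat.card ↥(TT B) := by
  classical
  haveI : Fintype ↥(TT B) := Fintype.ofFinite _
  have hlin : IsLinearMap ℚ (solQ B) := by
    constructor
    · intro x y
      funext c
      show solQ B (x + y) c = solQ B x c + solQ B y c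
      rw [solQ_apply, solQ_apply, solQ_apply]
      rw [show ((x + y : ↥(VB B)) : Fin n → ℚ) = (x : Fin n → ℚ) + (y : Fin n → ℚ) from rfl]
      exact sval_add _ _ _
    · intro c x
      funext d
      show solQ B (c • x) d = c • solQ B x d
      rw [solQ_apply, solQ_apply, smul_eq_mul]
      rw [show ((c • x : ↥(VB B)) : Fin n → ℚ) = c • (x : Fin n → ℚ) from rfl]
      exact sval_smul _ _ _
  rw [(((solQ B).toLinearEquiv hlin)).finrank_eq, Module.finrank_pi, Nat.card_eq_fintype_card]

lemma rank_sub (B : Finset (Idx n)) :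
    n - arrRank (Hyp n) B = Nat.card ↥(TT B) := by
  have hd : arrRank (Hyp n) B = n - Module.finrank ℚ ↥(VB B) := by
    unfold arrRank
    have hset : ((VB B : Set (Fin n → ℚ))) = ((VB B).toAffineSubspace : Set (Fin n → ℚ)) := by
      ext x
      exact (Submodule.mem_toAffineSubspace).symm
    rw [coe_VB, hset, AffineSubspace.affineSpan_coe _, Submodule.toAffineSubspace_direction]
  have hle : Module.finrank ℚ ↥(VB B) ≤ n := by
    have := Submodule.finrank_le (VB B)
    rwa [Module.finrank_pi, Fintype.card_fin] at this
  rw [hd, finrank_VB] at *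
  omega

end Rank

section Count

variable (m : ℕ)

lemma card_sol (B : Finset (Idx n)) :
    Nat.card {x : Fin n → ℤ //
        (∀ i, x i ∈ (↑(Finset.Icc (-(m:ℤ)) m) : Set ℤ)) ∧ ∀ i ∈ B, Sat x i}
      = (2 * m + 1) ^ Nat.card ↥(TT B) := by
  have h0 : (0:ℤ) ∈ (↑(Finset.Icc (-(m:ℤ)) m) : Set ℤ) := by
    simp
  have hA : ∀ a ∈ (↑(Finset.Icc (-(m:ℤ)) m) : Set ℤ),
      -a ∈ (↑(Finset.Icc (-(m:ℤ)) m) : Set ℤ) := by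
    intro a ha
    simp only [Finset.coe_Icc, Set.mem_Icc] at *
    omega
  rw [Nat.card_congr (solEquiv _ h0 hA (fun v h => by omega) B), Nat.card_fun]
  congr 1
  rw [Nat.card_coe_set_eq, Set.ncard_coe_finset, Int.card_Icc]
  omega

end Count

section Avoid

variable (m : ℕ)

noncomputable def DD (n m : ℕ) : Finset (Fin n → ℤ) := Fintype.piFinset fun _ => Finset.Icc (-(m:ℤ)) m

def ifun (m : ℕ) (fs : (Fin n ↪ Fin m) × (Fin n → Bool)) : Fin n → ℤ := fun i =>
  if fs.2 i then ((fs.1 i : ℕ) + 1 : ℤ) else -((fs.1 i : ℕ) + 1)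

lemma ifun_natAbs (fs : (Fin n ↪ Fin m) × (Fin n → Bool)) (i : Fin n) :
    (ifun m fs i).natAbs = (fs.1 i : ℕ) + 1 := by
  unfold ifun; split <;> omega

lemma ifun_bounds (fs : (Fin n ↪ Fin m) × (Fin n → Bool)) (i : Fin n) :
    -(m:ℤ) ≤ ifun m fs i ∧ ifun m fs i ≤ m := by
  have h1 : (fs.1 i : ℕ) < m := (fs.1 i).2
  unfold ifun; split <;> constructor <;> omega

lemma ifun_ne (fs : (Fin n ↪ Fin m) × (Fin n → Bool)) (i : Fin n) :
    ifun m fs i ≠ 0 := by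
  unfold ifun; split <;> omega

lemma ifun_abs_inj (fs : (Fin n ↪ Fin m) × (Fin n → Bool)) {i j : Fin n}
    (h : (ifun m fs i).natAbs = (ifun m fs j).natAbs) : i = j := by
  apply fs.1.injective
  apply Fin.ext
  rw [ifun_natAbs, ifun_natAbs] at h
  omega

noncomputable def avoidEquiv :
    {x : Fin n → ℤ // (∀ i, -(m:ℤ) ≤ x i ∧ x i ≤ m) ∧ ∀ i : Idx n, ¬ Sat x i}
      ≃ (Fin n ↪ Fin m) × (Fin n → Bool) where
  toFun x :=
    (⟨fun i => ⟨(x.1 i).natAbs - 1, by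
        have h1 := x.2.1 i
        have h2 : x.1 i ≠ 0 := x.2.2 (.inr i)
        omega⟩,
      by
        intro i j hij
        by_contra hne
        have h3 : (x.1 i).natAbs - 1 = (x.1 j).natAbs - 1 := congrArg Fin.val hij
        have h4 : x.1 i ≠ 0 := x.2.2 (.inr i)
        have h5 : x.1 j ≠ 0 := x.2.2 (.inr j)
        have h6 : (x.1 i).natAbs = (x.1 j).natAbs := by omega
        rcases Int.natAbs_eq_natAbs_iff.mp h6 with h7 | h7
        · rcases lt_or_gt_of_ne hne with hlt | hlt
          · exact x.2.2 (.inl (.inl ⟨(i, j), hlt⟩)) h7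
          · exact x.2.2 (.inl (.inl ⟨(j, i), hlt⟩)) h7.symm
        · rcases lt_or_gt_of_ne hne with hlt | hlt
          · exact x.2.2 (.inl (.inr ⟨(i, j), hlt⟩)) h7
          · exact x.2.2 (.inl (.inr ⟨(j, i), hlt⟩)) (show x.1 j = -(x.1 i) by omega)⟩,
      fun i => decide (0 < x.1 i))
  invFun fs := ⟨ifun m fs,
    fun i => ifun_bounds m fs i,
    by
      intro idx
      rcases idx with (p | p) | j
      · intro hsat
        have hs' : ifun m fs p.1.1 = ifun m fs p.1.2 := hsat
        have h6 : (ifun m fs p.1.1).natAbs = (ifun m fs p.1.2).natAbs := by rw [hs']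
        exact absurd (ifun_abs_inj m fs h6) (ne_of_lt p.2)
      · intro hsat
        have hs' : ifun m fs p.1.1 = -(ifun m fs p.1.2) := hsat
        have h6 : (ifun m fs p.1.1).natAbs = (ifun m fs p.1.2).natAbs := by
          rw [hs', Int.natAbs_neg]
        exact absurd (ifun_abs_inj m fs h6) (ne_of_lt p.2)
      · intro hsat
        exact ifun_ne m fs j hsat⟩
  left_inv := by
    rintro ⟨x, hb, hs⟩
    apply Subtype.ext
    funext i
    have hz : x i ≠ 0 := hs (.inr i)
    show (if decide (0 < x i) = true then ((((x i).natAbs - 1 : ℕ) : ℤ) + 1)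
        else -((((x i).natAbs - 1 : ℕ) : ℤ) + 1)) = x i
    by_cases h : 0 < x i
    · rw [if_pos (decide_eq_true h)]
      omega
    · rw [if_neg (by rw [decide_eq_false h]; exact Bool.false_ne_true)]
      omega
  right_inv := by
    rintro ⟨f, s⟩
    refine Prod.ext ?_ ?_
    · apply Function.Embedding.ext
      intro i
      apply Fin.ext
      show (ifun m (f, s) i).natAbs - 1 = (f i : ℕ)
      rw [ifun_natAbs, Nat.add_sub_cancel]
    · funext i
      show decide (0 < ifun m (f, s) i) = s i
      cases hb : s i
      · have h1 : ifun m (f, s) i = -((f i : ℕ) + 1) := by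
          simp [ifun, hb]
        rw [h1]
        exact decide_eq_false (by omega)
      · have h1 : ifun m (f, s) i = ((f i : ℕ) + 1 : ℤ) := by
          simp [ifun, hb]
        rw [h1]
        exact decide_eq_true (by omega)

lemma card_avoid :
    ((DD n m).filter (fun x => ∀ i : Idx n, ¬ Sat x i)).card
      = m.descFactorial n * 2 ^ n := by
  classical
  rw [← Fintype.card_coe]
  rw [Fintype.card_congr ((Equiv.subtypeEquivRight (fun x => by
      simp [DD, Fintype.mem_piFinset, Finset.mem_Icc, Finset.mem_filter,
        forall_and])).trans (avoidEquiv (n := n) m))]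
  simp [Fintype.card_prod, Fintype.card_embedding_eq, Fintype.card_fin,
    Fintype.card_fun, Fintype.card_bool]

end Avoid

lemma count_main (m : ℕ) (hm : n ≤ m) :
    ∑ B : Finset (Idx n), (-1 : ℤ) ^ B.card * (2 * (m:ℤ) + 1) ^ (n - arrRank (Hyp n) B)
      = ∏ k ∈ Finset.range n, ((2 * (m:ℤ) + 1) - (2 * (k:ℤ) + 1)) := by
  classical
  have hcard : ∀ B : Finset (Idx n),
      (2 * (m:ℤ) + 1) ^ (n - arrRank (Hyp n) B)
        = (((DD n m).filter (fun x => ∀ i ∈ B, Sat x i)).card : ℤ) := by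
    intro B
    have h1 := card_sol (n := n) m B
    have h2 : ((DD n m).filter (fun x => ∀ i ∈ B, Sat x i)).card
        = Nat.card {x : Fin n → ℤ //
            (∀ i, x i ∈ (↑(Finset.Icc (-(m:ℤ)) m) : Set ℤ)) ∧ ∀ i ∈ B, Sat x i} := by
      rw [← Nat.card_eq_finsetCard]
      exact Nat.card_congr (Equiv.subtypeEquivRight (fun x => by
        simp [DD, Fintype.mem_piFinset]))
    rw [h2, h1, rank_sub]
    push_cast
    ring
  calc ∑ B : Finset (Idx n), (-1 : ℤ) ^ B.card * (2 * (m:ℤ) + 1) ^ (n - arrRank (Hyp n) B)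
      = ∑ B : Finset (Idx n), ∑ x ∈ DD n m,
          (-1 : ℤ) ^ B.card * (if ∀ i ∈ B, Sat x i then 1 else 0) := by
        apply Finset.sum_congr rfl
        intro B _
        rw [hcard B, Finset.card_filter]
        push_cast
        rw [Finset.mul_sum]
    _ = ∑ x ∈ DD n m, ∑ B : Finset (Idx n),
          (-1 : ℤ) ^ B.card * (if ∀ i ∈ B, Sat x i then 1 else 0) := Finset.sum_comm
    _ = ∑ x ∈ DD n m, (if ∀ i : Idx n, ¬ Sat x i then 1 else 0) := by
        apply Finset.sum_congr rfl
        intro x _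
        set Z : Finset (Idx n) := Finset.univ.filter (fun i => Sat x i) with hZ
        have hsub : ∀ B : Finset (Idx n), (∀ i ∈ B, Sat x i) ↔ B ⊆ Z := by
          intro B
          constructor
          · intro h i hi
            rw [hZ, Finset.mem_filter]
            exact ⟨Finset.mem_univ _, h i hi⟩
          · intro h i hi
            exact (Finset.mem_filter.mp (h hi)).2
        calc ∑ B : Finset (Idx n), (-1 : ℤ) ^ B.card * (if ∀ i ∈ B, Sat x i then 1 else 0)
            = ∑ B : Finset (Idx n), (if B ⊆ Z then ((-1 : ℤ) ^ B.card) else 0) := by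
              apply Finset.sum_congr rfl
              intro B _
              simp only [hsub B, mul_ite, mul_one, mul_zero]
          _ = ∑ B ∈ Finset.univ.filter (· ⊆ Z), (-1 : ℤ) ^ B.card :=
              (Finset.sum_filter _ _).symm
          _ = ∑ B ∈ Z.powerset, (-1 : ℤ) ^ B.card := by
              congr 1
              ext B
              simp [Finset.mem_powerset]
          _ = (if Z = ∅ then 1 else 0) := Finset.sum_powerset_neg_one_pow_card
          _ = (if ∀ i : Idx n, ¬ Sat x i then 1 else 0) := by
              apply if_congr _ rfl rfl
              rw [hZ, Finset.filter_eq_empty_iff]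
              simp
    _ = (((DD n m).filter (fun x => ∀ i : Idx n, ¬ Sat x i)).card : ℤ) := by
        rw [Finset.card_filter]
        push_cast
        rfl
    _ = ((m.descFactorial n * 2 ^ n : ℕ) : ℤ) := by rw [card_avoid]
    _ = ∏ k ∈ Finset.range n, ((2 * (m:ℤ) + 1) - (2 * (k:ℤ) + 1)) := by
        rw [Nat.descFactorial_eq_prod_range]
        have h1 : ∀ k ∈ Finset.range n, ((2 * (m:ℤ) + 1) - (2 * (k:ℤ) + 1))
            = 2 * (((m - k : ℕ) : ℤ)) := by
          intro k hk
          have hkm : k ≤ m := le_trans (le_of_lt (Finset.mem_range.mp hk)) hm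
          rw [Nat.cast_sub hkm]
          ring
        rw [Finset.prod_congr rfl h1, Finset.prod_mul_distrib, Finset.prod_const,
          Finset.card_range]
        push_cast
        ring

end TypeBC

/-- **Characteristic polynomial of the type `BC` Coxeter arrangement.** For `n ≥ 1`, the
arrangement of the hyperplanes `x i = x j`, `x i = -x j` (`i < j`) and `x i = 0` in `ℚ^n`
(all subfamilies are central, being linear) satisfies
`Σ_B (-1)^|B| q^(n - r B) = (q-1)(q-3)⋯(q-2n+1)` in `ℤ[q]`. -/
theorem typeBC_characteristic (n : ℕ) (hn : 1 ≤ n) :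
    ∑ B : Finset (({p : Fin n × Fin n // p.1 < p.2} ⊕ {p : Fin n × Fin n // p.1 < p.2}) ⊕ Fin n),
        (-1 : Polynomial ℤ) ^ B.card *
          (X : Polynomial ℤ) ^
            (n - arrRank
              (Sum.elim
                (Sum.elim
                  (fun p : {p : Fin n × Fin n // p.1 < p.2} => {x : Fin n → ℚ | x p.1.1 = x p.1.2})
                  (fun p : {p : Fin n × Fin n // p.1 < p.2} => {x : Fin n → ℚ | x p.1.1 = - x p.1.2}))
                (fun i : Fin n => {x : Fin n → ℚ | x i = 0})) B)
      = ∏ k ∈ Finset.range n, ((X : Polynomial ℤ) - ((2 * k + 1 : ℕ) : Polynomial ℤ)) := by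
  classical
  have hH : (Sum.elim
      (Sum.elim
        (fun p : {p : Fin n × Fin n // p.1 < p.2} => {x : Fin n → ℚ | x p.1.1 = x p.1.2})
        (fun p : {p : Fin n × Fin n // p.1 < p.2} => {x : Fin n → ℚ | x p.1.1 = - x p.1.2}))
      (fun i : Fin n => {x : Fin n → ℚ | x i = 0})) = TypeBC.Hyp n := rfl
  rw [hH]
  apply Polynomial.eq_of_infinite_eval_eq
  apply Set.infinite_of_injective_forall_mem (f := fun j : ℕ => 2 * ((j : ℤ) + (n : ℤ)) + 1)
  case hi => intro a b hab; dsimp only at hab; omega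
  intro j
  simp only [Set.mem_setOf_eq, Polynomial.eval_finset_sum, Polynomial.eval_prod, eval_mul,
    eval_pow, eval_neg, eval_one, eval_sub, eval_X, eval_natCast]
  have h := TypeBC.count_main (n := n) (j + n) (le_add_self)
  push_cast at h ⊢
  convert h using 2 with B hB
  all_goals ring_nf
end

section
/- (Characteristic polynomial of the type D Coxeter arrangement.) Let n ≥ 1 and let 𝒜 be the arrangement in ℚ^n consisting of the hyperplanes {x : x_i = x_j} and {x : x_i = −x_j} for 1 ≤ i < j ≤ n. Then, in ℤ[q], Σ_{ℬ ⊆ 𝒜} (−1)^{|ℬ|} q^{n−r(ℬ)} = (q−1)(q−3)⋯(q−2n+3)·(q−n+1) = (q−n+1)·∏_{i=1}^{n−1} (q−(2i−1)), where r(ℬ) = n − dim ⋂ℬ (every subfamily is central since all hyperplanes are linear). -/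
open Polynomial
open scoped BigOperators

/-- Normal form for a system of equations `x i = ± x j`. -/
structure NF (n : ℕ) where
  c : Fin n → Fin n
  s : Fin n → ℚ
  idem : ∀ i, c (c i) = c i
  signs : ∀ i, s i = 0 ∨ s i = 1 ∨ s i = -1
  rep : ∀ i, s (c i) = s i ^ 2

namespace NF
variable {n : ℕ}

def Mem (F : NF n) (x : Fin n → ℚ) : Prop := ∀ i, x i = F.s i * x (F.c i)

lemma sq_eq_one_of_ne_zero (F : NF n) {i : Fin n} (h : F.s i ≠ 0) : F.s i ^ 2 = 1 := by
  rcases F.signs i with h0 | h1 | h1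
  · exact absurd h0 h
  · rw [h1]; norm_num
  · rw [h1]; norm_num

/-- Zero out the class of `v`. -/
def zero (F : NF n) (v : Fin n) : NF n where
  c := F.c
  s := fun k => if F.c k = F.c v then 0 else F.s k
  idem := F.idem
  signs := fun i => by
    by_cases h : F.c i = F.c v
    · simp [h]
    · simpa [h] using F.signs i
  rep := fun i => by
    by_cases h : F.c i = F.c v
    · simp [F.idem, h]
    · simp only [F.idem, if_neg h]
      exact F.rep i

lemma mem_zero (F : NF n) (v : Fin n) (x : Fin n → ℚ) :
    (F.zero v).Mem x ↔ F.Mem x ∧ x (F.c v) = 0 := by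
  constructor
  · intro h
    have hv : x (F.c v) = 0 := by
      have := h (F.c v)
      simpa [zero, F.idem] using this
    refine ⟨fun i => ?_, hv⟩
    have := h i
    simp only [zero] at this
    split at this
    · rename_i hc
      rw [this, hc, hv]; ring
    · exact this
  · rintro ⟨hm, hv⟩
    intro i
    simp only [zero]
    split
    · rename_i hc
      rw [hm i, hc, hv]; ring
    · exact hm i

/-- Merge the class of `i` into the class of `j`, with scale `t`. -/
def merge (F : NF n) (i j : Fin n) (t : ℚ) (hij : F.c i ≠ F.c j)
    (hi : F.s (F.c i) = 1) (hj : F.s (F.c j) = 1) (ht : t = 1 ∨ t = -1) : NF n where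
  c := fun k => if F.c k = F.c i then F.c j else F.c k
  s := fun k => if F.c k = F.c i then t * F.s k else F.s k
  idem := fun k => by
    have hcj : F.c (F.c j) = F.c j := F.idem j
    have hji : ¬ (F.c j = F.c i) := fun h => hij h.symm
    by_cases hc : F.c k = F.c i
    · simp only [if_pos hc, hcj, if_neg hji]
    · simp only [if_neg hc, F.idem k, if_neg hc]
  signs := fun k => by
    by_cases hc : F.c k = F.c i
    · simp only [if_pos hc]
      rcases F.signs k with h | h | h <;> rcases ht with ht | ht <;> simp [h, ht]
    · simpa [if_neg hc] using F.signs k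
  rep := fun k => by
    by_cases hc : F.c k = F.c i
    · have hcj : F.c (F.c j) = F.c j := F.idem j
      have hji : ¬ (F.c j = F.c i) := fun h => hij h.symm
      simp only [if_pos hc, hcj, if_neg hji]
      have h1 : F.s k ^ 2 = F.s (F.c i) := by rw [← hc, F.rep k]
      have h2 : t ^ 2 = 1 := by rcases ht with ht | ht <;> simp [ht]
      rw [hj]
      nlinarith [h1, h2, hi]
    · simp only [if_neg hc, F.idem k, if_neg hc]
      exact F.rep k
lemma mem_merge (F : NF n) (i j : Fin n) (t : ℚ) (hij : F.c i ≠ F.c j)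
    (hi : F.s (F.c i) = 1) (hj : F.s (F.c j) = 1) (ht : t = 1 ∨ t = -1) (x : Fin n → ℚ) :
    (F.merge i j t hij hi hj ht).Mem x ↔ F.Mem x ∧ x (F.c i) = t * x (F.c j) := by
  have hji : ¬ (F.c j = F.c i) := fun h => hij h.symm
  constructor
  · intro h
    have hci : x (F.c i) = t * x (F.c j) := by
      have := h (F.c i)
      simp only [merge, F.idem i, if_pos rfl, hi] at this
      simpa using this
    refine ⟨fun k => ?_, hci⟩
    have := h k
    simp only [merge] at this
    split at this
    · rename_i hc
      rw [this, hc, hci]; ring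
    · exact this
  · rintro ⟨hm, hci⟩
    intro k
    simp only [merge]
    split
    · rename_i hc
      rw [hm k, hc, hci]; ring
    · exact hm k

/-- The identity normal form. -/
def one (n : ℕ) : NF n where
  c := id
  s := 1
  idem := fun _ => rfl
  signs := fun _ => Or.inr (Or.inl rfl)
  rep := fun _ => by norm_num

end NF

section Exists

variable {n : ℕ} {I : Type*} [DecidableEq I]

theorem exists_nf (a b : I → Fin n) (ε : I → ℚ) (hε : ∀ e, ε e = 1 ∨ ε e = -1)
    (B : Finset I) :
    ∃ F : NF n, ∀ x : Fin n → ℚ,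
      (∀ e ∈ B, x (a e) = ε e * x (b e)) ↔ F.Mem x := by
  classical
  induction B using Finset.induction_on with
  | empty =>
    refine ⟨NF.one n, fun x => ?_⟩
    simp [NF.Mem, NF.one]
  | insert e B hnotmem ih =>
    obtain ⟨F, hF⟩ := ih
    set i := a e with hi'
    set j := b e with hj'
    have hεne : ε e ≠ 0 := by rcases hε e with h | h <;> rw [h] <;> norm_num
    have key : ∃ F' : NF n, ∀ x : Fin n → ℚ,
        F'.Mem x ↔ (F.Mem x ∧ x i = ε e * x j) := by
      by_cases hsi : F.s i = 0
      · by_cases hsj : F.s j = 0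
        · -- both zero: no-op
          refine ⟨F, fun x => ⟨fun h => ⟨h, ?_⟩, fun h => h.1⟩⟩
          have h1 : x i = 0 := by rw [h i, hsi, zero_mul]
          have h2 : x j = 0 := by rw [h j, hsj, zero_mul]
          rw [h1, h2, mul_zero]
        · -- si = 0, sj ≠ 0 : zero out class of j
          refine ⟨F.zero j, fun x => ?_⟩
          rw [F.mem_zero j x]
          constructor
          · rintro ⟨hm, hc⟩
            refine ⟨hm, ?_⟩
            rw [hm i, hsi, zero_mul, hm j, hc, mul_zero, mul_zero]
          · rintro ⟨hm, hc⟩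
            refine ⟨hm, ?_⟩
            have h1 : x i = 0 := by rw [hm i, hsi, zero_mul]
            have hxj : x j = 0 := by
              have h0 : ε e * x j = 0 := by rw [← hc, h1]
              exact (mul_eq_zero.mp h0).resolve_left hεne
            have h2 : F.s j * x (F.c j) = 0 := by rw [← hm j, hxj]
            exact (mul_eq_zero.mp h2).resolve_left hsj
      · by_cases hsj : F.s j = 0
        · -- si ≠ 0, sj = 0 : zero out class of i
          refine ⟨F.zero i, fun x => ?_⟩
          rw [F.mem_zero i x]
          constructor
          · rintro ⟨hm, hc⟩
            refine ⟨hm, ?_⟩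
            rw [hm i, hc, mul_zero, hm j, hsj, zero_mul, mul_zero]
          · rintro ⟨hm, hc⟩
            refine ⟨hm, ?_⟩
            have h2 : x j = 0 := by rw [hm j, hsj, zero_mul]
            have h1 : x i = 0 := by rw [hc, h2, mul_zero]
            have := hm i
            rw [h1] at this
            exact (mul_eq_zero.mp this.symm).resolve_left hsi
        · -- both nonzero
          have sq1i : F.s i * F.s i = 1 := by
            have := F.sq_eq_one_of_ne_zero hsi; nlinarith [this]
          have sq1j : F.s j * F.s j = 1 := by
            have := F.sq_eq_one_of_ne_zero hsj; nlinarith [this]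
          by_cases hcc : F.c i = F.c j
          · by_cases hse : F.s i = ε e * F.s j
            · -- no-op
              refine ⟨F, fun x => ⟨fun h => ⟨h, ?_⟩, fun h => h.1⟩⟩
              rw [h i, h j, hse, hcc]; ring
            · -- zero out class of i
              refine ⟨F.zero i, fun x => ?_⟩
              rw [F.mem_zero i x]
              have hco : F.s i - ε e * F.s j ≠ 0 := fun h => hse (by linarith [h])
              constructor
              · rintro ⟨hm, hc⟩
                refine ⟨hm, ?_⟩
                rw [hm i, hc, mul_zero, hm j, ← hcc, hc]; ring
              · rintro ⟨hm, hc⟩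
                refine ⟨hm, ?_⟩
                have h2 : x j = F.s j * x (F.c i) := by rw [hm j, hcc]
                have h1 : (F.s i - ε e * F.s j) * x (F.c i) = 0 := by
                  linear_combination (-1 : ℚ) * hm i + hc + ε e * h2
                exact (mul_eq_zero.mp h1).resolve_left hco
          · -- merge
            have hi1 : F.s (F.c i) = 1 := by rw [F.rep i]; exact F.sq_eq_one_of_ne_zero hsi
            have hj1 : F.s (F.c j) = 1 := by rw [F.rep j]; exact F.sq_eq_one_of_ne_zero hsj
            have ht : ε e * F.s j * F.s i = 1 ∨ ε e * F.s j * F.s i = -1 := by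
              rcases hε e with h1 | h1 <;> rcases F.signs i with h2 | h2 | h2 <;>
                rcases F.signs j with h3 | h3 | h3 <;>
                  simp [h1, h2, h3] at * <;> norm_num
            refine ⟨F.merge i j (ε e * F.s j * F.s i) hcc hi1 hj1 ht, fun x => ?_⟩
            rw [F.mem_merge i j _ hcc hi1 hj1 ht x]
            constructor
            · rintro ⟨hm, hc⟩
              refine ⟨hm, ?_⟩
              linear_combination hm i + F.s i * hc - ε e * hm j + (ε e * F.s j * x (F.c j)) * sq1i
            · rintro ⟨hm, hc⟩
              refine ⟨hm, ?_⟩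
              linear_combination (-F.s i) * hm i + F.s i * hc + F.s i * ε e * hm j - x (F.c i) * sq1i
    obtain ⟨F', hF'⟩ := key
    refine ⟨F', fun x => ?_⟩
    rw [Finset.forall_mem_insert, hF' x, hF x]
    tauto

end Exists
section RankCount

namespace NF
variable {n : ℕ} (F : NF n)

/-- The set of representatives of nonzero classes. -/
def R : Finset (Fin n) := Finset.univ.filter (fun i => F.c i = i ∧ F.s i = 1)

lemma c_mem_R {i : Fin n} (h : F.s i ≠ 0) : F.c i ∈ F.R := by
  simp only [R, Finset.mem_filter, Finset.mem_univ, true_and]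
  exact ⟨F.idem i, by rw [F.rep i]; exact F.sq_eq_one_of_ne_zero h⟩

lemma R_c_eq {i : Fin n} (h : i ∈ F.R) : F.c i = i := by
  simp only [R, Finset.mem_filter] at h; exact h.2.1

lemma R_s_eq {i : Fin n} (h : i ∈ F.R) : F.s i = 1 := by
  simp only [R, Finset.mem_filter] at h; exact h.2.2

/-- The parametrization of the solution space by the free coordinates. -/
noncomputable def param : ({i // i ∈ F.R} → ℚ) →ₗ[ℚ] (Fin n → ℚ) :=
  LinearMap.pi fun i =>
    F.s i • (if h : F.c i ∈ F.R then LinearMap.proj (⟨F.c i, h⟩ : {i // i ∈ F.R}) else 0)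

lemma param_apply (y : {i // i ∈ F.R} → ℚ) (i : Fin n) :
    F.param y i = F.s i * (if h : F.c i ∈ F.R then y ⟨F.c i, h⟩ else 0) := by
  simp only [param, LinearMap.pi_apply, LinearMap.smul_apply, smul_eq_mul]
  congr 1
  split <;> simp

lemma param_restrict (y : {i // i ∈ F.R} → ℚ) (r : {i // i ∈ F.R}) :
    F.param y r = y r := by
  rw [param_apply]
  have hc : F.c r = (r : Fin n) := F.R_c_eq r.2
  have hs : F.s r = 1 := F.R_s_eq r.2
  have hm : F.c r ∈ F.R := by rw [hc]; exact r.2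
  rw [hs, one_mul, dif_pos hm]
  congr 1
  exact Subtype.ext hc

lemma param_mem (y : {i // i ∈ F.R} → ℚ) : F.Mem (F.param y) := by
  intro i
  rcases eq_or_ne (F.s i) 0 with h | h
  · rw [param_apply, h, zero_mul, zero_mul]
  · have hmem := F.c_mem_R h
    rw [param_apply, dif_pos hmem, param_apply, dif_pos (by rw [F.idem]; exact hmem)]
    rw [F.rep i, F.sq_eq_one_of_ne_zero h, one_mul]
    congr 2
    exact Subtype.ext (F.idem i).symm

lemma param_of_mem {x : Fin n → ℚ} (hx : F.Mem x) :
    F.param (fun r => x r) = x := by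
  funext i
  rw [param_apply]
  rcases eq_or_ne (F.s i) 0 with h | h
  · rw [h, zero_mul]
    rw [hx i, h, zero_mul]
  · rw [dif_pos (F.c_mem_R h)]
    exact (hx i).symm

lemma param_injective : Function.Injective F.param := by
  intro y z h
  funext r
  rw [← F.param_restrict y r, ← F.param_restrict z r, h]

lemma range_param : Set.range F.param = {x | F.Mem x} := by
  ext x
  constructor
  · rintro ⟨y, rfl⟩; exact F.param_mem y
  · intro hx; exact ⟨fun r => x r, F.param_of_mem hx⟩

/-- The solution space as a submodule. -/
noncomputable def space : Submodule ℚ (Fin n → ℚ) := LinearMap.range F.param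

lemma coe_space : (F.space : Set (Fin n → ℚ)) = {x | F.Mem x} := by
  rw [space, LinearMap.coe_range, range_param]

lemma finrank_space : Module.finrank ℚ F.space = F.R.card := by
  rw [space, LinearMap.finrank_range_of_inj F.param_injective,
    Module.finrank_fintype_fun_eq_card, Fintype.card_coe]

lemma R_card_le : F.R.card ≤ n := by
  simpa using Finset.card_le_card (Finset.subset_univ F.R)

end NF

/-- Direction of the affine span of (the coe of) a submodule. -/
lemma direction_affineSpan_submodule {M : Type*} [AddCommGroup M] [Module ℚ M]
    (p : Submodule ℚ M) (S : Set M) (hS : S = ↑p) :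
    (affineSpan ℚ S).direction = p := by
  subst hS
  have h1 : (p : Set M) = ↑(p.toAffineSubspace) := rfl
  rw [h1, AffineSubspace.affineSpan_coe, Submodule.toAffineSubspace_direction]

end RankCount
section Counting

namespace NF
variable {n : ℕ} (F : NF n)

instance : DecidablePred (F.Mem) := fun x =>
  decidable_of_iff (∀ i, x i = F.s i * x (F.c i)) Iff.rfl

lemma card_solutions (T : Finset ℚ) (h0 : (0 : ℚ) ∈ T) (hneg : ∀ t ∈ T, -t ∈ T) :
    ((Fintype.piFinset fun _ : Fin n => T).filter (fun x => F.Mem x)).card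
      = T.card ^ F.R.card := by
  classical
  have : ((Fintype.piFinset fun _ : Fin n => T).filter (fun x => F.Mem x)).card
      = (Fintype.piFinset fun _ : {i // i ∈ F.R} => T).card := by
    apply Finset.card_nbij' (fun x => fun r => x r)
      (fun y => F.param fun r => y r)
    · intro x hx
      simp only [Finset.mem_coe, Finset.mem_filter, Fintype.mem_piFinset] at hx ⊢
      exact fun r => hx.1 r
    · intro y hy
      simp only [Finset.mem_coe, Fintype.mem_piFinset] at hy
      simp only [Finset.mem_coe, Finset.mem_filter, Fintype.mem_piFinset]
      refine ⟨fun i => ?_, F.param_mem _⟩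
      rw [F.param_apply]
      rcases F.signs i with h | h | h
      · rw [h, zero_mul]; exact h0
      · rw [h, one_mul]
        split
        · exact hy _
        · exact h0
      · rw [h]
        split
        · rename_i hh
          have := hneg _ (hy ⟨F.c i, hh⟩)
          simpa using this
        · simpa using h0
    · intro x hx
      simp only [Finset.mem_coe, Finset.mem_filter] at hx
      exact F.param_of_mem hx.2
    · intro y hy
      funext r
      exact F.param_restrict _ r
  rw [this, Fintype.card_piFinset]
  simp [Finset.prod_const, Fintype.card_coe]

end NF

end Counting
section GoodCount

/-- Tuples with pairwise distinct coordinates, also up to sign. -/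
def good (k : ℕ) (x : Fin k → ℚ) : Prop := ∀ i j, i ≠ j → x i ≠ x j ∧ x i ≠ -x j

instance (k : ℕ) : DecidablePred (good k) := fun x =>
  decidable_of_iff (∀ i j, i ≠ j → x i ≠ x j ∧ x i ≠ -x j) Iff.rfl

/-- The number of good tuples with values in `S`. -/
def cnt (k : ℕ) (S : Finset ℚ) : ℕ :=
  ((Fintype.piFinset fun _ : Fin k => S).filter (good k)).card

/-- falling-type product `c(c-2)(c-4)⋯` with `k` factors. -/
def fprod (k c : ℕ) : ℕ := ∏ i ∈ Finset.range k, (c - 2 * i)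

lemma fprod_zero (c : ℕ) : fprod 0 c = 1 := by simp [fprod]

lemma fprod_succ (k c : ℕ) : fprod (k + 1) c = c * fprod k (c - 2) := by
  rw [fprod, Finset.prod_range_succ']
  simp only [mul_zero, Nat.sub_zero, mul_comm]
  congr 1
  refine Finset.prod_congr rfl fun i _ => ?_
  omega

lemma cnt_zero (S : Finset ℚ) : cnt 0 S = 1 := by
  have h : ∀ x ∈ (Fintype.piFinset fun _ : Fin 0 => S), good 0 x :=
    fun x _ i j hij => i.elim0
  rw [cnt, Finset.filter_true_of_mem h]
  simp

lemma cnt_succ (k : ℕ) (S : Finset ℚ) :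
    cnt (k + 1) S = ∑ t ∈ S, cnt k (S \ {t, -t}) := by
  classical
  rw [cnt, Finset.card_eq_sum_card_fiberwise (f := fun x => x 0) (t := S)
    (fun x hx => by
      simp only [Finset.mem_coe, Finset.mem_filter, Fintype.mem_piFinset] at hx
      exact hx.1 0)]
  refine Finset.sum_congr rfl fun t ht => ?_
  rw [cnt]
  apply Finset.card_nbij' (fun x => Fin.tail x) (fun y => Fin.cons t y)
  · intro x hx
    simp only [Finset.mem_coe, Finset.mem_filter, Fintype.mem_piFinset] at hx ⊢
    obtain ⟨⟨hmem, hgood⟩, h0⟩ := hx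
    constructor
    · intro i
      have h := hgood i.succ 0 (Fin.succ_ne_zero i)
      simp only [Finset.mem_sdiff, Finset.mem_insert, Finset.mem_singleton]
      rw [h0] at h
      exact ⟨hmem i.succ, by push_neg; exact ⟨h.1, h.2⟩⟩
    · intro i j hij
      exact hgood i.succ j.succ (fun h => hij (Fin.succ_injective _ h))
  · intro y hy
    simp only [Finset.mem_coe, Finset.mem_filter, Fintype.mem_piFinset] at hy ⊢
    obtain ⟨hmem, hgood⟩ := hy
    have hmem' : ∀ i, y i ∈ S ∧ y i ≠ t ∧ y i ≠ -t := by
      intro i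
      have := hmem i
      simp only [Finset.mem_sdiff, Finset.mem_insert, Finset.mem_singleton] at this
      push_neg at this
      exact ⟨this.1, this.2.1, this.2.2⟩
    refine ⟨⟨fun i => ?_, fun i j hij => ?_⟩, by simp⟩
    · rcases Fin.eq_zero_or_eq_succ i with rfl | ⟨i', rfl⟩
      · simpa using ht
      · simpa using (hmem' i').1
    · rcases Fin.eq_zero_or_eq_succ i with rfl | ⟨i', rfl⟩ <;>
        rcases Fin.eq_zero_or_eq_succ j with rfl | ⟨j', rfl⟩
      · exact absurd rfl hij
      · simp only [Fin.cons_zero, Fin.cons_succ]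
        have := (hmem' j').2
        constructor
        · exact fun h => this.1 h.symm
        · intro h
          exact this.2 (by rw [h]; ring_nf)
      · simp only [Fin.cons_zero, Fin.cons_succ]
        exact (hmem' i').2
      · simp only [Fin.cons_succ]
        exact hgood i' j' (fun h => hij (by rw [h]))
  · intro x hx
    simp only [Finset.mem_coe, Finset.mem_filter] at hx
    rw [← hx.2]
    exact Fin.cons_self_tail x
  · intro y hy
    simp [Fin.tail_cons]

end GoodCount
section PP

def SymF (S : Finset ℚ) : Prop := ∀ t ∈ S, -t ∈ S

lemma symF_sdiff {S : Finset ℚ} (hS : SymF S) (t : ℚ) : SymF (S \ {t, -t}) := by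
  intro u hu
  simp only [Finset.mem_sdiff, Finset.mem_insert, Finset.mem_singleton] at hu ⊢
  push_neg at hu ⊢
  refine ⟨hS u hu.1, fun h => hu.2.2 (by linarith), fun h => hu.2.1 (by linarith)⟩

lemma card_sdiff_pair {S : Finset ℚ} (hS : SymF S) {t : ℚ} (ht : t ∈ S) (ht0 : t ≠ 0) :
    (S \ {t, -t}).card = S.card - 2 := by
  rw [Finset.card_sdiff_of_subset]
  · congr 1
    rw [Finset.card_insert_of_notMem, Finset.card_singleton]
    simp only [Finset.mem_singleton]
    intro h
    exact ht0 (by linarith)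
  · intro u hu
    simp only [Finset.mem_insert, Finset.mem_singleton] at hu
    rcases hu with rfl | rfl
    · exact ht
    · exact hS t ht

lemma cnt_eq_of_not_mem (k : ℕ) :
    ∀ S : Finset ℚ, SymF S → (0 : ℚ) ∉ S → cnt k S = fprod k S.card := by
  induction k with
  | zero => intro S _ _; rw [cnt_zero, fprod_zero]
  | succ k ih =>
    intro S hS h0
    rw [cnt_succ]
    have key : ∀ t ∈ S, cnt k (S \ {t, -t}) = fprod k (S.card - 2) := by
      intro t ht
      have ht0 : t ≠ 0 := fun h => h0 (h ▸ ht)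
      have h0' : (0 : ℚ) ∉ S \ {t, -t} := fun h => h0 (Finset.mem_sdiff.mp h).1
      rw [ih _ (symF_sdiff hS t) h0', card_sdiff_pair hS ht ht0]
    rw [Finset.sum_congr rfl key, Finset.sum_const, smul_eq_mul, fprod_succ]

lemma cnt_eq_of_mem (k : ℕ) :
    ∀ S : Finset ℚ, SymF S → (0 : ℚ) ∈ S →
      cnt k S = fprod k (S.card - 1) + k * fprod (k - 1) (S.card - 1) := by
  induction k with
  | zero => intro S _ _; rw [cnt_zero, fprod_zero]
  | succ k ih =>
    intro S hS h0
    rw [cnt_succ, ← Finset.add_sum_erase S _ h0]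
    have hzz : ({(0 : ℚ), -0} : Finset ℚ) = {0} := by norm_num
    have he : S \ {(0 : ℚ), -0} = S.erase 0 := by rw [hzz, ← Finset.erase_eq]
    have herase_sym : SymF (S.erase 0) := by
      intro u hu
      rw [Finset.mem_erase] at hu ⊢
      exact ⟨fun h => hu.1 (by linarith), hS u hu.2⟩
    have herase0 : (0 : ℚ) ∉ S.erase 0 := Finset.notMem_erase 0 S
    have hc1 : (S.erase 0).card = S.card - 1 := Finset.card_erase_of_mem h0
    have hterm0 : cnt k (S \ {(0:ℚ), -0}) = fprod k (S.card - 1) := by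
      rw [he, cnt_eq_of_not_mem k _ herase_sym herase0, hc1]
    have hterm : ∀ t ∈ S.erase 0,
        cnt k (S \ {t, -t}) = fprod k (S.card - 3) + k * fprod (k - 1) (S.card - 3) := by
      intro t ht
      rw [Finset.mem_erase] at ht
      have h0' : (0 : ℚ) ∈ S \ {t, -t} := by
        simp only [Finset.mem_sdiff, Finset.mem_insert, Finset.mem_singleton]
        push_neg
        exact ⟨h0, fun h => ht.1 h.symm, fun h => ht.1 (by linarith)⟩
      rw [ih _ (symF_sdiff hS t) h0', card_sdiff_pair hS ht.2 ht.1]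
      have e3 : S.card - 2 - 1 = S.card - 3 := by omega
      rw [e3]
    rw [hterm0, Finset.sum_congr rfl hterm, Finset.sum_const, smul_eq_mul, hc1]
    -- arithmetic
    have e0 : S.card - 1 - 2 = S.card - 3 := by omega
    have e1 : fprod (k + 1) (S.card - 1) = (S.card - 1) * fprod k (S.card - 3) := by
      rw [fprod_succ, e0]
    cases k with
    | zero =>
      simp only [Nat.add_sub_cancel, Nat.zero_sub, e1, fprod_zero]
      omega
    | succ k' =>
      have e2 : fprod (k' + 1) (S.card - 1) = (S.card - 1) * fprod k' (S.card - 3) := by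
        rw [fprod_succ, e0]
      simp only [Nat.add_sub_cancel] at *
      rw [e1, e2]
      ring

end PP
section CastId

lemma cast_fprod (k m : ℕ) :
    (fprod k (2 * m) : ℤ) = ∏ i ∈ Finset.range k, ((2 * m + 1 : ℤ) - (2 * i + 1)) := by
  rcases le_or_gt k m with h | h
  · rw [fprod, Nat.cast_prod]
    refine Finset.prod_congr rfl fun i hi => ?_
    rw [Finset.mem_range] at hi
    have h2 : 2 * i ≤ 2 * m := by omega
    push_cast [Nat.cast_sub h2]
    ring
  · rw [fprod, Finset.prod_eq_zero (Finset.mem_range.mpr h) (by omega : 2 * m - 2 * m = 0)]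
    rw [Finset.prod_eq_zero (Finset.mem_range.mpr h) (by ring : (2 * (m:ℤ) + 1) - (2 * m + 1) = 0)]
    simp

lemma final_identity (n m : ℕ) (hn : 1 ≤ n) :
    (fprod n (2 * m) : ℤ) + n * fprod (n - 1) (2 * m)
      = ((2 * m + 1 : ℤ) - ((n - 1 : ℕ) : ℤ)) *
          ∏ k ∈ Finset.range (n - 1), ((2 * m + 1 : ℤ) - ((2 * k + 1 : ℕ) : ℤ)) := by
  obtain ⟨n', rfl⟩ := Nat.exists_eq_add_of_le hn
  simp only [Nat.add_sub_cancel_left] at *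
  have hcast : ∀ k ∈ Finset.range n', ((2 * m + 1 : ℤ) - ((2 * k + 1 : ℕ) : ℤ))
      = ((2 * m + 1 : ℤ) - (2 * (k : ℤ) + 1)) := by intro k _; push_cast; ring
  rw [Finset.prod_congr rfl hcast]
  rw [cast_fprod, cast_fprod]
  rw [show 1 + n' = n' + 1 by ring, Finset.prod_range_succ]
  push_cast
  ring
end CastId
/-- **Characteristic polynomial of the type `D` Coxeter arrangement.** For `n ≥ 1`, the
arrangement of the hyperplanes `x i = x j` and `x i = -x j` (`i < j`) in `ℚ^n`
(all subfamilies are central, being linear) satisfies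
`Σ_B (-1)^|B| q^(n - r B) = (q-1)(q-3)⋯(q-2n+3)·(q-n+1)` in `ℤ[q]`. -/
theorem typeD_characteristic (n : ℕ) (hn : 1 ≤ n) :
    ∑ B : Finset ({p : Fin n × Fin n // p.1 < p.2} ⊕ {p : Fin n × Fin n // p.1 < p.2}),
        (-1 : Polynomial ℤ) ^ B.card *
          (X : Polynomial ℤ) ^
            (n - arrRank
              (Sum.elim
                (fun p : {p : Fin n × Fin n // p.1 < p.2} => {x : Fin n → ℚ | x p.1.1 = x p.1.2})
                (fun p : {p : Fin n × Fin n // p.1 < p.2} => {x : Fin n → ℚ | x p.1.1 = - x p.1.2})) B)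
      = ((X : Polynomial ℤ) - ((n - 1 : ℕ) : Polynomial ℤ)) *
          ∏ k ∈ Finset.range (n - 1), ((X : Polynomial ℤ) - ((2 * k + 1 : ℕ) : Polynomial ℤ)) := by
  classical
  set I' := ({p : Fin n × Fin n // p.1 < p.2} ⊕ {p : Fin n × Fin n // p.1 < p.2}) with hI'
  set H := Sum.elim
      (fun p : {p : Fin n × Fin n // p.1 < p.2} => {x : Fin n → ℚ | x p.1.1 = x p.1.2})
      (fun p : {p : Fin n × Fin n // p.1 < p.2} => {x : Fin n → ℚ | x p.1.1 = - x p.1.2}) with hH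
  set a : I' → Fin n := Sum.elim (fun p => p.1.1) (fun p => p.1.1) with ha
  set b : I' → Fin n := Sum.elim (fun p => p.1.2) (fun p => p.1.2) with hb
  set ε : I' → ℚ := Sum.elim (fun _ => 1) (fun _ => -1) with hε'
  have hε : ∀ e, ε e = 1 ∨ ε e = -1 := by rintro (e | e); exacts [Or.inl rfl, Or.inr rfl]
  have hHmem : ∀ (e : I') (x : Fin n → ℚ), x ∈ H e ↔ x (a e) = ε e * x (b e) := by
    rintro (e | e) x <;> simp [H, a, b, ε]
  choose F hF using exists_nf a b ε hε
  -- the intersection is the solution space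
  have hset : ∀ B : Finset I', (⋂ i ∈ B, H i) = ↑((F B).space) := by
    intro B
    rw [(F B).coe_space]
    ext x
    simp only [Set.mem_iInter, Set.mem_setOf_eq]
    rw [← hF B x]
    exact forall₂_congr fun e _ => hHmem e x
  have hrank : ∀ B : Finset I', n - arrRank H B = (F B).R.card := by
    intro B
    unfold arrRank
    rw [hset B, direction_affineSpan_submodule _ _ rfl, (F B).finrank_space,
      Nat.sub_sub_self ((F B).R_card_le)]
  apply Polynomial.eq_of_infinite_eval_eq
  apply Set.infinite_of_injective_forall_mem
    (f := fun m : ℕ => (2 * m + 1 : ℤ))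
  · intro m₁ m₂ h
    simp only at h
    omega
  · intro m
    simp only [Set.mem_setOf_eq]
    -- the symmetric evaluation set
    set T : Finset ℚ := (Finset.Icc (-(m : ℤ)) (m : ℤ)).image (fun z : ℤ => (z : ℚ)) with hT
    have hTcard : T.card = 2 * m + 1 := by
      rw [hT, Finset.card_image_of_injective _ Int.cast_injective, Int.card_Icc]
      omega
    have h0T : (0 : ℚ) ∈ T := by
      rw [hT, Finset.mem_image]
      exact ⟨0, by simp, by simp⟩
    have hnegT : ∀ t ∈ T, -t ∈ T := by
      intro t ht
      rw [hT, Finset.mem_image] at ht ⊢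
      obtain ⟨z, hz, rfl⟩ := ht
      refine ⟨-z, ?_, by push_cast; ring⟩
      simp only [Finset.mem_Icc] at hz ⊢
      omega
    have hTsym : SymF T := hnegT
    -- evaluate the left side
    rw [Polynomial.eval_finset_sum]
    have hevalL : ∀ B : Finset I',
        Polynomial.eval (2 * (m : ℤ) + 1) ((-1 : Polynomial ℤ) ^ B.card *
          (X : Polynomial ℤ) ^ (n - arrRank H B))
        = (-1 : ℤ) ^ B.card *
            (((Fintype.piFinset fun _ : Fin n => T).filter (fun x => (F B).Mem x)).card : ℤ) := by
      intro B
      rw [Polynomial.eval_mul, Polynomial.eval_pow, Polynomial.eval_pow,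
        Polynomial.eval_neg, Polynomial.eval_one, Polynomial.eval_X]
      congr 1
      rw [(F B).card_solutions T h0T hnegT, hrank B, hTcard]
      push_cast
      ring
    rw [Finset.sum_congr rfl fun B _ => hevalL B]
    -- inclusion-exclusion
    have hfilter : ∀ B : Finset I',
        (Fintype.piFinset fun _ : Fin n => T).filter (fun x => (F B).Mem x)
          = (Fintype.piFinset fun _ : Fin n => T).filter
              (fun x => ∀ e ∈ B, x (a e) = ε e * x (b e)) := by
      intro B
      apply Finset.filter_congr
      intro x _
      rw [← hF B x]
    rw [Finset.sum_congr rfl fun B _ => by rw [hfilter B]]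
    have hIE : ∑ B : Finset I', (-1 : ℤ) ^ B.card *
        (((Fintype.piFinset fun _ : Fin n => T).filter
          (fun x => ∀ e ∈ B, x (a e) = ε e * x (b e))).card : ℤ)
        = (cnt n T : ℤ) := by
      have step1 : ∀ B : Finset I',
          (((Fintype.piFinset fun _ : Fin n => T).filter
            (fun x => ∀ e ∈ B, x (a e) = ε e * x (b e))).card : ℤ)
          = ∑ x ∈ Fintype.piFinset fun _ : Fin n => T,
              if ∀ e ∈ B, x (a e) = ε e * x (b e) then (1 : ℤ) else 0 := by
        intro B
        rw [Finset.card_filter, Nat.cast_sum]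
        exact Finset.sum_congr rfl fun x _ => by split <;> simp
      calc ∑ B : Finset I', (-1 : ℤ) ^ B.card *
            (((Fintype.piFinset fun _ : Fin n => T).filter
              (fun x => ∀ e ∈ B, x (a e) = ε e * x (b e))).card : ℤ)
          = ∑ B : Finset I', ∑ x ∈ Fintype.piFinset fun _ : Fin n => T,
              (-1 : ℤ) ^ B.card *
                (if ∀ e ∈ B, x (a e) = ε e * x (b e) then (1 : ℤ) else 0) := by
            exact Finset.sum_congr rfl fun B _ => by rw [step1, Finset.mul_sum]
        _ = ∑ x ∈ Fintype.piFinset fun _ : Fin n => T, ∑ B : Finset I',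
              (-1 : ℤ) ^ B.card *
                (if ∀ e ∈ B, x (a e) = ε e * x (b e) then (1 : ℤ) else 0) :=
            Finset.sum_comm
        _ = ∑ x ∈ Fintype.piFinset fun _ : Fin n => T,
              (if ∀ e : I', ¬ x (a e) = ε e * x (b e) then (1 : ℤ) else 0) := by
            refine Finset.sum_congr rfl fun x _ => ?_
            have hsub : ∀ B : Finset I', (∀ e ∈ B, x (a e) = ε e * x (b e))
                ↔ B ⊆ Finset.univ.filter (fun e => x (a e) = ε e * x (b e)) := by
              intro B
              constructor
              · intro h e he
                simp only [Finset.mem_filter, Finset.mem_univ, true_and]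
                exact h e he
              · intro h e he
                exact (Finset.mem_filter.mp (h he)).2
            have e1 : ∀ B : Finset I', (-1 : ℤ) ^ B.card *
                (if ∀ e ∈ B, x (a e) = ε e * x (b e) then (1 : ℤ) else 0)
                = if B ⊆ Finset.univ.filter (fun e => x (a e) = ε e * x (b e))
                    then (-1 : ℤ) ^ B.card else 0 := by
              intro B
              rw [if_congr (hsub B) rfl rfl]
              split <;> ring
            rw [Finset.sum_congr rfl fun B _ => e1 B]
            rw [← Finset.sum_filter]
            have e2 : Finset.univ.filter
                (fun B : Finset I' => B ⊆ Finset.univ.filter (fun e => x (a e) = ε e * x (b e)))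
                = (Finset.univ.filter (fun e => x (a e) = ε e * x (b e))).powerset := by
              ext B
              simp [Finset.mem_powerset]
            rw [e2, Finset.sum_powerset_neg_one_pow_card]
            congr 1
            simp [Finset.filter_eq_empty_iff]
        _ = (cnt n T : ℤ) := by
            have hgood : ∀ x : Fin n → ℚ,
                (∀ e : I', ¬ x (a e) = ε e * x (b e)) ↔ good n x := by
              intro x
              constructor
              · intro hng i j hij
                rcases lt_or_gt_of_ne hij with h | h
                · constructor
                  · have := hng (Sum.inl ⟨(i, j), h⟩)
                    simpa [a, b, ε] using this
                  · have := hng (Sum.inr ⟨(i, j), h⟩)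
                    intro hxx
                    exact this (by simp only [a, b, ε, Sum.elim_inr]; rw [hxx]; ring)
                · have h1 := hng (Sum.inl ⟨(j, i), h⟩)
                  have h2 := hng (Sum.inr ⟨(j, i), h⟩)
                  constructor
                  · intro hxx
                    exact h1 (by simp only [a, b, ε, Sum.elim_inl]; rw [hxx]; ring)
                  · intro hxx
                    exact h2 (by simp only [a, b, ε, Sum.elim_inr]; rw [hxx]; ring)
              · rintro hg (p | p)
                · have := (hg p.1.1 p.1.2 (ne_of_lt p.2)).1
                  simpa [a, b, ε] using this
                · have := (hg p.1.1 p.1.2 (ne_of_lt p.2)).2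
                  intro hxx
                  simp only [a, b, ε, Sum.elim_inr] at hxx
                  exact this (by linarith [hxx])
            rw [cnt, Finset.card_filter, Nat.cast_sum]
            refine Finset.sum_congr rfl fun x _ => ?_
            rw [if_congr (hgood x) rfl rfl]
            split <;> simp
    rw [hIE]
    -- count and finish
    rw [cnt_eq_of_mem n T hTsym h0T]
    have h2m : T.card - 1 = 2 * m := by rw [hTcard, Nat.add_sub_cancel]
    rw [h2m]
    rw [Polynomial.eval_mul, Polynomial.eval_sub, Polynomial.eval_X, Polynomial.eval_natCast,
      Polynomial.eval_prod]
    simp only [Polynomial.eval_sub, Polynomial.eval_X, Polynomial.eval_natCast]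
    rw [Nat.cast_add, Nat.cast_mul]
    exact final_identity n m hn
end

section
/- (Characteristic polynomial of the arrangement of all linear hyperplanes over a finite field.) Let s be a prime power, 𝔽_s the field with s elements, n ≥ 1, and let 𝒜(s,n) be the arrangement in 𝔽_s^n consisting of all linear hyperplanes, i.e., all (n−1)-dimensional linear subspaces of 𝔽_s^n. Then, in ℤ[q], Σ_{ℬ ⊆ 𝒜(s,n)} (−1)^{|ℬ|} q^{n−r(ℬ)} = (q−1)(q−s)(q−s²)⋯(q−s^{n−1}), where r(ℬ) = n − dim ⋂ℬ (every subfamily is central since all hyperplanes are linear). -/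
open Polynomial Matrix
open scoped BigOperators

section Aux

variable {F : Type} [Field F] [Fintype F]

/-- A family of vectors of `F^n` spans everything iff its "transpose" family is
linearly independent. -/
lemma span_top_iff_transpose_linearIndependent {n m : ℕ} (x : Fin m → Fin n → F) :
    Submodule.span F (Set.range x) = ⊤ ↔
      LinearIndependent F (fun j : Fin n => fun i : Fin m => x i j) := by
  classical
  have h1 : ((Matrix.of x)ᵀ : Matrix (Fin n) (Fin m) F).rank
      = Module.finrank F (Submodule.span F (Set.range x)) := by
    rw [Matrix.rank_eq_finrank_span_cols]
    rfl
  have h2 : (Matrix.of x : Matrix (Fin m) (Fin n) F).rank = Module.finrank F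
      (Submodule.span F (Set.range (fun j : Fin n => fun i : Fin m => x i j))) := by
    rw [Matrix.rank_eq_finrank_span_cols]
    rfl
  rw [linearIndependent_iff_card_eq_finrank_span, Set.finrank, Fintype.card_fin, ← h2,
    ← Matrix.rank_transpose, h1]
  constructor
  · intro h
    rw [h, finrank_top, Module.finrank_fin_fun]
  · intro h
    exact Submodule.eq_top_of_finrank_eq (by rw [← h, Module.finrank_fin_fun])

/-- The number of spanning `m`-tuples of vectors in `F^n`. -/
lemma card_spanning_tuples (n m : ℕ) (hm : n ≤ m) :
    Nat.card {x : Fin m → Fin n → F // Submodule.span F (Set.range x) = ⊤}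
      = ∏ k ∈ Finset.range n, (Fintype.card F ^ m - Fintype.card F ^ k) := by
  classical
  have e : {x : Fin m → Fin n → F // Submodule.span F (Set.range x) = ⊤}
      ≃ {y : Fin n → Fin m → F // LinearIndependent F y} :=
    { toFun := fun x => ⟨fun j i => x.1 i j, (span_top_iff_transpose_linearIndependent x.1).1 x.2⟩
      invFun := fun y => ⟨fun i j => y.1 j i,
        (span_top_iff_transpose_linearIndependent _).2 y.2⟩
      left_inv := fun _ => rfl
      right_inv := fun _ => rfl }
  rw [Nat.card_congr e,
    card_linearIndependent (K := F) (V := Fin m → F)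
      (by simpa [Module.finrank_fintype_fun_eq_card] using hm)]
  simp only [Module.finrank_fintype_fun_eq_card, Fintype.card_fin]
  rw [Finset.prod_range fun k => Fintype.card F ^ m - Fintype.card F ^ k]

/-- Every proper subspace of `F^n` is contained in a hyperplane. -/
lemma exists_hyperplane_le {n : ℕ} (W : Submodule F (Fin n → F)) (hW : W ≠ ⊤) :
    ∃ W' : Submodule F (Fin n → F), W ≤ W' ∧ Module.finrank F W' = n - 1 := by
  obtain ⟨f, hf, hmap⟩ :=
    Submodule.exists_dual_map_eq_bot_of_lt_top (lt_top_iff_ne_top.2 hW) inferInstance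
  refine ⟨LinearMap.ker f, ?_, ?_⟩
  · intro w hw
    have : f w ∈ W.map f := Submodule.mem_map_of_mem hw
    rw [hmap] at this
    simpa using this
  · have h := Module.Dual.finrank_ker_add_one_of_ne_zero hf
    rw [Module.finrank_fin_fun] at h
    omega

end Aux

/-- **Characteristic polynomial of the arrangement of all linear hyperplanes over a finite
field.** Let `F` be the finite field with `s` elements and let `𝒜` be the set of all linear
hyperplanes of `F^n`, i.e. all `(n-1)`-dimensional linear subspaces.  Every subfamily `ℬ ⊆ 𝒜`
is central, with rank `r(ℬ) = n - dim ⋂ ℬ`.  Then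
`Σ_{ℬ ⊆ 𝒜} (-1)^|ℬ| q^(n - r ℬ) = (q-1)(q-s)(q-s²)⋯(q-s^(n-1))` in `ℤ[q]`. -/
theorem all_linear_hyperplanes_characteristic
    {F : Type} [Field F] [Fintype F] (s : ℕ) (hs : Fintype.card F = s)
    (n : ℕ) (hn : 1 ≤ n)
    (𝒜 : Finset (Submodule F (Fin n → F)))
    (h𝒜 : ∀ W : Submodule F (Fin n → F), W ∈ 𝒜 ↔ Module.finrank F ↥W = n - 1) :
    ∑ B ∈ 𝒜.powerset,
        (-1 : Polynomial ℤ) ^ B.card *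
          (X : Polynomial ℤ) ^ (n - (n - Module.finrank F ↥(B.inf id)))
      = ∏ k ∈ Finset.range n, ((X : Polynomial ℤ) - ((s ^ k : ℕ) : Polynomial ℤ)) := by
  classical
  subst hs
  set q := Fintype.card F with hq
  have hq1 : 1 < q := Fintype.one_lt_card
  -- simplify the exponent
  have hexp : ∀ B ∈ 𝒜.powerset,
      n - (n - Module.finrank F ↥(B.inf id)) = Module.finrank F ↥(B.inf id) := by
    intro B _
    have h1 : Module.finrank F ↥(B.inf id) ≤ n := by
      have := Submodule.finrank_le (B.inf id)
      simpa [Module.finrank_fin_fun] using this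
    omega
  rw [Finset.sum_congr rfl fun B hB => by rw [hexp B hB]]
  -- the key evaluation identity
  have main : ∀ m : ℕ, n ≤ m →
      Polynomial.eval ((q ^ m : ℕ) : ℤ)
          (∑ B ∈ 𝒜.powerset,
            (-1 : Polynomial ℤ) ^ B.card *
              (X : Polynomial ℤ) ^ (Module.finrank F ↥(B.inf id)))
        = Polynomial.eval ((q ^ m : ℕ) : ℤ)
          (∏ k ∈ Finset.range n, ((X : Polynomial ℤ) - ((q ^ k : ℕ) : Polynomial ℤ))) := by
    intro m hm
    set e : ℤ := ((q ^ m : ℕ) : ℤ) with he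
    -- cardinality of tuples lying inside a subspace
    have hcard : ∀ W : Submodule F (Fin n → F),
        ((Fintype.card {x : Fin m → Fin n → F // ∀ i, x i ∈ W} : ℕ) : ℤ)
          = e ^ Module.finrank F ↥W := by
      intro W
      rw [Fintype.card_congr (Equiv.subtypePiEquivPi (p := fun _ (b : Fin n → F) => b ∈ W))]
      rw [Fintype.card_pi]
      simp only [Finset.prod_const, Finset.card_univ, Fintype.card_fin]
      rw [show Fintype.card {b : Fin n → F // b ∈ W} = q ^ Module.finrank F ↥W from
        Module.card_eq_pow_finrank (K := F) (V := ↥W)]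
      push_cast
      rw [he, Nat.cast_pow, ← pow_mul, mul_comm, pow_mul]
    rw [Polynomial.eval_finset_sum]
    have step1 : ∀ B ∈ 𝒜.powerset,
        Polynomial.eval e ((-1 : Polynomial ℤ) ^ B.card *
            (X : Polynomial ℤ) ^ (Module.finrank F ↥(B.inf id)))
          = ∑ x : Fin m → Fin n → F,
              (-1 : ℤ) ^ B.card * (if ∀ i, x i ∈ B.inf id then 1 else 0) := by
      intro B _
      rw [← Finset.mul_sum]
      have hb : (∑ x : Fin m → Fin n → F, (if ∀ i, x i ∈ B.inf id then (1 : ℤ) else 0))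
          = ((Fintype.card {x : Fin m → Fin n → F // ∀ i, x i ∈ B.inf id} : ℕ) : ℤ) := by
        rw [Finset.sum_boole, Fintype.card_subtype]
      rw [hb, hcard]
      simp
    rw [Finset.sum_congr rfl step1, Finset.sum_comm]
    -- inner sum: inclusion-exclusion
    have inner : ∀ x : Fin m → Fin n → F,
        (∑ B ∈ 𝒜.powerset, (-1 : ℤ) ^ B.card * (if ∀ i, x i ∈ B.inf id then 1 else 0))
          = (if Submodule.span F (Set.range x) = ⊤ then 1 else 0) := by
      intro x
      set T := 𝒜.filter (fun W => ∀ i, x i ∈ W) with hT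
      have hiff : ∀ B ∈ 𝒜.powerset, ((∀ i, x i ∈ B.inf id) ↔ B ⊆ T) := by
        intro B hB
        rw [Finset.mem_powerset] at hB
        constructor
        · intro h W hW
          rw [hT, Finset.mem_filter]
          refine ⟨hB hW, fun i => ?_⟩
          have h' := h i
          rw [Submodule.mem_finsetInf] at h'
          exact h' W hW
        · intro h i
          rw [Submodule.mem_finsetInf]
          intro W hW
          have h' := h hW
          rw [hT, Finset.mem_filter] at h'
          exact h'.2 i
      have hps : 𝒜.powerset.filter (fun B => B ⊆ T) = T.powerset := by
        ext B
        simp only [Finset.mem_filter, Finset.mem_powerset]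
        constructor
        · exact fun h => h.2
        · intro h
          exact ⟨h.trans (Finset.filter_subset _ _), h⟩
      have heq : (∑ B ∈ 𝒜.powerset, (-1 : ℤ) ^ B.card * (if ∀ i, x i ∈ B.inf id then 1 else 0))
          = ∑ B ∈ T.powerset, (-1 : ℤ) ^ B.card := by
        rw [Finset.sum_congr rfl (fun B hB => by
          rw [mul_ite, mul_one, mul_zero, if_congr (hiff B hB) rfl rfl]),
          ← Finset.sum_filter, hps]
      have hTiff : T = ∅ ↔ Submodule.span F (Set.range x) = ⊤ := by
        constructor
        · intro h
          by_contra hne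
          obtain ⟨W', hle, hrank⟩ := exists_hyperplane_le _ hne
          have hmem : W' ∈ T := by
            rw [hT, Finset.mem_filter]
            exact ⟨(h𝒜 W').2 hrank, fun i => hle (Submodule.subset_span ⟨i, rfl⟩)⟩
          rw [h] at hmem
          exact absurd hmem (Finset.notMem_empty _)
        · intro h
          rw [Finset.eq_empty_iff_forall_notMem]
          intro W hW
          rw [hT, Finset.mem_filter] at hW
          have hle : Submodule.span F (Set.range x) ≤ W :=
            Submodule.span_le.2 (by rintro _ ⟨i, rfl⟩; exact hW.2 i)
          rw [h] at hle
          have hWtop : W = ⊤ := top_le_iff.1 hle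
          have h1 : Module.finrank F ↥W = n - 1 := (h𝒜 W).1 hW.1
          rw [hWtop, finrank_top, Module.finrank_fin_fun] at h1
          omega
      rw [heq, Finset.sum_powerset_neg_one_pow_card, if_congr hTiff rfl rfl]
    rw [Finset.sum_congr rfl (fun x _ => inner x)]
    have hcount : (∑ x : Fin m → Fin n → F,
        (if Submodule.span F (Set.range x) = ⊤ then (1 : ℤ) else 0))
        = ((∏ k ∈ Finset.range n, (q ^ m - q ^ k) : ℕ) : ℤ) := by
      rw [Finset.sum_boole, ← Fintype.card_subtype, ← Nat.card_eq_fintype_card,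
        card_spanning_tuples n m hm]
    rw [hcount, Polynomial.eval_prod]
    rw [Nat.cast_prod]
    refine Finset.prod_congr rfl fun k hk => ?_
    rw [Finset.mem_range] at hk
    have hle : q ^ k ≤ q ^ m := Nat.pow_le_pow_right (by omega) (by omega)
    rw [Nat.cast_sub hle]
    simp [he]
  -- conclude the polynomial identity from infinitely many evaluations
  apply Polynomial.eq_of_infinite_eval_eq
  refine Set.infinite_of_injective_forall_mem
    (f := fun j : ℕ => ((q ^ (n + j) : ℕ) : ℤ)) ?_ ?_
  · intro a b hab
    have hab' : ((q ^ (n + a) : ℕ) : ℤ) = ((q ^ (n + b) : ℕ) : ℤ) := hab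
    have : q ^ (n + a) = q ^ (n + b) := by exact_mod_cast hab' 
    have := Nat.pow_right_injective hq1 this
    omega
  · intro j
    exact main (n + j) (by omega)
end
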